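/- arXiv:math/0110082 — 6 statements merged into one kernel-verified Lean document; each statement's English description precedes it below -/
import Mathlib

section
/- Let m ≥ 2 and let (H_n) be a sequence of real symmetric m×m matrices, each of signature (m−1,1), converging (entrywise) to a real symmetric matrix H which is also of signature (m−1,1). Then there exists a sequence (M_n) of real m×m matrices converging to the identity matrix such that H_n = M_nᵀ H M_n for every n. -/
open Matrix Filter Topology Asymptotics

/-- A real symmetric `m × m` matrix has signature `(m-1, 1)` if it is congruent to the
diagonal matrix `diag(1, …, 1, −1)`. -/
def HasLorentzSignature (m : ℕ) (H : Matrix (Fin m) (Fin m) ℝ) : Prop :=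
  ∃ P : Matrix (Fin m) (Fin m) ℝ, IsUnit P.det ∧
    H = Pᵀ * diagonal (fun i : Fin m => if (i : ℕ) = m - 1 then (-1 : ℝ) else 1) * P

section Key

attribute [local instance] Matrix.frobeniusSeminormedAddCommGroup
  Matrix.frobeniusNormedAddCommGroup Matrix.frobeniusNormedSpace
  Matrix.frobeniusNormedRing Matrix.frobeniusNormedAlgebra

variable {m : ℕ}

lemma key_lemma (A : Matrix (Fin m) (Fin m) ℝ) (hA : IsUnit A.det) (hsA : Aᵀ = A) :
    ∃ g : Matrix (Fin m) (Fin m) ℝ → Matrix (Fin m) (Fin m) ℝ,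
      ContinuousAt g A ∧ g A = 1 ∧
      ∀ᶠ B in 𝓝 A, (Bᵀ = B → B = (g B)ᵀ * A * (g B)) := by
  classical
  haveI := hA.invertible
  set f : Matrix (Fin m) (Fin m) ℝ → Matrix (Fin m) (Fin m) ℝ :=
    fun X => Xᵀ * A * X + (A * X - Xᵀ * A) with hf
  -- the linear equivalence X ↦ 2 • (A * X)
  let L : Matrix (Fin m) (Fin m) ℝ ≃ₗ[ℝ] Matrix (Fin m) (Fin m) ℝ :=
  { toFun := fun X => (2:ℝ) • (A * X)
    map_add' := fun X Y => by simp [Matrix.mul_add, smul_add]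
    map_smul' := fun c X => by
      show (2:ℝ) • (A * c • X) = c • ((2:ℝ) • (A * X))
      rw [Matrix.mul_smul, smul_comm]
    invFun := fun X => (2:ℝ)⁻¹ • (A⁻¹ * X)
    left_inv := fun X => by
      show (2:ℝ)⁻¹ • (A⁻¹ * ((2:ℝ) • (A * X))) = X
      rw [Matrix.mul_smul, smul_smul, inv_mul_cancel₀ (two_ne_zero), one_smul,
        Matrix.nonsing_inv_mul_cancel_left A X hA]
    right_inv := fun X => by
      show (2:ℝ) • (A * ((2:ℝ)⁻¹ • (A⁻¹ * X))) = X
      rw [Matrix.mul_smul, smul_smul, mul_inv_cancel₀ (two_ne_zero), one_smul,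
        Matrix.mul_nonsing_inv_cancel_left A X hA] }
  let L' := L.toContinuousLinearEquiv
  have hL' : ∀ X, (L' : Matrix (Fin m) (Fin m) ℝ →L[ℝ] Matrix (Fin m) (Fin m) ℝ) X = (2:ℝ) • (A * X) := fun X => rfl
  have hstrict : HasStrictFDerivAt f (L' : Matrix (Fin m) (Fin m) ℝ →L[ℝ] Matrix (Fin m) (Fin m) ℝ) 1 := by
    refine .of_isLittleO ?_
    have hid : ∀ p : Matrix (Fin m) (Fin m) ℝ × Matrix (Fin m) (Fin m) ℝ, f p.1 - f p.2 - (L' : Matrix (Fin m) (Fin m) ℝ →L[ℝ] Matrix (Fin m) (Fin m) ℝ) (p.1 - p.2)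
        = (p.1 - 1)ᵀ * A * (p.1 - p.2) + (p.1 - p.2)ᵀ * A * (p.2 - 1) := by
      intro p
      rw [hL']
      simp only [hf, Matrix.transpose_sub, Matrix.transpose_one, two_smul]
      noncomm_ring
    rw [isLittleO_iff]
    intro ε hε
    have hA1 : (0:ℝ) < ‖A‖ + 1 := by positivity
    have hc1 : ContinuousAt (fun p : Matrix (Fin m) (Fin m) ℝ × Matrix (Fin m) (Fin m) ℝ => p.1 - 1) (1,1) :=
      continuousAt_fst.sub continuousAt_const
    have hc2 : ContinuousAt (fun p : Matrix (Fin m) (Fin m) ℝ × Matrix (Fin m) (Fin m) ℝ => p.2 - 1) (1,1) :=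
      continuousAt_snd.sub continuousAt_const
    have h1 : Tendsto (fun p : Matrix (Fin m) (Fin m) ℝ × Matrix (Fin m) (Fin m) ℝ => p.1 - 1) (𝓝 (1,1)) (𝓝 0) := by
      simpa using hc1.tendsto
    have h2 : Tendsto (fun p : Matrix (Fin m) (Fin m) ℝ × Matrix (Fin m) (Fin m) ℝ => p.2 - 1) (𝓝 (1,1)) (𝓝 0) := by
      simpa using hc2.tendsto
    have hcont : Tendsto (fun p : Matrix (Fin m) (Fin m) ℝ × Matrix (Fin m) (Fin m) ℝ => ‖p.1 - 1‖ + ‖p.2 - 1‖) (𝓝 (1,1)) (𝓝 0) := by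
      simpa using h1.norm.add h2.norm
    have hev : ∀ᶠ p : Matrix (Fin m) (Fin m) ℝ × Matrix (Fin m) (Fin m) ℝ in 𝓝 (1,1), ‖p.1 - 1‖ + ‖p.2 - 1‖ ≤ ε / (‖A‖ + 1) :=
      (hcont.eventually_lt_const (show (0:ℝ) < ε / (‖A‖ + 1) by positivity)).mono
        fun p hp => hp.le
    filter_upwards [hev] with p hp
    refine (congrArg norm (hid p)).le.trans ?_
    have hb1 : ‖(p.1 - 1)ᵀ * A * (p.1 - p.2)‖ ≤ ‖p.1 - 1‖ * ‖A‖ * ‖p.1 - p.2‖ := by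
      calc ‖(p.1 - 1)ᵀ * A * (p.1 - p.2)‖ ≤ ‖(p.1 - 1)ᵀ * A‖ * ‖p.1 - p.2‖ := norm_mul_le _ _
        _ ≤ ‖(p.1 - 1)ᵀ‖ * ‖A‖ * ‖p.1 - p.2‖ := by
            gcongr; exact norm_mul_le _ _
        _ = ‖p.1 - 1‖ * ‖A‖ * ‖p.1 - p.2‖ := by rw [Matrix.frobenius_norm_transpose]
    have hb2 : ‖(p.1 - p.2)ᵀ * A * (p.2 - 1)‖ ≤ ‖p.1 - p.2‖ * ‖A‖ * ‖p.2 - 1‖ := by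
      calc ‖(p.1 - p.2)ᵀ * A * (p.2 - 1)‖ ≤ ‖(p.1 - p.2)ᵀ * A‖ * ‖p.2 - 1‖ := norm_mul_le _ _
        _ ≤ ‖(p.1 - p.2)ᵀ‖ * ‖A‖ * ‖p.2 - 1‖ := by
            gcongr; exact norm_mul_le _ _
        _ = ‖p.1 - p.2‖ * ‖A‖ * ‖p.2 - 1‖ := by rw [Matrix.frobenius_norm_transpose]
    calc ‖(p.1 - 1)ᵀ * A * (p.1 - p.2) + (p.1 - p.2)ᵀ * A * (p.2 - 1)‖
        ≤ ‖(p.1 - 1)ᵀ * A * (p.1 - p.2)‖ + ‖(p.1 - p.2)ᵀ * A * (p.2 - 1)‖ := norm_add_le _ _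
      _ ≤ ‖p.1 - 1‖ * ‖A‖ * ‖p.1 - p.2‖ + ‖p.1 - p.2‖ * ‖A‖ * ‖p.2 - 1‖ := add_le_add hb1 hb2
      _ = (‖p.1 - 1‖ + ‖p.2 - 1‖) * ‖A‖ * ‖p.1 - p.2‖ := by ring
      _ ≤ (ε / (‖A‖ + 1)) * (‖A‖ + 1) * ‖p.1 - p.2‖ := by
          have hAle : ‖A‖ ≤ ‖A‖ + 1 := by linarith [norm_nonneg A]
          exact mul_le_mul (mul_le_mul hp hAle (norm_nonneg A) (by positivity)) le_rfl
            (norm_nonneg _) (by positivity)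
      _ = ε * ‖p.1 - p.2‖ := by rw [div_mul_cancel₀]; positivity
  have hf1 : f 1 = A := by simp [hf]
  refine ⟨hstrict.localInverse f _ 1, ?_, ?_, ?_⟩
  · have := hstrict.localInverse_continuousAt
    rwa [hf1] at this
  · have := hstrict.localInverse_apply_image
    rwa [hf1] at this
  · have hev := hstrict.eventually_right_inverse
    rw [hf1] at hev
    filter_upwards [hev] with B hB hBs
    set X := hstrict.localInverse f _ 1 B with hX
    have h1 : Xᵀ * A * X + (A * X - Xᵀ * A) = B := hB
    have h2 : Xᵀ * A * X + (Xᵀ * A - A * X) = B := by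
      have := congrArg Matrix.transpose h1
      simpa only [Matrix.transpose_add, Matrix.transpose_sub, Matrix.transpose_mul,
        Matrix.transpose_transpose, hsA, hBs, Matrix.mul_assoc] using this
    have h3 : (2:ℝ) • (Xᵀ * A * X) = (2:ℝ) • B := by
      rw [two_smul, two_smul]
      nth_rewrite 1 [← h1]
      nth_rewrite 1 [← h2]
      abel
    have := smul_right_injective (Matrix (Fin m) (Fin m) ℝ) (two_ne_zero (α := ℝ)) h3
    exact this.symm

end Key

lemma congruent_of_sig {m : ℕ} (A B : Matrix (Fin m) (Fin m) ℝ)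
    (hA : HasLorentzSignature m A) (hB : HasLorentzSignature m B) :
    ∃ M, B = Mᵀ * A * M := by
  obtain ⟨P, hP, hPe⟩ := hA
  obtain ⟨Q, hQ, hQe⟩ := hB
  refine ⟨P⁻¹ * Q, ?_⟩
  rw [hPe, hQe, Matrix.transpose_mul, Matrix.transpose_nonsing_inv]
  have h1 : P * (P⁻¹ * Q) = Q := Matrix.mul_nonsing_inv_cancel_left P Q hP
  have h2 : Pᵀ⁻¹ * Pᵀ = 1 := Matrix.nonsing_inv_mul Pᵀ (by simpa using hP)
  have key : Qᵀ * Pᵀ⁻¹ * (Pᵀ * (diagonal fun i : Fin m => if (i:ℕ) = m - 1 then (-1:ℝ) else 1) * P) * (P⁻¹ * Q)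
      = Qᵀ * (Pᵀ⁻¹ * Pᵀ) * (diagonal fun i : Fin m => if (i:ℕ) = m - 1 then (-1:ℝ) else 1) * (P * (P⁻¹ * Q)) := by
    noncomm_ring
  rw [key, h1, h2, Matrix.mul_one]

/-- If a sequence of symmetric matrices of signature `(m-1,1)` converges to a symmetric matrix
`Hlim` of signature `(m-1,1)`, then there is a sequence `M n → 1` with
`H n = (M n)ᵀ * Hlim * M n` for all `n`. -/
theorem exists_congruence_seq_tendsto_one {m : ℕ} (hm : 2 ≤ m)
    (H : ℕ → Matrix (Fin m) (Fin m) ℝ) (Hlim : Matrix (Fin m) (Fin m) ℝ)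
    (hsymm : ∀ n, (H n).IsSymm) (hsig : ∀ n, HasLorentzSignature m (H n))
    (hlsymm : Hlim.IsSymm) (hlsig : HasLorentzSignature m Hlim)
    (hconv : Tendsto H atTop (𝓝 Hlim)) :
    ∃ M : ℕ → Matrix (Fin m) (Fin m) ℝ,
      Tendsto M atTop (𝓝 1) ∧ ∀ n, H n = (M n)ᵀ * Hlim * M n := by
  classical
  -- Hlim is invertible
  have hAdet : IsUnit Hlim.det := by
    obtain ⟨P, hP, hPe⟩ := hlsig
    rw [hPe, Matrix.det_mul, Matrix.det_mul, Matrix.det_transpose, Matrix.det_diagonal]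
    refine (hP.mul ?_).mul hP
    rw [isUnit_iff_ne_zero, Finset.prod_ne_zero_iff]
    intro i _
    by_cases h : (i:ℕ) = m - 1 <;> simp [h]
  have hsA : Hlimᵀ = Hlim := hlsymm
  obtain ⟨g, hgc, hg1, hgev⟩ := key_lemma Hlim hAdet hsA
  -- eventually, g gives the congruence
  have hev : ∀ᶠ n in atTop, H n = (g (H n))ᵀ * Hlim * (g (H n)) := by
    filter_upwards [hconv.eventually hgev] with n hn
    exact hn (hsymm n)
  obtain ⟨N, hN⟩ := eventually_atTop.mp hev
  -- fallback congruences for small n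
  have hfall : ∀ n, ∃ M, H n = Mᵀ * Hlim * M := fun n =>
    congruent_of_sig Hlim (H n) hlsig (hsig n)
  choose F hF using hfall
  refine ⟨fun n => if N ≤ n then g (H n) else F n, ?_, ?_⟩
  · have h1 : Tendsto (fun n => g (H n)) atTop (𝓝 1) := by
      have := hgc.tendsto.comp hconv
      rwa [hg1] at this
    refine h1.congr' ?_
    filter_upwards [eventually_ge_atTop N] with n hn
    exact (if_pos hn).symm
  · intro n
    by_cases h : N ≤ n
    · simpa [h] using hN n h
    · simpa [h] using hF n
end

section
/- Let m ≥ 2. Let (H_n) and (G_n) be sequences of real symmetric m×m matrices of signature (m−1,1) converging respectively to matrices H and G of signature (m−1,1), and let (M_n) be a sequence of invertible real m×m matrices with M_nᵀ H_n M_n = G_n for all n. If sup_n ‖M_n‖ = ∞ (the sequence is unbounded in operator norm), then there exists a strictly increasing map φ : ℕ → ℕ such that the set AS((M_{φ(k)})) of approximately stable vectors of the subsequence (M_{φ(k)}) is a linear hyperplane of ℝ^m which is lightlike for G. -/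
open Matrix Filter Topology

/-- `v` is approximately stable for the sequence of matrices `N` if there is a sequence
`u k → v` with `(N k) *ᵥ (u k)` bounded. -/
def ApproxStable {m : ℕ} (N : ℕ → Matrix (Fin m) (Fin m) ℝ) (v : Fin m → ℝ) : Prop :=
  ∃ u : ℕ → (Fin m → ℝ), Tendsto u atTop (𝓝 v) ∧ ∃ C : ℝ, ∀ k, ‖(N k) *ᵥ (u k)‖ ≤ C

/-- `P` is a linear hyperplane of `ℝ^m` which is lightlike for the symmetric matrix `G`,
i.e. the restriction to `P` of the bilinear form `(u, w) ↦ uᵀ G w` is degenerate. -/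
def LightlikeHyperplane {m : ℕ} (G : Matrix (Fin m) (Fin m) ℝ)
    (P : Submodule ℝ (Fin m → ℝ)) : Prop :=
  Module.finrank ℝ P = m - 1 ∧ ∃ u ∈ P, u ≠ 0 ∧ ∀ w ∈ P, u ⬝ᵥ (G *ᵥ w) = 0

namespace ASAux

variable {m : ℕ}

lemma dot_nonneg (v : Fin m → ℝ) : 0 ≤ v ⬝ᵥ v :=
  Finset.sum_nonneg fun _ _ => mul_self_nonneg _

lemma dot_eq_zero_iff {v : Fin m → ℝ} : v ⬝ᵥ v = 0 ↔ v = 0 := by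
  constructor
  · intro h
    funext i
    have h2 : ∀ j ∈ Finset.univ, (0:ℝ) ≤ v j * v j := fun j _ => mul_self_nonneg _
    have h3 := (Finset.sum_eq_zero_iff_of_nonneg h2).1 h i (Finset.mem_univ i)
    simpa using mul_self_eq_zero.1 h3
  · rintro rfl; simp

lemma sq_le_dot (v : Fin m → ℝ) (i : Fin m) : v i * v i ≤ v ⬝ᵥ v :=
  Finset.single_le_sum (fun j _ => mul_self_nonneg (v j)) (Finset.mem_univ i)

lemma abs_le_one_of_unit {v : Fin m → ℝ} (h : v ⬝ᵥ v = 1) (i : Fin m) : |v i| ≤ 1 := by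
  have h1 := sq_le_dot v i
  rw [h] at h1
  nlinarith [abs_nonneg (v i), sq_abs (v i)]

lemma abs_dot_le (x y : Fin m → ℝ) : |x ⬝ᵥ y| ≤ ∑ i, |x i| * |y i| := by
  refine (Finset.abs_sum_le_sum_abs _ _).trans ?_
  simp [abs_mul, le_refl]

lemma tendsto_apply {x : ℕ → (Fin m → ℝ)} {x0 : Fin m → ℝ}
    (hx : Tendsto x atTop (𝓝 x0)) (i : Fin m) :
    Tendsto (fun k => x k i) atTop (𝓝 (x0 i)) :=
  ((continuous_apply i).tendsto x0).comp hx

lemma tendsto_dot {x y : ℕ → (Fin m → ℝ)} {x0 y0 : Fin m → ℝ}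
    (hx : Tendsto x atTop (𝓝 x0)) (hy : Tendsto y atTop (𝓝 y0)) :
    Tendsto (fun k => x k ⬝ᵥ y k) atTop (𝓝 (x0 ⬝ᵥ y0)) := by
  unfold dotProduct
  exact tendsto_finset_sum _ fun i _ => (tendsto_apply hx i).mul (tendsto_apply hy i)

lemma tendsto_entry {A : ℕ → Matrix (Fin m) (Fin m) ℝ} {A0 : Matrix (Fin m) (Fin m) ℝ}
    (hA : Tendsto A atTop (𝓝 A0)) (i j : Fin m) :
    Tendsto (fun k => A k i j) atTop (𝓝 (A0 i j)) :=
  ((continuous_apply j).tendsto _).comp (((continuous_apply i).tendsto _).comp hA)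

lemma tendsto_mulVec {A : ℕ → Matrix (Fin m) (Fin m) ℝ} {x : ℕ → (Fin m → ℝ)}
    {A0 : Matrix (Fin m) (Fin m) ℝ} {x0 : Fin m → ℝ}
    (hA : Tendsto A atTop (𝓝 A0)) (hx : Tendsto x atTop (𝓝 x0)) :
    Tendsto (fun k => A k *ᵥ x k) atTop (𝓝 (A0 *ᵥ x0)) := by
  rw [tendsto_pi_nhds]
  intro i
  unfold mulVec dotProduct
  exact tendsto_finset_sum _ fun j _ => (tendsto_entry hA i j).mul (tendsto_apply hx j)

lemma tendsto_dot_mulVec {A : ℕ → Matrix (Fin m) (Fin m) ℝ} {x y : ℕ → (Fin m → ℝ)}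
    {A0 : Matrix (Fin m) (Fin m) ℝ} {x0 y0 : Fin m → ℝ}
    (hA : Tendsto A atTop (𝓝 A0)) (hx : Tendsto x atTop (𝓝 x0)) (hy : Tendsto y atTop (𝓝 y0)) :
    Tendsto (fun k => x k ⬝ᵥ (A k *ᵥ y k)) atTop (𝓝 (x0 ⬝ᵥ (A0 *ᵥ y0))) :=
  tendsto_dot hx (tendsto_mulVec hA hy)

lemma tendsto_zero_of_abs_le {f g : ℕ → ℝ} (h : ∀ k, |f k| ≤ g k)
    (hg : Tendsto g atTop (𝓝 0)) : Tendsto f atTop (𝓝 0) := by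
  have hneg : Tendsto (fun k => -(g k)) atTop (𝓝 0) := by
    simpa using hg.neg
  exact tendsto_of_tendsto_of_tendsto_of_le_of_le hneg hg
    (fun k => (abs_le.1 (h k)).1) (fun k => (abs_le.1 (h k)).2)

/-- expansion in orthonormal rows -/
lemma sum_dot_smul_self {b : Fin m → Fin m → ℝ}
    (hb : ∀ i j, b i ⬝ᵥ b j = if i = j then (1:ℝ) else 0) (v : Fin m → ℝ) :
    ∑ i, (b i ⬝ᵥ v) • b i = v := by
  classical
  set B : Matrix (Fin m) (Fin m) ℝ := Matrix.of b with hB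
  have h1 : B * Bᵀ = 1 := by
    ext i j
    simpa [Matrix.mul_apply, Matrix.one_apply, dotProduct, hB] using hb i j
  have h2 : Bᵀ * B = 1 := mul_eq_one_comm.1 h1
  funext j
  have h3 : ∀ l, ∑ i, b i j * b i l = if j = l then (1:ℝ) else 0 := by
    intro l
    have := congrFun (congrFun h2 j) l
    simpa [Matrix.mul_apply, Matrix.one_apply, hB] using this
  calc (∑ i, (b i ⬝ᵥ v) • b i) j = ∑ i, (∑ l, b i l * v l) * b i j := by
        simp [Finset.sum_apply, dotProduct]
    _ = ∑ i, ∑ l, b i l * v l * b i j := by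
        simp [Finset.sum_mul]
    _ = ∑ l, ∑ i, b i l * v l * b i j := Finset.sum_comm
    _ = ∑ l, (∑ i, b i j * b i l) * v l := by
        refine Finset.sum_congr rfl fun l _ => ?_
        rw [Finset.sum_mul]
        refine Finset.sum_congr rfl fun i _ => by ring
    _ = ∑ l, (if j = l then (1:ℝ) else 0) * v l := by
        refine Finset.sum_congr rfl fun l _ => by rw [h3]
    _ = v j := by simp

lemma lorentz_det_ne_zero {H : Matrix (Fin m) (Fin m) ℝ} (h : HasLorentzSignature m H) :
    H.det ≠ 0 := by
  obtain ⟨P, hP, rfl⟩ := h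
  have hd : (diagonal (fun i : Fin m => if (i : ℕ) = m - 1 then (-1 : ℝ) else 1)).det ≠ 0 := by
    rw [det_diagonal]
    refine Finset.prod_ne_zero_iff.2 fun i _ => ?_
    split <;> norm_num
  simp only [det_mul, det_transpose]
  exact mul_ne_zero (mul_ne_zero (IsUnit.ne_zero hP) hd) (IsUnit.ne_zero hP)

lemma lorentz_congr_dot {P H : Matrix (Fin m) (Fin m) ℝ} {J : Matrix (Fin m) (Fin m) ℝ}
    (hH : H = Pᵀ * J * P) (x y : Fin m → ℝ) :
    x ⬝ᵥ (H *ᵥ y) = (P *ᵥ x) ⬝ᵥ (J *ᵥ (P *ᵥ y)) := by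
  subst hH
  rw [← mulVec_mulVec, ← mulVec_mulVec, dotProduct_mulVec x Pᵀ, vecMul_transpose]

/-- In a Lorentzian space there is no pair of dot-orthonormal vectors spanning
an isotropic plane. -/
lemma lorentz_no_two_isotropic {H : Matrix (Fin m) (Fin m) ℝ} (hsig : HasLorentzSignature m H)
    {a b : Fin m → ℝ} (ha : a ⬝ᵥ a = 1) (hb : b ⬝ᵥ b = 1) (hab : a ⬝ᵥ b = 0)
    (hHa : a ⬝ᵥ (H *ᵥ a) = 0) (hHb : b ⬝ᵥ (H *ᵥ b) = 0) (hHab : a ⬝ᵥ (H *ᵥ b) = 0)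
    (hHba : b ⬝ᵥ (H *ᵥ a) = 0) : False := by
  classical
  have hm0 : 0 < m := by
    rcases Nat.eq_zero_or_pos m with h | h
    · exfalso; subst h; simp [dotProduct] at ha
    · exact h
  obtain ⟨P, hP, hH⟩ := hsig
  set J : Matrix (Fin m) (Fin m) ℝ :=
    diagonal (fun i : Fin m => if (i : ℕ) = m - 1 then (-1 : ℝ) else 1) with hJ
  set x := P *ᵥ a with hx
  set y := P *ᵥ b with hy
  have hinj : Function.Injective (fun v : Fin m → ℝ => P *ᵥ v) :=
    mulVec_injective_iff_isUnit.2 ((Matrix.isUnit_iff_isUnit_det P).2 hP)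
  have hxx : x ⬝ᵥ (J *ᵥ x) = 0 := by rw [← lorentz_congr_dot hH]; exact hHa
  have hyy : y ⬝ᵥ (J *ᵥ y) = 0 := by rw [← lorentz_congr_dot hH]; exact hHb
  have hxy : x ⬝ᵥ (J *ᵥ y) = 0 := by rw [← lorentz_congr_dot hH]; exact hHab
  have hyx : y ⬝ᵥ (J *ᵥ x) = 0 := by rw [← lorentz_congr_dot hH]; exact hHba
  set lst : Fin m := ⟨m - 1, by omega⟩ with hlst
  have hJdot : ∀ w : Fin m → ℝ, w ⬝ᵥ (J *ᵥ w) = w ⬝ᵥ w - 2 * (w lst * w lst) := by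
    intro w
    have h1 : ∀ i : Fin m, w i * (J *ᵥ w) i
        = w i * w i - (if i = lst then 2 * (w i * w i) else 0) := by
      intro i
      rw [hJ, mulVec_diagonal]
      by_cases hi : (i : ℕ) = m - 1
      · have : i = lst := Fin.ext (by simpa [hlst] using hi)
        subst this
        simp [hi]; ring
      · have h2 : ¬ i = lst := fun hcon => hi (by simp [hcon, hlst])
        simp [hi, h2]
    calc w ⬝ᵥ (J *ᵥ w) = ∑ i, w i * (J *ᵥ w) i := rfl
      _ = ∑ i, (w i * w i - (if i = lst then 2 * (w i * w i) else 0)) :=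
          Finset.sum_congr rfl fun i _ => h1 i
      _ = (∑ i, w i * w i) - ∑ i, (if i = lst then 2 * (w i * w i) else 0) :=
          Finset.sum_sub_distrib _ _
      _ = w ⬝ᵥ w - 2 * (w lst * w lst) := by
          rw [Finset.sum_ite_eq' Finset.univ lst (fun i => 2 * (w i * w i))]
          simp [dotProduct]
  have hiso : ∀ s t : ℝ, (s • x + t • y) ⬝ᵥ (J *ᵥ (s • x + t • y)) = 0 := by
    intro s t
    simp only [mulVec_add, mulVec_smul, dotProduct_add, add_dotProduct,
      dotProduct_smul, smul_dotProduct, smul_eq_mul]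
    rw [hxx, hxy, hyx, hyy]; ring
  have hzero : ∀ s t : ℝ, (s • x + t • y) lst = 0 → s • x + t • y = 0 := by
    intro s t h
    have hq := hiso s t
    rw [hJdot] at hq
    rw [h] at hq
    exact dot_eq_zero_iff.1 (by linarith)
  by_cases hxl : x lst = 0
  · have hx0 : x = 0 := by
      have := hzero 1 0 (by simpa using hxl)
      simpa using this
    have ha0 : a = 0 := by
      apply hinj
      show P *ᵥ a = P *ᵥ 0
      rw [mulVec_zero, ← hx, hx0]
    rw [ha0] at ha; simp [dotProduct] at ha
  · have hw := hzero (y lst) (-(x lst)) (by simp; ring)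
    have heq : (y lst) • x = (x lst) • y := by
      rw [neg_smul] at hw
      linear_combination (norm := module) hw
    have heqab : (y lst) • a = (x lst) • b := by
      apply hinj
      show P *ᵥ (y lst • a) = P *ᵥ (x lst • b)
      rw [mulVec_smul, mulVec_smul, ← hx, ← hy, heq]
    have h1 : a ⬝ᵥ ((y lst) • a) = y lst := by rw [dotProduct_smul, ha]; simp
    have h2 : a ⬝ᵥ ((x lst) • b) = 0 := by rw [dotProduct_smul, hab]; simp
    rw [heqab, h2] at h1
    have hb0 : b = 0 := by
      have h3 : (x lst) • b = 0 := by rw [← heqab, ← h1]; simp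
      rcases smul_eq_zero.1 h3 with h | h
      · exact absurd h hxl
      · exact h
    rw [hb0] at hb; simp [dotProduct] at hb

/-! ### Spectral data of `Mᵀ * M` -/

lemma hermMM (M : Matrix (Fin m) (Fin m) ℝ) : (Mᵀ * M).IsHermitian := by
  have h : Mᴴ = Mᵀ := by
    ext i j; simp [conjTranspose_apply]
  rw [← h]
  exact isHermitian_conjTranspose_mul_self M

noncomputable def lam (M : Matrix (Fin m) (Fin m) ℝ) (i : Fin m) : ℝ :=
  (hermMM M).eigenvalues i

noncomputable def bv (M : Matrix (Fin m) (Fin m) ℝ) (i : Fin m) : Fin m → ℝ :=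
  ((hermMM M).eigenvectorBasis i : EuclideanSpace ℝ (Fin m))

noncomputable def sig (M : Matrix (Fin m) (Fin m) ℝ) (i : Fin m) : ℝ :=
  Real.sqrt (lam M i)

noncomputable def av (M : Matrix (Fin m) (Fin m) ℝ) (i : Fin m) : Fin m → ℝ :=
  (sig M i)⁻¹ • (M *ᵥ bv M i)

lemma bv_dot (M : Matrix (Fin m) (Fin m) ℝ) (i j : Fin m) :
    bv M i ⬝ᵥ bv M j = if i = j then (1:ℝ) else 0 := by
  have h := (hermMM M).eigenvectorBasis.orthonormal
  rw [orthonormal_iff_ite] at h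
  have h2 := h i j
  rw [← h2]
  simp [bv, PiLp.inner_apply, RCLike.inner_apply, dotProduct, conj_trivial]
  exact Finset.sum_congr rfl fun _ _ => mul_comm _ _

lemma bv_unit (M : Matrix (Fin m) (Fin m) ℝ) (i : Fin m) : bv M i ⬝ᵥ bv M i = 1 := by
  simpa using bv_dot M i i

lemma mulVec_bv (M : Matrix (Fin m) (Fin m) ℝ) (i : Fin m) :
    (Mᵀ * M) *ᵥ bv M i = lam M i • bv M i := by
  simpa [bv, lam] using (hermMM M).mulVec_eigenvectorBasis i

lemma key_dot (M : Matrix (Fin m) (Fin m) ℝ) (i : Fin m) (u : Fin m → ℝ) :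
    (M *ᵥ bv M i) ⬝ᵥ (M *ᵥ u) = lam M i * (bv M i ⬝ᵥ u) := by
  have h1 : (M *ᵥ bv M i) ⬝ᵥ (M *ᵥ u) = bv M i ⬝ᵥ ((Mᵀ * M) *ᵥ u) := by
    rw [← mulVec_mulVec, dotProduct_mulVec (bv M i) Mᵀ, vecMul_transpose]
  have hsymm : (Mᵀ * M)ᵀ = Mᵀ * M := by rw [transpose_mul, transpose_transpose]
  have h2 : bv M i ⬝ᵥ ((Mᵀ * M) *ᵥ u) = ((Mᵀ * M) *ᵥ bv M i) ⬝ᵥ u := by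
    rw [dotProduct_mulVec]
    conv_lhs => rw [← hsymm]
    rw [vecMul_transpose]
  rw [h1, h2, mulVec_bv, smul_dotProduct, smul_eq_mul]

lemma lam_pos {M : Matrix (Fin m) (Fin m) ℝ} (hM : IsUnit M.det) (i : Fin m) :
    0 < lam M i := by
  have hkey := key_dot M i (bv M i)
  rw [bv_dot] at hkey
  simp only [eq_self_iff_true, if_true, mul_one] at hkey
  have hb0 : bv M i ≠ 0 := by
    intro h
    have h1 := bv_unit M i
    rw [h] at h1; simp [dotProduct] at h1
  have hMb : M *ᵥ bv M i ≠ 0 := by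
    intro h
    apply hb0
    have hinj : Function.Injective (fun v : Fin m → ℝ => M *ᵥ v) :=
      mulVec_injective_iff_isUnit.2 ((Matrix.isUnit_iff_isUnit_det M).2 hM)
    apply hinj
    show M *ᵥ bv M i = M *ᵥ 0
    rw [mulVec_zero, h]
  have h4 : 0 ≤ (M *ᵥ bv M i) ⬝ᵥ (M *ᵥ bv M i) := dot_nonneg _
  rcases lt_or_eq_of_le h4 with h | h
  · rw [← hkey]; exact h
  · exact absurd (dot_eq_zero_iff.1 h.symm) hMb

lemma sig_pos {M : Matrix (Fin m) (Fin m) ℝ} (hM : IsUnit M.det) (i : Fin m) :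
    0 < sig M i := Real.sqrt_pos.2 (lam_pos hM i)

lemma sig_nonneg (M : Matrix (Fin m) (Fin m) ℝ) (i : Fin m) : 0 ≤ sig M i :=
  Real.sqrt_nonneg _

lemma sig_sq {M : Matrix (Fin m) (Fin m) ℝ} (hM : IsUnit M.det) (i : Fin m) :
    sig M i * sig M i = lam M i :=
  Real.mul_self_sqrt (lam_pos hM i).le

lemma mulVec_bv_eq_sig_av {M : Matrix (Fin m) (Fin m) ℝ} (hM : IsUnit M.det) (i : Fin m) :
    M *ᵥ bv M i = sig M i • av M i := by
  rw [av, smul_smul, mul_inv_cancel₀ (sig_pos hM i).ne', one_smul]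

lemma av_dot {M : Matrix (Fin m) (Fin m) ℝ} (hM : IsUnit M.det) (i j : Fin m) :
    av M i ⬝ᵥ av M j = if i = j then (1:ℝ) else 0 := by
  rw [av, av, smul_dotProduct, dotProduct_smul, key_dot, bv_dot]
  by_cases h : i = j
  · subst h
    simp only [if_pos rfl, mul_one, smul_eq_mul]
    rw [← sig_sq hM i]
    field_simp
    exact div_self (sig_pos hM i).ne' 
  · simp [h]

lemma av_unit {M : Matrix (Fin m) (Fin m) ℝ} (hM : IsUnit M.det) (i : Fin m) :
    av M i ⬝ᵥ av M i = 1 := by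
  simpa using av_dot hM i i

lemma prod_sig_sq {M : Matrix (Fin m) (Fin m) ℝ} (hM : IsUnit M.det) :
    ∏ i, (sig M i * sig M i) = M.det * M.det := by
  have h1 : ∏ i, (sig M i * sig M i) = ∏ i, lam M i :=
    Finset.prod_congr rfl fun i _ => sig_sq hM i
  have h2 : (Mᵀ * M).det = ∏ i, lam M i := by
    have := (hermMM M).det_eq_prod_eigenvalues
    simpa [lam] using this
  rw [h1, ← h2, det_mul, det_transpose]

lemma mulVec_expand {M : Matrix (Fin m) (Fin m) ℝ} (hM : IsUnit M.det) (v : Fin m → ℝ) :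
    M *ᵥ v = ∑ i, (bv M i ⬝ᵥ v) • (sig M i • av M i) := by
  conv_lhs => rw [← sum_dot_smul_self (bv_dot M) v]
  rw [← M.mulVecLin_apply, map_sum]
  refine Finset.sum_congr rfl fun i _ => ?_
  rw [LinearMap.map_smul, mulVecLin_apply, mulVec_bv_eq_sig_av hM]

lemma entry_abs_le {M : Matrix (Fin m) (Fin m) ℝ} (hM : IsUnit M.det) (i j : Fin m) :
    |M i j| ≤ ∑ l, sig M l := by
  have h1 : M i j = ∑ l, (bv M l ⬝ᵥ Pi.single j 1) * (sig M l * av M l i) := by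
    have h2 := congrFun (mulVec_expand hM (Pi.single j 1)) i
    have h3 : (M *ᵥ Pi.single j 1) i = M i j := by
      simp [mulVec, dotProduct_single]
    rw [h3] at h2
    rw [h2]
    simp [Finset.sum_apply, smul_eq_mul]
  rw [h1]
  refine (Finset.abs_sum_le_sum_abs _ _).trans (Finset.sum_le_sum fun l _ => ?_)
  rw [abs_mul, abs_mul, abs_of_nonneg (sig_nonneg M l)]
  have hb : |bv M l ⬝ᵥ Pi.single j 1| ≤ 1 := by
    rw [dotProduct_single, mul_one]
    exact abs_le_one_of_unit (bv_unit M l) j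
  have hav : |av M l i| ≤ 1 := abs_le_one_of_unit (av_unit hM l) i
  have hs := sig_nonneg M l
  calc |bv M l ⬝ᵥ Pi.single j 1| * (sig M l * |av M l i|)
      ≤ 1 * (sig M l * 1) := by
        refine mul_le_mul hb (by nlinarith) (by positivity) zero_le_one
    _ = sig M l := by ring

end ASAux
open ASAux in
/-- Linear case of the main theorem: for an unbounded sequence of congruences between
convergent sequences of Lorentzian quadratic forms, along a subsequence the set of
approximately stable vectors is a lightlike hyperplane for the limit form `G`. -/
theorem approxStable_eq_lightlikeHyperplane {m : ℕ} (hm : 2 ≤ m)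
    (H G : ℕ → Matrix (Fin m) (Fin m) ℝ) (Hl Gl : Matrix (Fin m) (Fin m) ℝ)
    (hHsig : ∀ n, HasLorentzSignature m (H n)) (hGsig : ∀ n, HasLorentzSignature m (G n))
    (hHlsig : HasLorentzSignature m Hl) (hGlsig : HasLorentzSignature m Gl)
    (hHconv : Tendsto H atTop (𝓝 Hl)) (hGconv : Tendsto G atTop (𝓝 Gl))
    (M : ℕ → Matrix (Fin m) (Fin m) ℝ) (hMinv : ∀ n, IsUnit (M n).det)
    (hrel : ∀ n, (M n)ᵀ * H n * M n = G n)
    (hunb : ¬ ∃ C : ℝ, ∀ n i j, |M n i j| ≤ C) :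
    ∃ φ : ℕ → ℕ, StrictMono φ ∧
      ∃ P : Submodule ℝ (Fin m → ℝ), LightlikeHyperplane Gl P ∧
        {v | ApproxStable (fun k => M (φ k)) v} = (P : Set (Fin m → ℝ)) := by
  classical
  -- Step 1: entries blow up along a subsequence
  have habs2 : ∀ (n : ℕ) (i j : Fin m), |M n i j| ≤ ∑ p, ∑ q, |M n p q| := by
    intro n i j
    calc |M n i j| ≤ ∑ q, |M n i q| :=
          Finset.single_le_sum (f := fun q => |M n i q|) (fun q _ => abs_nonneg _)
            (Finset.mem_univ j)
      _ ≤ ∑ p, ∑ q, |M n p q| :=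
          Finset.single_le_sum (f := fun p => ∑ q, |M n p q|)
            (fun p _ => Finset.sum_nonneg fun q _ => abs_nonneg _) (Finset.mem_univ i)
  have hfreq : ∀ K : ℕ, ∃ᶠ n in atTop, ∃ i j, (K:ℝ) ≤ |M n i j| := by
    intro K
    rw [frequently_atTop]
    intro N
    by_contra hcon
    push_neg at hcon
    apply hunb
    refine ⟨(K:ℝ) + ∑ n ∈ Finset.range N, ∑ p, ∑ q, |M n p q|, fun n i j => ?_⟩
    rcases lt_or_ge n N with h | h
    · have h1 : ∑ p, ∑ q, |M n p q| ≤ ∑ n' ∈ Finset.range N, ∑ p, ∑ q, |M n' p q| :=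
        Finset.single_le_sum (f := fun n' => ∑ p, ∑ q, |M n' p q|)
          (fun n' _ => Finset.sum_nonneg fun p _ => Finset.sum_nonneg fun q _ => abs_nonneg _)
          (Finset.mem_range.2 h)
      have h2 := habs2 n i j
      have hK : (0:ℝ) ≤ K := Nat.cast_nonneg K
      linarith
    · have h1 := hcon n h i j
      have h2 : (0:ℝ) ≤ ∑ n' ∈ Finset.range N, ∑ p, ∑ q, |M n' p q| :=
        Finset.sum_nonneg fun n' _ => Finset.sum_nonneg fun p _ =>
          Finset.sum_nonneg fun q _ => abs_nonneg _
      linarith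
  obtain ⟨φ₁, hφ₁mono, hφ₁⟩ := Filter.extraction_forall_of_frequently hfreq
  -- Step 2: compact extraction of spectral data
  set r : ℝ → ℝ := fun s => s / (1 + s) with hrdef
  have hrmem : ∀ s : ℝ, 0 ≤ s → 0 ≤ r s ∧ r s < 1 := by
    intro s hs
    constructor
    · exact div_nonneg hs (by linarith)
    · rw [div_lt_one (by linarith)]; linarith
  have hrs : ∀ s : ℝ, 0 ≤ s → r s / (1 - r s) = s := by
    intro s hs
    have h1 : (1:ℝ) + s ≠ 0 := by linarith
    have h2 : 1 - r s = 1 / (1 + s) := by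
      rw [hrdef]; field_simp; ring
    rw [h2]
    show s / (1 + s) / (1 / (1 + s)) = s
    field_simp
  set x : ℕ → (Fin m → ℝ) × (Fin m → (Fin m → ℝ)) × (Fin m → (Fin m → ℝ)) :=
    fun k => (fun i => r (sig (M (φ₁ k)) i),
      fun i => bv (M (φ₁ k)) i, fun i => av (M (φ₁ k)) i) with hxdef
  have hxmem : ∀ k, x k ∈ Metric.closedBall
      (0 : (Fin m → ℝ) × (Fin m → (Fin m → ℝ)) × (Fin m → (Fin m → ℝ))) 1 := by
    intro k
    rw [mem_closedBall_zero_iff]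
    rw [Prod.norm_def]
    refine max_le ?_ ?_
    · rw [pi_norm_le_iff_of_nonneg zero_le_one]
      intro i
      rw [Real.norm_eq_abs, abs_le]
      obtain ⟨h1, h2⟩ := hrmem _ (sig_nonneg (M (φ₁ k)) i)
      exact ⟨by linarith, h2.le⟩
    · rw [Prod.norm_def]
      refine max_le ?_ ?_
      · rw [pi_norm_le_iff_of_nonneg zero_le_one]
        intro i
        rw [pi_norm_le_iff_of_nonneg zero_le_one]
        intro j
        rw [Real.norm_eq_abs]
        exact abs_le_one_of_unit (bv_unit (M (φ₁ k)) i) j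
      · rw [pi_norm_le_iff_of_nonneg zero_le_one]
        intro i
        rw [pi_norm_le_iff_of_nonneg zero_le_one]
        intro j
        rw [Real.norm_eq_abs]
        exact abs_le_one_of_unit (av_unit (hMinv (φ₁ k)) i) j
  obtain ⟨L, -, φ₂, hφ₂mono, hconv2⟩ :=
    tendsto_subseq_of_bounded Metric.isBounded_closedBall hxmem
  set ψ : ℕ → ℕ := φ₁ ∘ φ₂ with hψdef
  have hψmono : StrictMono ψ := hφ₁mono.comp hφ₂mono
  have hψtend : Tendsto ψ atTop atTop := hψmono.tendsto_atTop
  set t : Fin m → ℝ := L.1 with htdef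
  set b8 : Fin m → (Fin m → ℝ) := L.2.1 with hb8def
  set a8 : Fin m → (Fin m → ℝ) := L.2.2 with ha8def
  have hq : ∀ i, Tendsto (fun k => r (sig (M (ψ k)) i)) atTop (𝓝 (t i)) := by
    intro i
    exact (((continuous_apply i).comp continuous_fst).tendsto L).comp hconv2
  have hbb : ∀ i, Tendsto (fun k => bv (M (ψ k)) i) atTop (𝓝 (b8 i)) := by
    intro i
    exact (((continuous_apply i).comp (continuous_fst.comp continuous_snd)).tendsto L).comp hconv2
  have haa : ∀ i, Tendsto (fun k => av (M (ψ k)) i) atTop (𝓝 (a8 i)) := by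
    intro i
    exact (((continuous_apply i).comp (continuous_snd.comp continuous_snd)).tendsto L).comp hconv2
  -- dichotomy for each singular value
  have hdich : ∀ i, (t i = 1 ∧ Tendsto (fun k => sig (M (ψ k)) i) atTop atTop) ∨
      (t i ≠ 1 ∧ Tendsto (fun k => sig (M (ψ k)) i) atTop (𝓝 (t i / (1 - t i)))) := by
    intro i
    have hqi := hq i
    have hsnn : ∀ k, 0 ≤ sig (M (ψ k)) i := fun k => sig_nonneg _ _
    have heq : ∀ k, sig (M (ψ k)) i
        = r (sig (M (ψ k)) i) / (1 - r (sig (M (ψ k)) i)) := fun k => (hrs _ (hsnn k)).symm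
    by_cases ht : t i = 1
    · left
      refine ⟨ht, ?_⟩
      rw [ht] at hqi
      have h1m : Tendsto (fun k => 1 - r (sig (M (ψ k)) i)) atTop (𝓝[>] 0) := by
        rw [tendsto_nhdsWithin_iff]
        constructor
        · have h2 := (tendsto_const_nhds (α := ℕ) (x := (1:ℝ)) (f := atTop)).sub hqi
          simpa using h2
        · filter_upwards with k
          have h3 := (hrmem _ (hsnn k)).2
          simp only [Set.mem_Ioi]
          linarith
      have h2 : Tendsto (fun k => (1 - r (sig (M (ψ k)) i))⁻¹) atTop atTop :=
        tendsto_inv_nhdsGT_zero.comp h1m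
      have h3 := Filter.Tendsto.pos_mul_atTop one_pos hqi h2
      exact h3.congr fun k => by rw [← div_eq_mul_inv, ← heq k]
    · right
      refine ⟨ht, ?_⟩
      have hle : t i ≤ 1 :=
        le_of_tendsto hqi (Eventually.of_forall fun k => (hrmem _ (hsnn k)).2.le)
      have htlt : t i < 1 := lt_of_le_of_ne hle ht
      have h1 : Tendsto (fun k => r (sig (M (ψ k)) i) / (1 - r (sig (M (ψ k)) i)))
          atTop (𝓝 (t i / (1 - t i))) := by
        refine Tendsto.div hqi ?_ (by linarith [sub_pos.2 htlt])
        have h2 := (tendsto_const_nhds (α := ℕ) (x := (1:ℝ)) (f := atTop)).sub hqi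
        exact h2
      exact Tendsto.congr (fun k => (heq k).symm) h1
  -- orthonormality of the limits
  have hb8dot : ∀ i j, b8 i ⬝ᵥ b8 j = if i = j then (1:ℝ) else 0 := by
    intro i j
    have h1 := tendsto_dot (hbb i) (hbb j)
    have h2 : (fun k => bv (M (ψ k)) i ⬝ᵥ bv (M (ψ k)) j)
        = fun _ => if i = j then (1:ℝ) else 0 := funext fun k => bv_dot _ i j
    rw [h2] at h1
    exact tendsto_nhds_unique h1 tendsto_const_nhds
  have ha8dot : ∀ i j, a8 i ⬝ᵥ a8 j = if i = j then (1:ℝ) else 0 := by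
    intro i j
    have h1 := tendsto_dot (haa i) (haa j)
    have h2 : (fun k => av (M (ψ k)) i ⬝ᵥ av (M (ψ k)) j)
        = fun _ => if i = j then (1:ℝ) else 0 := funext fun k => av_dot (hMinv _) i j
    rw [h2] at h1
    exact tendsto_nhds_unique h1 tendsto_const_nhds
  have hHψ : Tendsto (fun k => H (ψ k)) atTop (𝓝 Hl) := hHconv.comp hψtend
  have hGψ : Tendsto (fun k => G (ψ k)) atTop (𝓝 Gl) := hGconv.comp hψtend
  have hcongr : ∀ (n : ℕ) (u w : Fin m → ℝ),
      (M n *ᵥ u) ⬝ᵥ (H n *ᵥ (M n *ᵥ w)) = u ⬝ᵥ (G n *ᵥ w) := by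
    intro n u w
    have h1 := lorentz_congr_dot (P := M n) (J := H n) (H := (M n)ᵀ * H n * M n) rfl u w
    rw [hrel n] at h1
    exact h1.symm
  -- isotropy of limits of blowing-up columns
  have hiso : ∀ i j, Tendsto (fun k => sig (M (ψ k)) i) atTop atTop →
      Tendsto (fun k => sig (M (ψ k)) j) atTop atTop → a8 i ⬝ᵥ (Hl *ᵥ a8 j) = 0 := by
    intro i j hi hj
    have h1 : Tendsto (fun k => av (M (ψ k)) i ⬝ᵥ (H (ψ k) *ᵥ av (M (ψ k)) j)) atTop
        (𝓝 (a8 i ⬝ᵥ (Hl *ᵥ a8 j))) := tendsto_dot_mulVec hHψ (haa i) (haa j)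
    have h2 : ∀ k, av (M (ψ k)) i ⬝ᵥ (H (ψ k) *ᵥ av (M (ψ k)) j)
        = (sig (M (ψ k)) i)⁻¹ * ((sig (M (ψ k)) j)⁻¹
          * (bv (M (ψ k)) i ⬝ᵥ (G (ψ k) *ᵥ bv (M (ψ k)) j))) := by
      intro k
      rw [av, av, smul_dotProduct, mulVec_smul, dotProduct_smul, smul_eq_mul, smul_eq_mul,
        hcongr (ψ k)]
    have h3 : Tendsto (fun k => (sig (M (ψ k)) i)⁻¹ * ((sig (M (ψ k)) j)⁻¹
        * (bv (M (ψ k)) i ⬝ᵥ (G (ψ k) *ᵥ bv (M (ψ k)) j)))) atTop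
        (𝓝 (0 * (0 * (b8 i ⬝ᵥ (Gl *ᵥ b8 j))))) :=
      (hi.inv_tendsto_atTop).mul
        ((hj.inv_tendsto_atTop).mul (tendsto_dot_mulVec hGψ (hbb i) (hbb j)))
    have h4 := Tendsto.congr (fun k => (h2 k).symm) h3
    have h5 := tendsto_nhds_unique h1 h4
    rw [h5]; ring
  -- existence of a blowup index
  have hex : ∃ i, Tendsto (fun k => sig (M (ψ k)) i) atTop atTop := by
    by_contra hcon
    push_neg at hcon
    have hconv : ∀ i, Tendsto (fun k => sig (M (ψ k)) i) atTop (𝓝 (t i / (1 - t i))) := by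
      intro i
      rcases hdich i with ⟨_, h⟩ | ⟨_, h⟩
      · exact absurd h (hcon i)
      · exact h
    have hbdd : ∀ i, ∃ D, ∀ k, sig (M (ψ k)) i ≤ D := by
      intro i
      obtain ⟨D, hD⟩ := (hconv i).bddAbove_range
      exact ⟨D, fun k => hD (Set.mem_range_self k)⟩
    choose D hD using hbdd
    obtain ⟨K, hK⟩ := exists_nat_gt (∑ l, D l)
    obtain ⟨i, j, hij⟩ := hφ₁ (φ₂ K)
    have h1 : (K:ℝ) ≤ (φ₂ K : ℝ) := Nat.cast_le.2 hφ₂mono.le_apply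
    have h2 : |M (ψ K) i j| ≤ ∑ l, sig (M (ψ K)) l := entry_abs_le (hMinv _) i j
    have h3 : ∑ l, sig (M (ψ K)) l ≤ ∑ l, D l := Finset.sum_le_sum fun l _ => hD l K
    have h4 : (φ₂ K : ℝ) ≤ |M (ψ K) i j| := hij
    linarith
  obtain ⟨i0, hi0top⟩ := hex
  have huniq : ∀ i, Tendsto (fun k => sig (M (ψ k)) i) atTop atTop → i = i0 := by
    intro i hi
    by_contra hne
    refine lorentz_no_two_isotropic hHlsig (a := a8 i) (b := a8 i0) ?_ ?_ ?_
      (hiso i i hi hi) (hiso i0 i0 hi0top hi0top) (hiso i i0 hi hi0top) (hiso i0 i hi0top hi)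
    · simpa using ha8dot i i
    · simpa using ha8dot i0 i0
    · have := ha8dot i i0
      rwa [if_neg hne] at this
  have hconvne : ∀ i, i ≠ i0 → Tendsto (fun k => sig (M (ψ k)) i) atTop (𝓝 (t i / (1 - t i))) := by
    intro i hi
    rcases hdich i with ⟨_, htop⟩ | ⟨_, h⟩
    · exact absurd (huniq i htop) hi
    · exact h
  -- existence of a vanishing singular value
  have hj0ex : ∃ j, j ≠ i0 ∧ Tendsto (fun k => sig (M (ψ k)) j) atTop (𝓝 0) := by
    by_contra hcon
    push_neg at hcon
    have hspos : ∀ i, i ≠ i0 → 0 < t i / (1 - t i) := by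
      intro i hi
      have h0 : 0 ≤ t i / (1 - t i) :=
        ge_of_tendsto (hconvne i hi) (Eventually.of_forall fun k => sig_nonneg _ _)
      rcases h0.lt_or_eq with h | h
      · exact h
      · exact absurd (h ▸ hconvne i hi) (hcon i hi)
    have hprod : Tendsto (fun k => ∏ j ∈ Finset.univ.erase i0,
        (sig (M (ψ k)) j * sig (M (ψ k)) j)) atTop
        (𝓝 (∏ j ∈ Finset.univ.erase i0, (t j / (1 - t j) * (t j / (1 - t j))))) := by
      refine tendsto_finset_prod _ fun j hj => ?_
      have hjne := Finset.ne_of_mem_erase hj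
      exact (hconvne j hjne).mul (hconvne j hjne)
    have hppos : 0 < ∏ j ∈ Finset.univ.erase i0, (t j / (1 - t j) * (t j / (1 - t j))) :=
      Finset.prod_pos fun j hj =>
        mul_pos (hspos j (Finset.ne_of_mem_erase hj)) (hspos j (Finset.ne_of_mem_erase hj))
    have hdetM : ∀ k, (sig (M (ψ k)) i0 * sig (M (ψ k)) i0)
        * ∏ j ∈ Finset.univ.erase i0, (sig (M (ψ k)) j * sig (M (ψ k)) j)
        = (M (ψ k)).det * (M (ψ k)).det := by
      intro k
      rw [Finset.mul_prod_erase Finset.univ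
        (fun j => sig (M (ψ k)) j * sig (M (ψ k)) j) (Finset.mem_univ i0)]
      exact prod_sig_sq (hMinv _)
    have hdetH : Tendsto (fun k => (H (ψ k)).det) atTop (𝓝 Hl.det) :=
      ((continuous_id.matrix_det).tendsto Hl).comp hHψ
    have hdetG : Tendsto (fun k => (G (ψ k)).det) atTop (𝓝 Gl.det) :=
      ((continuous_id.matrix_det).tendsto Gl).comp hGψ
    have hdHne : Hl.det ≠ 0 := lorentz_det_ne_zero hHlsig
    have hdetMconv : Tendsto (fun k => (M (ψ k)).det * (M (ψ k)).det) atTop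
        (𝓝 (Gl.det / Hl.det)) := by
      have hdd : ∀ k, (M (ψ k)).det * (M (ψ k)).det = (G (ψ k)).det / (H (ψ k)).det := by
        intro k
        have h1 : (G (ψ k)).det = (M (ψ k)).det * (M (ψ k)).det * (H (ψ k)).det := by
          rw [← hrel (ψ k), det_mul, det_mul, det_transpose]; ring
        have h2 : (H (ψ k)).det ≠ 0 := lorentz_det_ne_zero (hHsig _)
        rw [h1]
        field_simp
      exact Tendsto.congr (fun k => (hdd k).symm) (hdetG.div hdetH hdHne)
    have hsq : Tendsto (fun k => sig (M (ψ k)) i0 * sig (M (ψ k)) i0) atTop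
        (𝓝 ((Gl.det / Hl.det) / ∏ j ∈ Finset.univ.erase i0,
          (t j / (1 - t j) * (t j / (1 - t j))))) := by
      have h1 : ∀ k, sig (M (ψ k)) i0 * sig (M (ψ k)) i0
          = ((M (ψ k)).det * (M (ψ k)).det)
            / ∏ j ∈ Finset.univ.erase i0, (sig (M (ψ k)) j * sig (M (ψ k)) j) := by
        intro k
        have hne : ∏ j ∈ Finset.univ.erase i0, (sig (M (ψ k)) j * sig (M (ψ k)) j) ≠ 0 :=
          (Finset.prod_pos fun j _ =>
            mul_pos (sig_pos (hMinv _) j) (sig_pos (hMinv _) j)).ne'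
        rw [← hdetM k]
        exact (mul_div_cancel_right₀ _ hne).symm
      exact Tendsto.congr (fun k => (h1 k).symm) (hdetMconv.div hprod hppos.ne')
    have htop2 : Tendsto (fun k => sig (M (ψ k)) i0 * sig (M (ψ k)) i0) atTop atTop :=
      Filter.Tendsto.atTop_mul_atTop₀ hi0top hi0top
    exact not_tendsto_nhds_of_tendsto_atTop htop2 _ hsq
  obtain ⟨j0, hj0ne, hj0sig⟩ := hj0ex
  -- the hyperplane
  set f : (Fin m → ℝ) →ₗ[ℝ] ℝ :=
    { toFun := fun v => b8 i0 ⬝ᵥ v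
      map_add' := fun u v => dotProduct_add _ _ _
      map_smul' := fun c v => by simp [dotProduct_smul] } with hfdef
  set P : Submodule ℝ (Fin m → ℝ) := LinearMap.ker f with hPdef
  have hmemP : ∀ v, v ∈ P ↔ b8 i0 ⬝ᵥ v = 0 := fun v => LinearMap.mem_ker
  have hfr : Module.finrank ℝ P = m - 1 := by
    have hsurj : Function.Surjective f := by
      intro c
      refine ⟨c • b8 i0, ?_⟩
      show b8 i0 ⬝ᵥ (c • b8 i0) = c
      rw [dotProduct_smul, smul_eq_mul]
      have := hb8dot i0 i0
      rw [if_pos rfl] at this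
      rw [this, mul_one]
    have h1 := LinearMap.finrank_range_add_finrank_ker f
    rw [LinearMap.range_eq_top.2 hsurj, finrank_top] at h1
    have h2' : Module.finrank ℝ (Fin m → ℝ) = m := by
      rw [Module.finrank_pi]
      exact Fintype.card_fin m
    rw [h2', Module.finrank_self] at h1
    rw [← hPdef] at h1
    omega
  -- projection construction
  set U : (Fin m → ℝ) → ℕ → (Fin m → ℝ) :=
    fun w k => ∑ i ∈ Finset.univ.erase i0, (bv (M (ψ k)) i ⬝ᵥ w) • bv (M (ψ k)) i with hUdef
  have hUtend : ∀ w, b8 i0 ⬝ᵥ w = 0 → Tendsto (U w) atTop (𝓝 w) := by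
    intro w hw
    have h1 : Tendsto (U w) atTop
        (𝓝 (∑ i ∈ Finset.univ.erase i0, (b8 i ⬝ᵥ w) • b8 i)) :=
      tendsto_finset_sum _ fun i _ =>
        (tendsto_dot (hbb i) tendsto_const_nhds).smul (hbb i)
    have h2 : ∑ i ∈ Finset.univ.erase i0, (b8 i ⬝ᵥ w) • b8 i = w := by
      have h3 := sum_dot_smul_self hb8dot w
      rw [← Finset.add_sum_erase _ _ (Finset.mem_univ i0), hw] at h3
      simpa using h3
    rwa [h2] at h1
  have hUbound : ∀ w, ∃ D, 0 ≤ D ∧ ∀ k l, |(M (ψ k) *ᵥ U w k) l| ≤ D := by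
    intro w
    have hDi : ∀ i, ∃ Di, 0 ≤ Di ∧ (i ≠ i0 → ∀ k, sig (M (ψ k)) i ≤ Di) := by
      intro i
      by_cases hi : i = i0
      · exact ⟨0, le_refl _, fun h => absurd hi h⟩
      · obtain ⟨D, hD⟩ := (hconvne i hi).bddAbove_range
        exact ⟨max D 0, le_max_right _ _,
          fun _ k => le_trans (hD (Set.mem_range_self k)) (le_max_left _ _)⟩
    choose Di hDi0 hDi using hDi
    refine ⟨∑ i ∈ Finset.univ.erase i0, (∑ q, |w q|) * Di i,
      Finset.sum_nonneg fun i _ =>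
        mul_nonneg (Finset.sum_nonneg fun q _ => abs_nonneg _) (hDi0 i), ?_⟩
    intro k l
    have hMU : (M (ψ k) *ᵥ U w k) l = ∑ i ∈ Finset.univ.erase i0,
        (bv (M (ψ k)) i ⬝ᵥ w) * (sig (M (ψ k)) i * av (M (ψ k)) i l) := by
      have h5 : M (ψ k) *ᵥ U w k = ∑ i ∈ Finset.univ.erase i0,
          (bv (M (ψ k)) i ⬝ᵥ w) • (sig (M (ψ k)) i • av (M (ψ k)) i) := by
        rw [hUdef]
        simp only []
        rw [← (M (ψ k)).mulVecLin_apply, map_sum]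
        refine Finset.sum_congr rfl fun i _ => ?_
        rw [LinearMap.map_smul, mulVecLin_apply, mulVec_bv_eq_sig_av (hMinv _)]
      rw [h5]
      simp [Finset.sum_apply, smul_eq_mul]
    rw [hMU]
    refine (Finset.abs_sum_le_sum_abs _ _).trans (Finset.sum_le_sum fun i hi => ?_)
    have hine := Finset.ne_of_mem_erase hi
    have h1 : |bv (M (ψ k)) i ⬝ᵥ w| ≤ ∑ q, |w q| := by
      refine (abs_dot_le _ _).trans (Finset.sum_le_sum fun q _ => ?_)
      have h2 := abs_le_one_of_unit (bv_unit (M (ψ k)) i) q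
      nlinarith [abs_nonneg (w q)]
    have h2 : |sig (M (ψ k)) i * av (M (ψ k)) i l| ≤ Di i := by
      rw [abs_mul, abs_of_nonneg (sig_nonneg _ _)]
      have ha1 : |av (M (ψ k)) i l| ≤ 1 := abs_le_one_of_unit (av_unit (hMinv _) i) l
      have hs1 := sig_nonneg (M (ψ k)) i
      have hs2 := hDi i hine k
      nlinarith
    rw [abs_mul]
    exact mul_le_mul h1 h2 (abs_nonneg _)
      (Finset.sum_nonneg fun q _ => abs_nonneg _)
  -- the set of approximately stable vectors is P
  have hset : {v | ApproxStable (fun k => M (ψ k)) v} = (P : Set (Fin m → ℝ)) := by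
    ext v
    simp only [Set.mem_setOf_eq, SetLike.mem_coe, hmemP]
    constructor
    · rintro ⟨u, huconv, C, hC⟩
      have hC0 : 0 ≤ C := le_trans (norm_nonneg _) (hC 0)
      have hb1 : ∀ k, |bv (M (ψ k)) i0 ⬝ᵥ u k| ≤ (sig (M (ψ k)) i0)⁻¹ * (m * C) := by
        intro k
        have hkey := key_dot (M (ψ k)) i0 (u k)
        rw [mulVec_bv_eq_sig_av (hMinv (ψ k)), smul_dotProduct, smul_eq_mul] at hkey
        have hs := sig_pos (hMinv (ψ k)) i0
        have hl := sig_sq (hMinv (ψ k)) i0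
        have h3 : bv (M (ψ k)) i0 ⬝ᵥ u k
            = (sig (M (ψ k)) i0)⁻¹ * (av (M (ψ k)) i0 ⬝ᵥ (M (ψ k) *ᵥ u k)) := by
          rw [← hl] at hkey
          have h4 : av (M (ψ k)) i0 ⬝ᵥ (M (ψ k) *ᵥ u k)
              = sig (M (ψ k)) i0 * (bv (M (ψ k)) i0 ⬝ᵥ u k) :=
            mul_left_cancel₀ hs.ne' (by rw [hkey]; ring)
          rw [h4, ← mul_assoc, inv_mul_cancel₀ hs.ne', one_mul]
        have h2 : |av (M (ψ k)) i0 ⬝ᵥ (M (ψ k) *ᵥ u k)| ≤ m * C := by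
          refine (abs_dot_le _ _).trans ?_
          have h5 : ∀ l, |av (M (ψ k)) i0 l| * |(M (ψ k) *ᵥ u k) l| ≤ 1 * C := by
            intro l
            refine mul_le_mul (abs_le_one_of_unit (av_unit (hMinv _) i0) l) ?_
              (abs_nonneg _) zero_le_one
            have h6 : ‖(M (ψ k) *ᵥ u k) l‖ ≤ ‖M (ψ k) *ᵥ u k‖ := norm_le_pi_norm _ l
            rw [Real.norm_eq_abs] at h6
            exact le_trans h6 (hC k)
          calc ∑ l, |av (M (ψ k)) i0 l| * |(M (ψ k) *ᵥ u k) l| ≤ ∑ _l : Fin m, 1 * C :=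
                Finset.sum_le_sum fun l _ => h5 l
            _ = m * C := by simp [Finset.sum_const, mul_comm]
        rw [h3, abs_mul, abs_of_nonneg (inv_nonneg.2 hs.le)]
        exact mul_le_mul_of_nonneg_left h2 (inv_nonneg.2 hs.le)
      have hβ0 : Tendsto (fun k => bv (M (ψ k)) i0 ⬝ᵥ u k) atTop (𝓝 0) := by
        have hg : Tendsto (fun k => (sig (M (ψ k)) i0)⁻¹ * (m * C)) atTop
            (𝓝 (0 * (m * C))) := (hi0top.inv_tendsto_atTop).mul_const _
        rw [zero_mul] at hg
        exact tendsto_zero_of_abs_le hb1 hg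
      have hβv := tendsto_dot (hbb i0) huconv
      exact tendsto_nhds_unique hβv hβ0
    · intro hv
      obtain ⟨D, hD0, hDb⟩ := hUbound v
      refine ⟨U v, hUtend v hv, D, fun k => ?_⟩
      rw [pi_norm_le_iff_of_nonneg hD0]
      intro l
      rw [Real.norm_eq_abs]
      exact hDb k l
  -- lightlike direction
  have hmem' : b8 j0 ∈ P := by
    rw [hmemP]
    have := hb8dot i0 j0
    rwa [if_neg (Ne.symm hj0ne)] at this
  have hne' : b8 j0 ≠ 0 := by
    intro h
    have h1 := hb8dot j0 j0
    rw [if_pos rfl, h] at h1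
    simp [dotProduct] at h1
  have hlight3 : ∀ w ∈ P, b8 j0 ⬝ᵥ (Gl *ᵥ w) = 0 := by
    intro w hwP
    have hw := (hmemP w).1 hwP
    have h1 : Tendsto (fun k => bv (M (ψ k)) j0 ⬝ᵥ (G (ψ k) *ᵥ U w k)) atTop
        (𝓝 (b8 j0 ⬝ᵥ (Gl *ᵥ w))) := tendsto_dot_mulVec hGψ (hbb j0) (hUtend w hw)
    obtain ⟨D, hD0, hDb⟩ := hUbound w
    have hHsum : Tendsto (fun k => ∑ l, ∑ p, |H (ψ k) l p|) atTop
        (𝓝 (∑ l, ∑ p, |Hl l p|)) :=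
      tendsto_finset_sum _ fun l _ => tendsto_finset_sum _ fun p _ => (tendsto_entry hHψ l p).abs
    obtain ⟨E, hE⟩ := hHsum.bddAbove_range
    have hE' : ∀ k, ∑ l, ∑ p, |H (ψ k) l p| ≤ E := fun k => hE (Set.mem_range_self k)
    have hE0 : 0 ≤ E := le_trans (Finset.sum_nonneg fun l _ =>
      Finset.sum_nonneg fun p _ => abs_nonneg _) (hE' 0)
    have h2 : ∀ k, |bv (M (ψ k)) j0 ⬝ᵥ (G (ψ k) *ᵥ U w k)| ≤ sig (M (ψ k)) j0 * (E * D) := by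
      intro k
      rw [← hcongr (ψ k) (bv (M (ψ k)) j0) (U w k), mulVec_bv_eq_sig_av (hMinv _),
        smul_dotProduct, smul_eq_mul, abs_mul, abs_of_nonneg (sig_nonneg _ _)]
      refine mul_le_mul_of_nonneg_left ?_ (sig_nonneg _ _)
      refine (abs_dot_le _ _).trans ?_
      have h3 : ∀ l, |av (M (ψ k)) j0 l| * |(H (ψ k) *ᵥ (M (ψ k) *ᵥ U w k)) l|
          ≤ (∑ p, |H (ψ k) l p|) * D := by
        intro l
        have h4 : |(H (ψ k) *ᵥ (M (ψ k) *ᵥ U w k)) l| ≤ (∑ p, |H (ψ k) l p|) * D := by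
          refine (abs_dot_le _ _).trans ?_
          rw [Finset.sum_mul]
          refine Finset.sum_le_sum fun p _ => ?_
          exact mul_le_mul (le_refl _) (hDb k p) (abs_nonneg _) (abs_nonneg _)
        have h5 : |av (M (ψ k)) j0 l| ≤ 1 := abs_le_one_of_unit (av_unit (hMinv _) j0) l
        calc |av (M (ψ k)) j0 l| * |(H (ψ k) *ᵥ (M (ψ k) *ᵥ U w k)) l|
            ≤ 1 * ((∑ p, |H (ψ k) l p|) * D) :=
              mul_le_mul h5 h4 (abs_nonneg _) zero_le_one
          _ = (∑ p, |H (ψ k) l p|) * D := one_mul _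
      calc ∑ l, |av (M (ψ k)) j0 l| * |(H (ψ k) *ᵥ (M (ψ k) *ᵥ U w k)) l|
          ≤ ∑ l, (∑ p, |H (ψ k) l p|) * D := Finset.sum_le_sum fun l _ => h3 l
        _ = (∑ l, ∑ p, |H (ψ k) l p|) * D := by rw [Finset.sum_mul]
        _ ≤ E * D := mul_le_mul_of_nonneg_right (hE' k) hD0
    have hg : Tendsto (fun k => sig (M (ψ k)) j0 * (E * D)) atTop (𝓝 (0 * (E * D))) :=
      hj0sig.mul_const _
    rw [zero_mul] at hg
    have h6 := tendsto_zero_of_abs_le h2 hg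
    exact tendsto_nhds_unique h1 h6
  exact ⟨ψ, hψmono, P, ⟨hfr, b8 j0, hmem', hne', hlight3⟩, hset⟩
end

section
/- Let m ≥ 2. Let (H_n) and (G_n) be sequences of real symmetric m×m matrices of signature (m−1,1) converging respectively to matrices H and G of signature (m−1,1), and let (M_n) be a sequence of invertible real m×m matrices with M_nᵀ H_n M_n = G_n for all n and sup_n ‖M_n‖ = ∞. Then there exist a strictly increasing map φ : ℕ → ℕ, a constant C > 0, and a sequence (P_k) of linear hyperplanes of ℝ^m such that for every k and every unit vector v ∈ P_k one has ‖M_{φ(k)} v‖ < C. -/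
open Matrix Filter Topology

/-- The Euclidean norm of a vector of `ℝ^m`. -/
noncomputable def euclNorm {m : ℕ} (v : Fin m → ℝ) : ℝ :=
  Real.sqrt (∑ i, v i ^ 2)

variable {m : ℕ}

/-- bilinear form of a matrix -/
noncomputable def Qf (A : Matrix (Fin m) (Fin m) ℝ) (x y : Fin m → ℝ) : ℝ :=
  x ⬝ᵥ (A *ᵥ y)

lemma Qf_eq_sum (A : Matrix (Fin m) (Fin m) ℝ) (x y : Fin m → ℝ) :
    Qf A x y = ∑ i, ∑ j, x i * A i j * y j := by
  simp [Qf, dotProduct, Matrix.mulVec, Finset.mul_sum, mul_assoc]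

lemma Qf_congr (Mx A : Matrix (Fin m) (Fin m) ℝ) (x y : Fin m → ℝ) :
    Qf (Mxᵀ * A * Mx) x y = Qf A (Mx *ᵥ x) (Mx *ᵥ y) := by
  unfold Qf
  rw [Matrix.mul_assoc, ← Matrix.mulVec_mulVec, Matrix.dotProduct_mulVec,
    Matrix.vecMul_transpose, ← Matrix.mulVec_mulVec]

lemma Qf_smul_smul (A : Matrix (Fin m) (Fin m) ℝ) (c d : ℝ) (x y : Fin m → ℝ) :
    Qf A (c • x) (d • y) = (c * d) * Qf A x y := by
  rw [Qf_eq_sum, Qf_eq_sum, Finset.mul_sum]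
  refine Finset.sum_congr rfl fun i _ => ?_
  rw [Finset.mul_sum]
  refine Finset.sum_congr rfl fun j _ => ?_
  simp only [Pi.smul_apply, smul_eq_mul]; ring

lemma Qf_add_add (A : Matrix (Fin m) (Fin m) ℝ) (x y : Fin m → ℝ) :
    Qf A x y + Qf A y x = Qf A (x + y) (x + y) - Qf A x x - Qf A y y := by
  simp only [Qf, Matrix.mulVec_add, dotProduct_add, add_dotProduct]
  ring

lemma Qf_bound (A : Matrix (Fin m) (Fin m) ℝ) (x y : Fin m → ℝ) (B a b : ℝ)
    (hB : ∀ i j, |A i j| ≤ B) (ha : 0 ≤ a) (hb : 0 ≤ b) (hBn : 0 ≤ B)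
    (hx : ∀ i, |x i| ≤ a) (hy : ∀ j, |y j| ≤ b) :
    |Qf A x y| ≤ (m : ℝ) * m * (a * B * b) := by
  rw [Qf_eq_sum]
  calc |∑ i, ∑ j, x i * A i j * y j| ≤ ∑ i, |∑ j, x i * A i j * y j| :=
        Finset.abs_sum_le_sum_abs _ _
    _ ≤ ∑ i : Fin m, ∑ j : Fin m, |x i * A i j * y j| :=
        Finset.sum_le_sum fun i _ => Finset.abs_sum_le_sum_abs _ _
    _ ≤ ∑ _i : Fin m, ∑ _j : Fin m, (a * B * b) := by
        refine Finset.sum_le_sum fun i _ => Finset.sum_le_sum fun j _ => ?_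
        rw [abs_mul, abs_mul]
        exact mul_le_mul (mul_le_mul (hx i) (hB i j) (abs_nonneg _) ha) (hy j)
          (abs_nonneg _) (by positivity)
    _ = (m : ℝ) * m * (a * B * b) := by
        simp [Finset.sum_const, mul_assoc]


def sph (m : ℕ) : Set (Fin m → ℝ) := {v | ∑ i, v i ^ 2 = 1}

lemma coord_le_one {v : Fin m → ℝ} (hv : v ∈ sph m) (i : Fin m) : |v i| ≤ 1 := by
  have h : v i ^ 2 ≤ 1 := by
    rw [← hv]
    exact Finset.single_le_sum (fun j _ => sq_nonneg (v j)) (Finset.mem_univ i)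
  exact (sq_le_one_iff_abs_le_one (v i)).mp h

lemma isCompact_sph : IsCompact (sph m) := by
  apply Metric.isCompact_of_isClosed_isBounded
  · have : sph m = (fun v : Fin m → ℝ => ∑ i, v i ^ 2) ⁻¹' {1} := rfl
    rw [this]
    exact IsClosed.preimage (continuous_finset_sum _ fun i _ => (continuous_apply i).pow 2)
      isClosed_singleton
  · apply (Metric.isBounded_closedBall (x := (0 : Fin m → ℝ)) (r := 1)).subset
    intro v hv
    simp only [Metric.mem_closedBall, dist_zero_right]
    refine (pi_norm_le_iff_of_nonneg zero_le_one).mpr fun i => ?_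
    simpa [Real.norm_eq_abs] using coord_le_one hv i

lemma sph_nonempty (hm : 0 < m) : (sph m).Nonempty := by
  refine ⟨fun i => if i = ⟨0, hm⟩ then 1 else 0, ?_⟩
  have : ∀ i : Fin m, ((if i = ⟨0, hm⟩ then (1:ℝ) else 0)) ^ 2
      = if i = ⟨0, hm⟩ then 1 else 0 := by
    intro i; split <;> norm_num
  simp only [sph, Set.mem_setOf_eq, this]
  simp

/-- dot product with `u` as a linear map. -/
def dotf (u : Fin m → ℝ) : (Fin m → ℝ) →ₗ[ℝ] ℝ where
  toFun v := ∑ i, u i * v i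
  map_add' x y := by
    simp only [Pi.add_apply, mul_add]
    exact Finset.sum_add_distrib
  map_smul' c x := by
    simp only [Pi.smul_apply, smul_eq_mul, RingHom.id_apply, Finset.mul_sum]
    exact Finset.sum_congr rfl fun i _ => by ring

lemma finrank_ker_dotf {u : Fin m → ℝ} (hu : u ∈ sph m) :
    Module.finrank ℝ (LinearMap.ker (dotf u)) = m - 1 := by
  have hsurj : Function.Surjective (dotf u) := by
    intro c
    refine ⟨c • u, ?_⟩
    have : ∀ i, u i * (c • u) i = c * u i ^ 2 := fun i => by
      simp [smul_eq_mul]; ring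
    have hu' : ∑ i, u i ^ 2 = 1 := hu
    simp only [dotf, LinearMap.coe_mk, AddHom.coe_mk, this, ← Finset.mul_sum, hu', mul_one]
  have h1 : Module.finrank ℝ (LinearMap.range (dotf u)) = 1 := by
    rw [LinearMap.range_eq_top.mpr hsurj]
    simp
  have h2 := LinearMap.finrank_range_add_finrank_ker (dotf u)
  rw [h1, Module.finrank_pi ℝ] at h2
  simp only [Fintype.card_fin] at h2
  omega

lemma continuous_quad (Mx : Matrix (Fin m) (Fin m) ℝ) :
    Continuous fun v : Fin m → ℝ => ∑ i, (Mx *ᵥ v) i ^ 2 := by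
  apply continuous_finset_sum
  intro i _
  have : Continuous fun v : Fin m → ℝ => (Mx *ᵥ v) i := by
    simp only [Matrix.mulVec, dotProduct]
    exact continuous_finset_sum _ fun j _ => continuous_const.mul (continuous_apply j)
  exact this.pow 2

lemma exists_max (hm : 0 < m) (Mx : Matrix (Fin m) (Fin m) ℝ) :
    ∃ u ∈ sph m, ∀ w ∈ sph m, ∑ i, (Mx *ᵥ w) i ^ 2 ≤ ∑ i, (Mx *ᵥ u) i ^ 2 := by
  obtain ⟨u, hu, hmax⟩ := isCompact_sph.exists_isMaxOn (sph_nonempty hm)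
    (continuous_quad Mx).continuousOn
  exact ⟨u, hu, fun w hw => hmax hw⟩

lemma lagrange (Mx : Matrix (Fin m) (Fin m) ℝ) {u v : Fin m → ℝ}
    (hu : u ∈ sph m) (hv : v ∈ sph m) (huv : ∑ i, u i * v i = 0)
    (hmax : ∀ w ∈ sph m, ∑ i, (Mx *ᵥ w) i ^ 2 ≤ ∑ i, (Mx *ᵥ u) i ^ 2) :
    ∑ i, (Mx *ᵥ u) i * (Mx *ᵥ v) i = 0 := by
  set x := Mx *ᵥ u with hx
  set y := Mx *ᵥ v with hy
  set A := ∑ i, x i ^ 2 with hA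
  set Bv := ∑ i, y i ^ 2 with hBv
  set c := ∑ i, x i * y i with hc
  have key : ∀ t : ℝ, 2 * t * c ≤ t ^ 2 * (A - Bv) := by
    intro t
    set s := Real.sqrt (1 + t ^ 2) with hs
    have hs2 : s ^ 2 = 1 + t ^ 2 := Real.sq_sqrt (by positivity)
    have hspos : 0 < s := Real.sqrt_pos.mpr (by positivity)
    set w := s⁻¹ • (u + t • v) with hw
    have hwsph : w ∈ sph m := by
      have : ∀ i, w i ^ 2 = s⁻¹ ^ 2 * (u i ^ 2 + 2 * t * (u i * v i) + t ^ 2 * v i ^ 2) := by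
        intro i; simp only [hw, Pi.smul_apply, Pi.add_apply, smul_eq_mul]; ring
      show ∑ i, w i ^ 2 = 1
      rw [Finset.sum_congr rfl fun i _ => this i]
      rw [← Finset.mul_sum]
      have expand : ∑ i, (u i ^ 2 + 2 * t * (u i * v i) + t ^ 2 * v i ^ 2)
          = (∑ i, u i ^ 2) + 2 * t * (∑ i, u i * v i) + t ^ 2 * (∑ i, v i ^ 2) := by
        rw [Finset.sum_add_distrib, Finset.sum_add_distrib, ← Finset.mul_sum, ← Finset.mul_sum]
      rw [expand, hu, hv, huv]
      field_simp
      linarith [hs2]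
    have hMw : Mx *ᵥ w = s⁻¹ • (x + t • y) := by
      rw [hw, Matrix.mulVec_smul, Matrix.mulVec_add, Matrix.mulVec_smul]
    have hgw : ∑ i, (Mx *ᵥ w) i ^ 2 = s⁻¹ ^ 2 * (A + 2 * t * c + t ^ 2 * Bv) := by
      rw [hMw]
      have : ∀ i, (s⁻¹ • (x + t • y)) i ^ 2
          = s⁻¹ ^ 2 * (x i ^ 2 + 2 * t * (x i * y i) + t ^ 2 * y i ^ 2) := by
        intro i; simp only [Pi.smul_apply, Pi.add_apply, smul_eq_mul]; ring
      rw [Finset.sum_congr rfl fun i _ => this i, ← Finset.mul_sum]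
      congr 1
      rw [Finset.sum_add_distrib, Finset.sum_add_distrib, ← Finset.mul_sum, ← Finset.mul_sum]
    have hle := hmax w hwsph
    rw [hgw] at hle
    have hs2ne : (0:ℝ) < s ^ 2 := by positivity
    have hinv : s⁻¹ ^ 2 = (s ^ 2)⁻¹ := by rw [inv_pow]
    rw [hinv] at hle
    have := (inv_mul_le_iff₀ hs2ne).mp hle
    rw [hs2] at this
    nlinarith [this]
  by_contra hcne
  set K := A - Bv with hK
  set ε := 1 / (|K| + 1) with hε
  have hεpos : 0 < ε := by positivity
  have hkey := key (c * ε)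
  have hc2 : 0 < c ^ 2 := by positivity
  have h2 : ε * |K| < 1 := by
    rw [hε]
    rw [div_mul_eq_mul_div, one_mul, div_lt_one (by positivity)]
    linarith
  have hKle : K ≤ |K| := le_abs_self K
  have hX : (0:ℝ) < c ^ 2 * ε := by positivity
  have final : 2 * (c ^ 2 * ε) < c ^ 2 * ε := by
    calc 2 * (c ^ 2 * ε) = 2 * (c * ε) * c := by ring
      _ ≤ (c * ε) ^ 2 * K := hkey
      _ ≤ (c * ε) ^ 2 * |K| := mul_le_mul_of_nonneg_left hKle (sq_nonneg _)
      _ = (c ^ 2 * ε) * (ε * |K|) := by ring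
      _ < (c ^ 2 * ε) * 1 := mul_lt_mul_of_pos_left h2 hX
      _ = c ^ 2 * ε := mul_one _
  linarith

lemma exists_entry_bound {G : ℕ → Matrix (Fin m) (Fin m) ℝ} {Gl : Matrix (Fin m) (Fin m) ℝ}
    (h : Tendsto G atTop (𝓝 Gl)) : ∃ B : ℝ, 0 ≤ B ∧ ∀ n i j, |G n i j| ≤ B := by
  have hone : ∀ i j, ∃ b : ℝ, ∀ n, |G n i j| ≤ b := by
    intro i j
    have hij : Tendsto (fun n => G n i j) atTop (𝓝 (Gl i j)) := by
      have h1 : Tendsto (fun n => G n i) atTop (𝓝 (Gl i)) := (tendsto_pi_nhds.mp h) i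
      exact (tendsto_pi_nhds.mp h1) j
    obtain ⟨b, hb⟩ := (hij.abs).bddAbove_range
    exact ⟨b, fun n => hb ⟨n, rfl⟩⟩
  choose b hb using hone
  refine ⟨∑ i, ∑ j, |b i j|, by positivity, fun n i j => le_trans (hb i j n) ?_⟩
  calc b i j ≤ |b i j| := le_abs_self _
    _ ≤ ∑ j', |b i j'| := Finset.single_le_sum (f := fun j' => |b i j'|) (fun j' _ => abs_nonneg _) (Finset.mem_univ j)
    _ ≤ ∑ i', ∑ j', |b i' j'| := Finset.single_le_sum (f := fun i' => ∑ j', |b i' j'|)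
        (fun i' _ => Finset.sum_nonneg fun j' _ => abs_nonneg _) (Finset.mem_univ i)

lemma tendsto_Qf {A : ℕ → Matrix (Fin m) (Fin m) ℝ} {Al : Matrix (Fin m) (Fin m) ℝ}
    {x y : ℕ → Fin m → ℝ} {xl yl : Fin m → ℝ}
    (hA : Tendsto A atTop (𝓝 Al)) (hx : Tendsto x atTop (𝓝 xl)) (hy : Tendsto y atTop (𝓝 yl)) :
    Tendsto (fun k => Qf (A k) (x k) (y k)) atTop (𝓝 (Qf Al xl yl)) := by
  simp only [Qf_eq_sum]
  apply tendsto_finset_sum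
  intro i _
  apply tendsto_finset_sum
  intro j _
  have hAij : Tendsto (fun k => A k i j) atTop (𝓝 (Al i j)) :=
    (tendsto_pi_nhds.mp ((tendsto_pi_nhds.mp hA) i)) j
  have hxi : Tendsto (fun k => x k i) atTop (𝓝 (xl i)) := (tendsto_pi_nhds.mp hx) i
  have hyj : Tendsto (fun k => y k j) atTop (𝓝 (yl j)) := (tendsto_pi_nhds.mp hy) j
  exact (hxi.mul hAij).mul hyj

lemma tendsto_dot {x y : ℕ → Fin m → ℝ} {xl yl : Fin m → ℝ}
    (hx : Tendsto x atTop (𝓝 xl)) (hy : Tendsto y atTop (𝓝 yl)) :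
    Tendsto (fun k => ∑ i, x k i * y k i) atTop (𝓝 (∑ i, xl i * yl i)) := by
  apply tendsto_finset_sum
  intro i _
  exact ((tendsto_pi_nhds.mp hx) i).mul ((tendsto_pi_nhds.mp hy) i)

lemma Qf_diag (d : Fin m → ℝ) (x y : Fin m → ℝ) :
    Qf (diagonal d) x y = ∑ i, d i * (x i * y i) := by
  unfold Qf
  simp only [dotProduct]
  refine Finset.sum_congr rfl fun i _ => ?_
  rw [Matrix.mulVec_diagonal]
  ring

lemma mulVec_cancel {P : Matrix (Fin m) (Fin m) ℝ} (hP : IsUnit P.det) {w : Fin m → ℝ}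
    (h : P *ᵥ w = 0) : w = 0 := by
  have h2 : P⁻¹ *ᵥ (P *ᵥ w) = 0 := by rw [h, Matrix.mulVec_zero]
  rwa [Matrix.mulVec_mulVec, Matrix.nonsing_inv_mul P hP, Matrix.one_mulVec] at h2

lemma no_isotropic_pair (hm : 2 ≤ m) {Hl : Matrix (Fin m) (Fin m) ℝ}
    (hsig : HasLorentzSignature m Hl) {e f : Fin m → ℝ}
    (he : e ∈ sph m) (hf : f ∈ sph m) (hef : ∑ i, e i * f i = 0)
    (h1 : Qf Hl e e = 0) (h2 : Qf Hl f f = 0) (h3 : Qf Hl e f + Qf Hl f e = 0) : False := by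
  obtain ⟨P, hPdet, hHl⟩ := hsig
  set d : Fin m → ℝ := fun i : Fin m => if (i : ℕ) = m - 1 then (-1 : ℝ) else 1 with hd
  set x := P *ᵥ e with hx
  set y := P *ᵥ f with hy
  have hQ : ∀ w w' : Fin m → ℝ, Qf Hl w w' = ∑ i, d i * ((P *ᵥ w) i * (P *ᵥ w') i) := by
    intro w w'
    rw [hHl, Qf_congr, Qf_diag]
  set i₀ : Fin m := ⟨m - 1, by omega⟩ with hi₀
  have hdi : ∀ i : Fin m, d i = if i = i₀ then -1 else 1 := by
    intro i
    simp only [hd]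
    congr 1
    · simp only [eq_iff_iff, Fin.ext_iff, hi₀]
  set T : Finset (Fin m) := Finset.univ.erase i₀ with hT
  have hsplit : ∀ w w' : Fin m → ℝ, ∑ i, d i * (w i * w' i)
      = (∑ i ∈ T, w i * w' i) - w i₀ * w' i₀ := by
    intro w w'
    rw [← Finset.sum_erase_add _ _ (Finset.mem_univ i₀)]
    have : ∀ i ∈ T, d i * (w i * w' i) = w i * w' i := by
      intro i hi
      rw [hdi i, if_neg (Finset.ne_of_mem_erase hi), one_mul]
    rw [Finset.sum_congr rfl this, hdi i₀, if_pos rfl]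
    ring
  set a := x i₀ with ha
  set b := y i₀ with hb
  have hxx : ∑ i ∈ T, x i * x i = a * a := by
    have := h1; rw [hQ, hsplit] at this
    linarith [this]
  have hyy : ∑ i ∈ T, y i * y i = b * b := by
    have := h2; rw [hQ, hsplit] at this
    linarith [this]
  have hxy : ∑ i ∈ T, x i * y i = a * b := by
    have h3' := h3
    rw [hQ, hQ, hsplit, hsplit] at h3'
    have hcomm : ∑ i ∈ T, y i * x i = ∑ i ∈ T, x i * y i :=
      Finset.sum_congr rfl fun i _ => mul_comm _ _
    rw [hcomm] at h3'
    linarith [h3']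
  -- e ≠ 0 coordinates etc.
  have hPinj : ∀ w : Fin m → ℝ, P *ᵥ w = 0 → w = 0 := fun w => mulVec_cancel hPdet
  have hxne : x ≠ 0 ∨ True := Or.inr trivial
  have hane : a ≠ 0 := by
    intro ha0
    have hall : ∀ i, x i = 0 := by
      intro i
      by_cases hii : i = i₀
      · rw [hii, ← ha]; exact ha0
      · have hxx0 : ∑ i ∈ T, x i * x i = 0 := by rw [hxx, ha0]; ring
        have hnn : ∀ i ∈ T, 0 ≤ x i * x i := fun i _ => mul_self_nonneg _
        have := (Finset.sum_eq_zero_iff_of_nonneg hnn).mp hxx0 i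
          (by simp [hT, Finset.mem_erase, hii])
        nlinarith [this]
    have he0 : e = 0 := hPinj e (funext fun i => hall i)
    change ∑ i, e i ^ 2 = 1 at he
    have : (1:ℝ) = 0 := by
      rw [← he]
      rw [he0]
      simp [sph]
    norm_num at this
  have hbne : b ≠ 0 := by
    intro hb0
    have hall : ∀ i, y i = 0 := by
      intro i
      by_cases hii : i = i₀
      · rw [hii, ← hb]; exact hb0
      · have hyy0 : ∑ i ∈ T, y i * y i = 0 := by rw [hyy, hb0]; ring
        have hnn : ∀ i ∈ T, 0 ≤ y i * y i := fun i _ => mul_self_nonneg _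
        have := (Finset.sum_eq_zero_iff_of_nonneg hnn).mp hyy0 i
          (by simp [hT, Finset.mem_erase, hii])
        nlinarith [this]
    have hf0 : f = 0 := hPinj f (funext fun i => hall i)
    have : (1:ℝ) = 0 := by
      rw [← hf, hf0]
      simp [sph]
    norm_num at this
  -- the vanishing combination
  have hz : ∑ i ∈ T, (b * x i - a * y i) ^ 2 = 0 := by
    have expand : ∀ i, (b * x i - a * y i) ^ 2
        = b ^ 2 * (x i * x i) - 2 * a * b * (x i * y i) + a ^ 2 * (y i * y i) := by
      intro i; ring
    rw [Finset.sum_congr rfl fun i _ => expand i]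
    rw [Finset.sum_add_distrib, Finset.sum_sub_distrib, ← Finset.mul_sum, ← Finset.mul_sum,
      ← Finset.mul_sum, hxx, hyy, hxy]
    ring
  have hzi : ∀ i, b * x i = a * y i := by
    intro i
    by_cases hii : i = i₀
    · rw [hii, ← ha, ← hb]; ring
    · have := (Finset.sum_eq_zero_iff_of_nonneg (fun i _ => sq_nonneg (b * x i - a * y i))).mp
        hz i (by simp [hT, Finset.mem_erase, hii])
      have h0 : b * x i - a * y i = 0 := by
        have := sq_eq_zero_iff.mp this
        exact this
      linarith
  -- b • e = a • f
  have hbea : b • e - a • f = 0 := by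
    apply hPinj
    rw [Matrix.mulVec_sub, Matrix.mulVec_smul, Matrix.mulVec_smul]
    funext i
    simp only [Pi.sub_apply, Pi.smul_apply, smul_eq_mul, Pi.zero_apply, ← hx, ← hy]
    linarith [hzi i]
  have hcoord : ∀ i, b * e i = a * f i := by
    intro i
    have := congrFun hbea i
    simp only [Pi.sub_apply, Pi.smul_apply, smul_eq_mul, Pi.zero_apply] at this
    linarith
  have hb0 : b = 0 := by
    have h1' : ∑ i, (b * e i) * e i = b := by
      have : ∀ i, (b * e i) * e i = b * e i ^ 2 := fun i => by ring
      rw [Finset.sum_congr rfl fun i _ => this i, ← Finset.mul_sum, he, mul_one]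
    have h2' : ∑ i, (a * f i) * e i = 0 := by
      have : ∀ i, (a * f i) * e i = a * (e i * f i) := fun i => by ring
      rw [Finset.sum_congr rfl fun i _ => this i, ← Finset.mul_sum, hef, mul_zero]
    rw [← h1']
    rw [Finset.sum_congr rfl fun i _ => by rw [hcoord i]]
    exact h2'
  exact hbne hb0

lemma dotf_apply (u v : Fin m → ℝ) : dotf u v = ∑ i, u i * v i := rfl

lemma inv_bound {q R s t c : ℝ} (hq : |q| ≤ R) (hc : 1 ≤ c) (hs : c ≤ s) (ht : 1 ≤ t) :
    |s⁻¹ * t⁻¹ * q| ≤ R / c := by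
  have hc0 : 0 < c := by linarith
  have hs0 : 0 < s := by linarith
  have ht0 : 0 < t := by linarith
  have hR : 0 ≤ R := le_trans (abs_nonneg q) hq
  rw [abs_mul, abs_mul, abs_inv, abs_inv, abs_of_pos hs0, abs_of_pos ht0]
  have h1 : t⁻¹ ≤ 1 := by
    rw [inv_le_one_iff₀]; right; exact ht
  have h2 : s⁻¹ ≤ c⁻¹ := by
    apply inv_anti₀ hc0 hs
  calc s⁻¹ * t⁻¹ * |q| ≤ c⁻¹ * 1 * R := by
        apply mul_le_mul (mul_le_mul h2 h1 (by positivity) (by positivity)) hq (abs_nonneg q)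
          (by positivity)
    _ = R / c := by rw [mul_one, inv_mul_eq_div]

lemma tendsto_div_add_one (Dq : ℝ) :
    Tendsto (fun n : ℕ => Dq / ((n : ℝ) + 1)) atTop (𝓝 0) := by
  have h := (tendsto_const_div_atTop_nhds_zero_nat Dq).comp (tendsto_add_atTop_nat 1)
  have heq : ((fun n : ℕ => Dq / (n : ℝ)) ∘ fun n : ℕ => n + 1)
      = fun n : ℕ => Dq / ((n : ℝ) + 1) := by
    funext n; simp [Function.comp]
  rwa [heq] at h

set_option maxHeartbeats 1000000

/-- Uniformity conclusion of the linear proposition: along a subsequence there are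
hyperplanes `P k` on which the matrices `M (φ k)` are uniformly bounded: for every unit
vector `v ∈ P k`, `‖M (φ k) v‖ < C` (Euclidean norms). -/
theorem exists_uniformly_bounded_hyperplanes {m : ℕ} (hm : 2 ≤ m)
    (H G : ℕ → Matrix (Fin m) (Fin m) ℝ) (Hl Gl : Matrix (Fin m) (Fin m) ℝ)
    (hHsig : ∀ n, HasLorentzSignature m (H n)) (hGsig : ∀ n, HasLorentzSignature m (G n))
    (hHlsig : HasLorentzSignature m Hl) (hGlsig : HasLorentzSignature m Gl)
    (hHconv : Tendsto H atTop (𝓝 Hl)) (hGconv : Tendsto G atTop (𝓝 Gl))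
    (M : ℕ → Matrix (Fin m) (Fin m) ℝ) (hMinv : ∀ n, IsUnit (M n).det)
    (hrel : ∀ n, (M n)ᵀ * H n * M n = G n)
    (hunb : ¬ ∃ C : ℝ, ∀ n i j, |M n i j| ≤ C) :
    ∃ φ : ℕ → ℕ, StrictMono φ ∧ ∃ C : ℝ, 0 < C ∧
      ∃ P : ℕ → Submodule ℝ (Fin m → ℝ),
        (∀ k, Module.finrank ℝ (P k) = m - 1) ∧
        ∀ k, ∀ v ∈ P k, euclNorm v = 1 → euclNorm ((M (φ k)) *ᵥ v) < C := by
  classical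
  have hm0 : 0 < m := by omega
  -- maximizers of the quadratic stretch on the unit sphere
  have hmaxex : ∀ n, ∃ u ∈ sph m, ∀ w ∈ sph m,
      ∑ i, ((M n) *ᵥ w) i ^ 2 ≤ ∑ i, ((M n) *ᵥ u) i ^ 2 := fun n => exists_max hm0 (M n)
  choose u huS humax using hmaxex
  set P : ℕ → Submodule ℝ (Fin m → ℝ) := fun n => LinearMap.ker (dotf (u n)) with hPdef
  have hrank : ∀ n, Module.finrank ℝ (P n) = m - 1 := fun n => finrank_ker_dotf (huS n)
  refine ⟨id, strictMono_id, ?_⟩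
  by_contra hCn
  push_neg at hCn
  -- entry bound for G
  obtain ⟨Bg, hBg0, hBg⟩ := exists_entry_bound hGconv
  -- crude bound for the norm of M n on the sphere
  set Sqb : ℕ → ℝ := fun n => Real.sqrt (∑ i, (∑ j, |M n i j|) ^ 2) with hSqbdef
  have hSqb_nonneg : ∀ n, 0 ≤ Sqb n := fun n => Real.sqrt_nonneg _
  have hbound : ∀ n, ∀ w : Fin m → ℝ, w ∈ sph m → euclNorm (M n *ᵥ w) ≤ Sqb n := by
    intro n w hw
    unfold euclNorm
    apply Real.sqrt_le_sqrt
    apply Finset.sum_le_sum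
    intro i _
    have h1 : |(M n *ᵥ w) i| ≤ ∑ j, |M n i j| := by
      have hmv : (M n *ᵥ w) i = ∑ j, M n i j * w j := by
        simp [Matrix.mulVec, dotProduct]
      rw [hmv]
      calc |∑ j, M n i j * w j| ≤ ∑ j, |M n i j * w j| := Finset.abs_sum_le_sum_abs _ _
        _ ≤ ∑ j, |M n i j| := by
            refine Finset.sum_le_sum fun j _ => ?_
            rw [abs_mul]
            calc |M n i j| * |w j| ≤ |M n i j| * 1 :=
                  mul_le_mul_of_nonneg_left (coord_le_one hw j) (abs_nonneg _)
              _ = |M n i j| := mul_one _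
    have h2 := abs_le.mp h1
    exact sq_le_sq' h2.1 h2.2
  -- selection of bad indices
  have hsel : ∀ j : ℕ, ∃ k, (∃ v, v ∈ P k ∧ euclNorm v = 1
      ∧ ((j : ℝ) + 1) ≤ euclNorm (M k *ᵥ v)) ∧ j ≤ k := by
    intro j
    set T := ∑ n ∈ Finset.range (j + 1), Sqb n with hT
    have hTnn : 0 ≤ T := Finset.sum_nonneg fun n _ => hSqb_nonneg n
    set C := max ((j : ℝ) + 1) T + 1 with hCdef
    have hmaxl := le_max_left ((j : ℝ) + 1) T
    have hmaxr := le_max_right ((j : ℝ) + 1) T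
    have hCpos : 0 < C := by
      have : (0 : ℝ) ≤ (j : ℝ) + 1 := by positivity
      linarith
    obtain ⟨k, v, hvP, hv1, hge⟩ := hCn C hCpos P hrank
    have hvS : v ∈ sph m := by
      have : Real.sqrt (∑ i, v i ^ 2) = 1 := hv1
      exact Real.sqrt_eq_one.mp this
    have hkj : j ≤ k := by
      by_contra hlt
      push_neg at hlt
      have h1 : euclNorm (M k *ᵥ v) ≤ Sqb k := hbound k v hvS
      have h2 : Sqb k ≤ T := Finset.single_le_sum (f := Sqb)
        (fun n _ => hSqb_nonneg n) (Finset.mem_range.mpr (by omega))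
      simp only [id_eq] at hge
      linarith
    refine ⟨k, ⟨v, hvP, hv1, ?_⟩, hkj⟩
    simp only [id_eq] at hge
    linarith
  choose k hk1 hkge using hsel
  choose v hvP hv1 hvge using hk1
  -- auxiliary vectors
  set x : ℕ → Fin m → ℝ := fun j => M (k j) *ᵥ u (k j) with hxd
  set y : ℕ → Fin m → ℝ := fun j => M (k j) *ᵥ v j with hyd
  set α : ℕ → ℝ := fun j => euclNorm (x j) with hαd
  set β : ℕ → ℝ := fun j => euclNorm (y j) with hβd
  have hvS : ∀ j, v j ∈ sph m := fun j => Real.sqrt_eq_one.mp (hv1 j)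
  have hone_le : ∀ j : ℕ, (1 : ℝ) ≤ (j : ℝ) + 1 := by
    intro j
    have : (0:ℝ) ≤ (j:ℝ) := Nat.cast_nonneg j
    linarith
  have hβge : ∀ j : ℕ, ((j : ℝ) + 1) ≤ β j := hvge
  have hβ1 : ∀ j, (1 : ℝ) ≤ β j := fun j => le_trans (hone_le j) (hβge j)
  have hquad_le : ∀ j, ∑ i, y j i ^ 2 ≤ ∑ i, x j i ^ 2 :=
    fun j => humax (k j) (v j) (hvS j)
  have hαβ : ∀ j, β j ≤ α j := fun j => Real.sqrt_le_sqrt (hquad_le j)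
  have hα1 : ∀ j, (1 : ℝ) ≤ α j := fun j => le_trans (hβ1 j) (hαβ j)
  have hαge : ∀ j : ℕ, ((j : ℝ) + 1) ≤ α j := fun j => le_trans (hβge j) (hαβ j)
  have hαpos : ∀ j, 0 < α j := fun j => lt_of_lt_of_le one_pos (hα1 j)
  have hβpos : ∀ j, 0 < β j := fun j => lt_of_lt_of_le one_pos (hβ1 j)
  have hα_sq : ∀ j, ∑ i, x j i ^ 2 = (α j) ^ 2 := fun j =>
    (Real.sq_sqrt (Finset.sum_nonneg fun i _ => sq_nonneg _)).symm
  have hβ_sq : ∀ j, ∑ i, y j i ^ 2 = (β j) ^ 2 := fun j =>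
    (Real.sq_sqrt (Finset.sum_nonneg fun i _ => sq_nonneg _)).symm
  have huv : ∀ j, ∑ i, u (k j) i * v j i = 0 := by
    intro j
    have := LinearMap.mem_ker.mp (hvP j)
    rwa [dotf_apply] at this
  have horth : ∀ j, ∑ i, x j i * y j i = 0 := fun j =>
    lagrange (M (k j)) (huS (k j)) (hvS j) (huv j) (humax (k j))
  set e : ℕ → Fin m → ℝ := fun j => (α j)⁻¹ • x j with hed
  set f : ℕ → Fin m → ℝ := fun j => (β j)⁻¹ • y j with hfd
  have heS : ∀ j, e j ∈ sph m := by
    intro j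
    show ∑ i, ((α j)⁻¹ • x j) i ^ 2 = 1
    have hptw : ∀ i, ((α j)⁻¹ • x j) i ^ 2 = (α j)⁻¹ ^ 2 * x j i ^ 2 := by
      intro i; simp only [Pi.smul_apply, smul_eq_mul]; ring
    rw [Finset.sum_congr rfl fun i _ => hptw i, ← Finset.mul_sum, hα_sq]
    field_simp
    exact div_self (ne_of_gt (hαpos j))
  have hfS : ∀ j, f j ∈ sph m := by
    intro j
    show ∑ i, ((β j)⁻¹ • y j) i ^ 2 = 1
    have hptw : ∀ i, ((β j)⁻¹ • y j) i ^ 2 = (β j)⁻¹ ^ 2 * y j i ^ 2 := by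
      intro i; simp only [Pi.smul_apply, smul_eq_mul]; ring
    rw [Finset.sum_congr rfl fun i _ => hptw i, ← Finset.mul_sum, hβ_sq]
    field_simp
    exact div_self (ne_of_gt (hβpos j))
  have hef : ∀ j, ∑ i, e j i * f j i = 0 := by
    intro j
    have hptw : ∀ i, e j i * f j i = (α j)⁻¹ * (β j)⁻¹ * (x j i * y j i) := by
      intro i; simp only [hed, hfd, Pi.smul_apply, smul_eq_mul]; ring
    rw [Finset.sum_congr rfl fun i _ => hptw i, ← Finset.mul_sum, horth, mul_zero]
  -- identification of forms
  have hQG : ∀ n (w w' : Fin m → ℝ),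
      Qf (G n) w w' = Qf (H n) (M n *ᵥ w) (M n *ᵥ w') := by
    intro n w w'
    rw [← hrel n, Qf_congr]
  -- the three bounds
  set Dq : ℝ := 6 * ((m : ℝ) * m * Bg) + 1 with hDqdef
  have hmmBg : 0 ≤ (m : ℝ) * m * Bg := by positivity
  have hDqpos : 0 < Dq := by linarith
  have hQee : ∀ j, |Qf (H (k j)) (e j) (e j)| ≤ Dq / ((j : ℝ) + 1) := by
    intro j
    have h1 : Qf (H (k j)) (e j) (e j)
        = (α j)⁻¹ * (α j)⁻¹ * Qf (H (k j)) (x j) (x j) := Qf_smul_smul _ _ _ _ _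
    have h2 : Qf (H (k j)) (x j) (x j) = Qf (G (k j)) (u (k j)) (u (k j)) :=
      (hQG (k j) (u (k j)) (u (k j))).symm
    have h3 : |Qf (G (k j)) (u (k j)) (u (k j))| ≤ (m : ℝ) * m * (1 * Bg * 1) :=
      Qf_bound _ _ _ Bg 1 1 (hBg (k j)) zero_le_one zero_le_one hBg0
        (coord_le_one (huS (k j))) (coord_le_one (huS (k j)))
    rw [h1, h2]
    calc |(α j)⁻¹ * (α j)⁻¹ * Qf (G (k j)) (u (k j)) (u (k j))|
        ≤ ((m : ℝ) * m * (1 * Bg * 1)) / ((j : ℝ) + 1) :=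
          inv_bound h3 (hone_le j) (hαge j) (hα1 j)
      _ ≤ Dq / ((j : ℝ) + 1) := by
          apply (div_le_div_iff_of_pos_right (by positivity : (0:ℝ) < (j:ℝ)+1)).mpr
          nlinarith [hmmBg]
  have hQff : ∀ j, |Qf (H (k j)) (f j) (f j)| ≤ Dq / ((j : ℝ) + 1) := by
    intro j
    have h1 : Qf (H (k j)) (f j) (f j)
        = (β j)⁻¹ * (β j)⁻¹ * Qf (H (k j)) (y j) (y j) := Qf_smul_smul _ _ _ _ _
    have h2 : Qf (H (k j)) (y j) (y j) = Qf (G (k j)) (v j) (v j) :=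
      (hQG (k j) (v j) (v j)).symm
    have h3 : |Qf (G (k j)) (v j) (v j)| ≤ (m : ℝ) * m * (1 * Bg * 1) :=
      Qf_bound _ _ _ Bg 1 1 (hBg (k j)) zero_le_one zero_le_one hBg0
        (coord_le_one (hvS j)) (coord_le_one (hvS j))
    rw [h1, h2]
    calc |(β j)⁻¹ * (β j)⁻¹ * Qf (G (k j)) (v j) (v j)|
        ≤ ((m : ℝ) * m * (1 * Bg * 1)) / ((j : ℝ) + 1) :=
          inv_bound h3 (hone_le j) (hβge j) (hβ1 j)
      _ ≤ Dq / ((j : ℝ) + 1) := by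
          apply (div_le_div_iff_of_pos_right (by positivity : (0:ℝ) < (j:ℝ)+1)).mpr
          nlinarith [hmmBg]
  have hQef : ∀ j, |Qf (H (k j)) (e j) (f j) + Qf (H (k j)) (f j) (e j)|
      ≤ Dq / ((j : ℝ) + 1) := by
    intro j
    have h1 : Qf (H (k j)) (e j) (f j)
        = (α j)⁻¹ * (β j)⁻¹ * Qf (H (k j)) (x j) (y j) := Qf_smul_smul _ _ _ _ _
    have h2 : Qf (H (k j)) (f j) (e j)
        = (β j)⁻¹ * (α j)⁻¹ * Qf (H (k j)) (y j) (x j) := Qf_smul_smul _ _ _ _ _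
    have hsum : Qf (H (k j)) (e j) (f j) + Qf (H (k j)) (f j) (e j)
        = (α j)⁻¹ * (β j)⁻¹ * (Qf (H (k j)) (x j) (y j) + Qf (H (k j)) (y j) (x j)) := by
      rw [h1, h2]; ring
    have hadd : Qf (H (k j)) (x j) (y j) + Qf (H (k j)) (y j) (x j)
        = Qf (H (k j)) (x j + y j) (x j + y j) - Qf (H (k j)) (x j) (x j)
          - Qf (H (k j)) (y j) (y j) := Qf_add_add _ _ _
    have hxy : x j + y j = M (k j) *ᵥ (u (k j) + v j) := by
      rw [hxd, hyd]
      exact (Matrix.mulVec_add _ _ _).symm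
    have hq1 : Qf (H (k j)) (x j + y j) (x j + y j)
        = Qf (G (k j)) (u (k j) + v j) (u (k j) + v j) := by
      rw [hxy]; exact (hQG (k j) _ _).symm
    have hq2 : Qf (H (k j)) (x j) (x j) = Qf (G (k j)) (u (k j)) (u (k j)) :=
      (hQG (k j) _ _).symm
    have hq3 : Qf (H (k j)) (y j) (y j) = Qf (G (k j)) (v j) (v j) :=
      (hQG (k j) _ _).symm
    have hb1 : |Qf (G (k j)) (u (k j) + v j) (u (k j) + v j)| ≤ (m : ℝ) * m * (2 * Bg * 2) := by
      refine Qf_bound _ _ _ Bg 2 2 (hBg (k j)) (by norm_num) (by norm_num) hBg0 ?_ ?_ <;>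
      · intro i
        calc |(u (k j) + v j) i| = |u (k j) i + v j i| := rfl
          _ ≤ |u (k j) i| + |v j i| := abs_add_le _ _
          _ ≤ 2 := by
              have := coord_le_one (huS (k j)) i
              have := coord_le_one (hvS j) i
              linarith
    have hb2 : |Qf (G (k j)) (u (k j)) (u (k j))| ≤ (m : ℝ) * m * (1 * Bg * 1) :=
      Qf_bound _ _ _ Bg 1 1 (hBg (k j)) zero_le_one zero_le_one hBg0
        (coord_le_one (huS (k j))) (coord_le_one (huS (k j)))
    have hb3 : |Qf (G (k j)) (v j) (v j)| ≤ (m : ℝ) * m * (1 * Bg * 1) :=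
      Qf_bound _ _ _ Bg 1 1 (hBg (k j)) zero_le_one zero_le_one hBg0
        (coord_le_one (hvS j)) (coord_le_one (hvS j))
    have hZ : |Qf (H (k j)) (x j) (y j) + Qf (H (k j)) (y j) (x j)| ≤ Dq := by
      rw [hadd, hq1, hq2, hq3]
      set q1 := Qf (G (k j)) (u (k j) + v j) (u (k j) + v j) with hq1d
      set q2 := Qf (G (k j)) (u (k j)) (u (k j)) with hq2d
      set q3 := Qf (G (k j)) (v j) (v j) with hq3d
      have htri : |q1 - q2 - q3| ≤ |q1| + |q2| + |q3| := by
        calc |q1 - q2 - q3| ≤ |q1 - q2| + |q3| := abs_sub _ _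
          _ ≤ |q1| + |q2| + |q3| := by linarith [abs_sub q1 q2]
      have e1 : (m:ℝ) * m * (2 * Bg * 2) = 4 * ((m:ℝ) * m * Bg) := by ring
      have e2 : (m:ℝ) * m * (1 * Bg * 1) = (m:ℝ) * m * Bg := by ring
      rw [e1] at hb1
      rw [e2] at hb2
      rw [e2] at hb3
      have : |q1| + |q2| + |q3| ≤ Dq := by
        rw [hDqdef]
        linarith
      linarith
    rw [hsum]
    exact inv_bound hZ (hone_le j) (hαge j) (hβ1 j)
  -- subsequence extraction
  obtain ⟨el, helS, φ₁, hφ₁, hconv₁⟩ := isCompact_sph.tendsto_subseq heS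
  obtain ⟨fl, hflS, φ₂, hφ₂, hconv₂⟩ := isCompact_sph.tendsto_subseq (fun j => hfS (φ₁ j))
  set ψ := φ₁ ∘ φ₂ with hψdef
  have hψmono : StrictMono ψ := hφ₁.comp hφ₂
  have hconv_e : Tendsto (fun j => e (ψ j)) atTop (𝓝 el) :=
    hconv₁.comp hφ₂.tendsto_atTop
  have hconv_f : Tendsto (fun j => f (ψ j)) atTop (𝓝 fl) := hconv₂
  have hkψ : Tendsto (fun j => k (ψ j)) atTop atTop := by
    have hle : ∀ j, j ≤ k (ψ j) := fun j => le_trans (hψmono.id_le j) (hkge (ψ j))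
    exact tendsto_atTop_mono hle tendsto_id
  have hHψ : Tendsto (fun j => H (k (ψ j))) atTop (𝓝 Hl) := hHconv.comp hkψ
  -- limit bounds
  have hz0 : Tendsto (fun j : ℕ => Dq / ((j : ℝ) + 1)) atTop (𝓝 0) := tendsto_div_add_one Dq
  have hψcast : ∀ j : ℕ, Dq / ((ψ j : ℝ) + 1) ≤ Dq / ((j : ℝ) + 1) := by
    intro j
    have h1 : ((j : ℝ) + 1) ≤ ((ψ j : ℝ) + 1) := by
      have := hψmono.id_le j
      have : (j : ℝ) ≤ (ψ j : ℝ) := Nat.cast_le.mpr this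
      linarith
    apply div_le_div_of_nonneg_left (le_of_lt hDqpos) (by positivity) h1
  have hQee0 : Qf Hl el el = 0 := by
    have t1 : Tendsto (fun j => Qf (H (k (ψ j))) (e (ψ j)) (e (ψ j))) atTop
        (𝓝 (Qf Hl el el)) := tendsto_Qf hHψ hconv_e hconv_e
    have t0 : Tendsto (fun j => Qf (H (k (ψ j))) (e (ψ j)) (e (ψ j))) atTop (𝓝 0) := by
      apply squeeze_zero_norm ?_ hz0
      intro j
      rw [Real.norm_eq_abs]
      exact le_trans (hQee (ψ j)) (hψcast j)
    exact tendsto_nhds_unique t1 t0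
  have hQff0 : Qf Hl fl fl = 0 := by
    have t1 : Tendsto (fun j => Qf (H (k (ψ j))) (f (ψ j)) (f (ψ j))) atTop
        (𝓝 (Qf Hl fl fl)) := tendsto_Qf hHψ hconv_f hconv_f
    have t0 : Tendsto (fun j => Qf (H (k (ψ j))) (f (ψ j)) (f (ψ j))) atTop (𝓝 0) := by
      apply squeeze_zero_norm ?_ hz0
      intro j
      rw [Real.norm_eq_abs]
      exact le_trans (hQff (ψ j)) (hψcast j)
    exact tendsto_nhds_unique t1 t0
  have hQef0 : Qf Hl el fl + Qf Hl fl el = 0 := by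
    have t1 : Tendsto (fun j => Qf (H (k (ψ j))) (e (ψ j)) (f (ψ j))
        + Qf (H (k (ψ j))) (f (ψ j)) (e (ψ j))) atTop
        (𝓝 (Qf Hl el fl + Qf Hl fl el)) :=
      (tendsto_Qf hHψ hconv_e hconv_f).add (tendsto_Qf hHψ hconv_f hconv_e)
    have t0 : Tendsto (fun j => Qf (H (k (ψ j))) (e (ψ j)) (f (ψ j))
        + Qf (H (k (ψ j))) (f (ψ j)) (e (ψ j))) atTop (𝓝 0) := by
      apply squeeze_zero_norm ?_ hz0
      intro j
      rw [Real.norm_eq_abs]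
      exact le_trans (hQef (ψ j)) (hψcast j)
    exact tendsto_nhds_unique t1 t0
  have hef0 : ∑ i, el i * fl i = 0 := by
    have t1 : Tendsto (fun j => ∑ i, e (ψ j) i * f (ψ j) i) atTop
        (𝓝 (∑ i, el i * fl i)) := tendsto_dot hconv_e hconv_f
    have heq : (fun j => ∑ i, e (ψ j) i * f (ψ j) i) = fun _ => (0:ℝ) :=
      funext fun j => hef (ψ j)
    rw [heq] at t1
    exact tendsto_nhds_unique t1 tendsto_const_nhds
  exact no_isotropic_pair hm hHlsig helS hflS hef0 hQee0 hQff0 hQef0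
end

section
/- Let H be a real symmetric 2×2 matrix with det H < 0 (i.e., of signature (1,1)), and let (M_n) be a sequence of invertible real 2×2 matrices with sup_n ‖M_n‖ = ∞ such that the sequence (M_nᵀ H M_n) converges to an invertible matrix. Then there exists a sequence (I_n) of matrices satisfying I_nᵀ H I_n = H for all n such that the sequence (I_n^{-1} M_n) is bounded. -/
open Matrix Filter Topology

noncomputable section

def J2 : Matrix (Fin 2) (Fin 2) ℝ := Matrix.of ![![1, 0], ![0, -1]]

lemma cong_pos (H : Matrix (Fin 2) (Fin 2) ℝ) (hs : H.IsSymm) (hd : H.det < 0)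
    (ha : 0 < H 0 0) : ∃ Q : Matrix (Fin 2) (Fin 2) ℝ, IsUnit Q.det ∧ Qᵀ * J2 * Q = H := by
  set a := H 0 0 with ha'
  set b := H 0 1 with hb'
  set c := H 1 1 with hc'
  have hb10 : H 1 0 = b := hs.apply 0 1
  have hdet2 : a * c - b * b < 0 := by
    have h2 := Matrix.det_fin_two H
    rw [hb10, ← ha', ← hb', ← hc'] at h2
    linarith [hd, h2.le, h2.ge]
  have hx : 0 < (b * b - a * c) / a := div_pos (by linarith) ha
  set s := Real.sqrt a with hsdef
  set u := Real.sqrt ((b * b - a * c) / a) with hudef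
  have hs2 : s * s = a := Real.mul_self_sqrt ha.le
  have hu2 : u * u = (b * b - a * c) / a := Real.mul_self_sqrt hx.le
  have ha0 : a ≠ 0 := ne_of_gt ha
  have hu2' : u * u * a = b * b - a * c := by rw [hu2]; field_simp
  have hs0 : s ≠ 0 := ne_of_gt (Real.sqrt_pos.2 ha)
  have hu0 : u ≠ 0 := ne_of_gt (Real.sqrt_pos.2 hx)
  refine ⟨Matrix.of ![![s, b / s], ![0, u]], ?_, ?_⟩
  · rw [Matrix.det_fin_two]
    simp only [Matrix.of_apply, Matrix.cons_val', Matrix.cons_val_zero, Matrix.cons_val_one,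
      Matrix.head_cons, Matrix.head_fin_const, Matrix.empty_val', Matrix.cons_val_fin_one,
      isUnit_iff_ne_zero]
    intro h
    have h3 : s * u = 0 := by linarith
    rcases mul_eq_zero.1 h3 with h | h
    · exact hs0 h
    · exact hu0 h
  · ext i j
    fin_cases i <;> fin_cases j <;>
      simp [Matrix.mul_apply, Matrix.transpose_apply, Fin.sum_univ_two, Matrix.vecHead,
        Matrix.vecTail, J2, hb10, ← ha', ← hb', ← hc']
    · exact hs2
    · field_simp
    · field_simp
    · field_simp
      linear_combination (-c - u*u) * hs2 - hu2'

lemma cong_ne (H : Matrix (Fin 2) (Fin 2) ℝ) (hs : H.IsSymm) (hd : H.det < 0)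
    (ha : H 0 0 ≠ 0) : ∃ Q : Matrix (Fin 2) (Fin 2) ℝ, IsUnit Q.det ∧ Qᵀ * J2 * Q = H := by
  rcases ha.lt_or_gt with hlt | hgt
  · -- negative top-left: use -H
    have hs' : (-H).IsSymm := by
      unfold Matrix.IsSymm
      rw [Matrix.transpose_neg, hs.eq]
    have hd' : (-H).det < 0 := by
      rw [Matrix.det_fin_two] at hd ⊢
      simp only [Matrix.neg_apply]
      ring_nf
      ring_nf at hd
      linarith
    have ha' : 0 < (-H) 0 0 := by simp [Matrix.neg_apply]; linarith
    obtain ⟨Q, hQu, hQ⟩ := cong_pos (-H) hs' hd' ha'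
    set S : Matrix (Fin 2) (Fin 2) ℝ := Matrix.of ![![0, 1], ![1, 0]] with hSdef
    have hSJ : Sᵀ * J2 * S = -J2 := by
      ext i j
      fin_cases i <;> fin_cases j <;>
        simp [Matrix.mul_apply, Matrix.transpose_apply, Fin.sum_univ_two, Matrix.vecHead,
          Matrix.vecTail, J2, S]
    refine ⟨S * Q, ?_, ?_⟩
    · rw [Matrix.det_mul]
      have hSdet : S.det = -1 := by
        rw [Matrix.det_fin_two]; simp [S]
      rw [hSdet]
      simpa [isUnit_iff_ne_zero] using hQu.ne_zero
    · calc (S * Q)ᵀ * J2 * (S * Q) = Qᵀ * (Sᵀ * J2 * S) * Q := by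
            rw [Matrix.transpose_mul]; simp only [Matrix.mul_assoc]
        _ = Qᵀ * (-J2) * Q := by rw [hSJ]
        _ = -(Qᵀ * J2 * Q) := by simp only [Matrix.mul_neg, Matrix.neg_mul]
        _ = H := by rw [hQ, neg_neg]
  · exact cong_pos H hs hd hgt

lemma cong_J (H : Matrix (Fin 2) (Fin 2) ℝ) (hs : H.IsSymm) (hd : H.det < 0) :
    ∃ Q : Matrix (Fin 2) (Fin 2) ℝ, IsUnit Q.det ∧ Qᵀ * J2 * Q = H := by
  by_cases ha : H 0 0 ≠ 0
  · exact cong_ne H hs hd ha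
  push_neg at ha
  set b := H 0 1 with hb'
  have hb10 : H 1 0 = b := hs.apply 0 1
  have hbne : b ≠ 0 := by
    intro h
    rw [Matrix.det_fin_two, ha, hb10, ← hb', h] at hd
    simp at hd
  set c := H 1 1 with hc'
  -- choose shear sign
  obtain ⟨σ, hσ1, hσ0⟩ : ∃ σ : ℝ, σ * σ = 1 ∧ 2 * σ * b + c ≠ 0 := by
    by_cases h : 2 * b + c ≠ 0
    · exact ⟨1, by norm_num, fun h2 => h (by linarith)⟩
    · push_neg at h
      refine ⟨-1, by norm_num, ?_⟩
      intro h2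
      apply hbne
      linarith
  set T : Matrix (Fin 2) (Fin 2) ℝ := Matrix.of ![![1, 0], ![σ, 1]] with hTdef
  set U : Matrix (Fin 2) (Fin 2) ℝ := Matrix.of ![![1, 0], ![-σ, 1]] with hUdef
  have hTU : T * U = 1 := by
    ext i j
    fin_cases i <;> fin_cases j <;>
      simp [Matrix.mul_apply, Fin.sum_univ_two, Matrix.vecHead, Matrix.vecTail, T, U,
        Matrix.one_apply]
  set H' := Tᵀ * H * T with hH'def
  have hs' : H'.IsSymm := by
    unfold Matrix.IsSymm
    rw [hH'def, Matrix.transpose_mul, Matrix.transpose_mul, Matrix.transpose_transpose, hs.eq,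
      mul_assoc]
  have hTdet : T.det = 1 := by rw [Matrix.det_fin_two]; simp [T]
  have hd' : H'.det < 0 := by
    rw [hH'def, Matrix.det_mul, Matrix.det_mul, Matrix.det_transpose, hTdet]
    simpa using hd
  have ha' : H' 0 0 ≠ 0 := by
    have : H' 0 0 = 2 * σ * b + c := by
      rw [hH'def]
      simp [Matrix.mul_apply, Matrix.transpose_apply, Fin.sum_univ_two, Matrix.vecHead,
        Matrix.vecTail, T, ha, hb10, ← hb', ← hc']
      linear_combination c * hσ1
    rw [this]; exact hσ0
  obtain ⟨Q, hQu, hQ⟩ := cong_ne H' hs' hd' ha'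
  refine ⟨Q * U, ?_, ?_⟩
  · rw [Matrix.det_mul]
    have hUdet : U.det = 1 := by rw [Matrix.det_fin_two]; simp [U]
    rw [hUdet, mul_one]; exact hQu
  · have hUT : Uᵀ * Tᵀ = 1 := by
      rw [← Matrix.transpose_mul, hTU, Matrix.transpose_one]
    calc (Q * U)ᵀ * J2 * (Q * U) = Uᵀ * (Qᵀ * J2 * Q) * U := by
          rw [Matrix.transpose_mul]; simp only [Matrix.mul_assoc]
      _ = Uᵀ * (Tᵀ * H * T) * U := by rw [hQ]
      _ = (Uᵀ * Tᵀ) * H * (T * U) := by simp only [Matrix.mul_assoc]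
      _ = H := by rw [hUT, hTU, one_mul, mul_one]

lemma congr_mul (A B C : Matrix (Fin 2) (Fin 2) ℝ) :
    (A * B)ᵀ * C * (A * B) = Bᵀ * (Aᵀ * C * A) * B := by
  rw [Matrix.transpose_mul]; simp only [Matrix.mul_assoc]

lemma ch2 (A : Matrix (Fin 2) (Fin 2) ℝ) : A * A = A.trace • A - A.det • 1 := by
  ext i j
  fin_cases i <;> fin_cases j <;>
    simp [Matrix.mul_apply, Fin.sum_univ_two, Matrix.trace_fin_two, Matrix.det_fin_two,
      Matrix.smul_apply, Matrix.one_apply, Matrix.sub_apply] <;> ring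

lemma bdd_of_tendsto (f : ℕ → Matrix (Fin 2) (Fin 2) ℝ) (g : Matrix (Fin 2) (Fin 2) ℝ)
    (h : Tendsto f atTop (𝓝 g)) : ∃ C : ℝ, ∀ n i j, |f n i j| ≤ C := by
  have he : ∀ i j : Fin 2, ∃ C, ∀ n, |f n i j| ≤ C := by
    intro i j
    have h1 : Tendsto (fun n => |f n i j|) atTop (𝓝 |g i j|) :=
      (tendsto_pi_nhds.1 (tendsto_pi_nhds.1 h i) j).abs
    obtain ⟨C, hC⟩ := h1.bddAbove_range
    exact ⟨C, fun n => hC (Set.mem_range_self n)⟩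
  obtain ⟨C00, h00⟩ := he 0 0
  obtain ⟨C01, h01⟩ := he 0 1
  obtain ⟨C10, h10⟩ := he 1 0
  obtain ⟨C11, h11⟩ := he 1 1
  refine ⟨max (max C00 C01) (max C10 C11), fun n i j => ?_⟩
  fin_cases i <;> fin_cases j
  · exact (h00 n).trans ((le_max_left C00 C01).trans (le_max_left _ _))
  · exact (h01 n).trans ((le_max_right C00 C01).trans (le_max_left _ _))
  · exact (h10 n).trans ((le_max_left C10 C11).trans (le_max_right _ _))
  · exact (h11 n).trans ((le_max_right C10 C11).trans (le_max_right _ _))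

/-- First part of Lemma 3.10: if `H` has signature `(1,1)` and `(M n)` is an unbounded
sequence of invertible matrices with `(M n)ᵀ * H * (M n)` converging to an invertible
matrix, then there is a sequence `(I n)` of linear isometries of `H` such that
`(I n)⁻¹ * M n` is bounded. -/
theorem exists_isometries_bounded_quotient
    (H : Matrix (Fin 2) (Fin 2) ℝ) (hsymm : H.IsSymm) (hdet : H.det < 0)
    (M : ℕ → Matrix (Fin 2) (Fin 2) ℝ) (hMinv : ∀ n, IsUnit (M n).det)
    (hunb : ¬ ∃ C : ℝ, ∀ n i j, |M n i j| ≤ C)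
    (L : Matrix (Fin 2) (Fin 2) ℝ) (hL : IsUnit L.det)
    (hconv : Tendsto (fun n => (M n)ᵀ * H * M n) atTop (𝓝 L)) :
    ∃ I : ℕ → Matrix (Fin 2) (Fin 2) ℝ,
      (∀ n, (I n)ᵀ * H * I n = H) ∧
      ∃ C : ℝ, ∀ n i j, |((I n)⁻¹ * M n) i j| ≤ C := by
  classical
  set S : ℕ → Matrix (Fin 2) (Fin 2) ℝ := fun n => (M n)ᵀ * H * M n with hSdef
  have hSsymm : ∀ n, (S n)ᵀ = S n := by
    intro n
    simp only [hSdef, Matrix.transpose_mul, Matrix.transpose_transpose, hsymm.eq,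
      Matrix.mul_assoc]
  have hLsymm : L.IsSymm := by
    have h1 : Tendsto (fun n => (S n)ᵀ) atTop (𝓝 Lᵀ) :=
      ((continuous_id.matrix_transpose).tendsto L).comp hconv
    have h2 : Tendsto S atTop (𝓝 L) := hconv
    exact tendsto_nhds_unique (h1.congr fun n => hSsymm n) h2
  have hdetS : ∀ n, (S n).det < 0 := by
    intro n
    have h1 : (S n).det = ((M n).det * (M n).det) * H.det := by
      simp only [hSdef, Matrix.det_mul, Matrix.det_transpose]; ring
    rw [h1]
    exact mul_neg_of_pos_of_neg (mul_self_pos.2 (hMinv n).ne_zero) hdet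
  have hdetSne : ∀ n, (S n).det ≠ 0 := fun n => (hdetS n).ne
  have hdL : Tendsto (fun n => (S n).det) atTop (𝓝 L.det) :=
    ((continuous_id.matrix_det).tendsto L).comp hconv
  have hLdet : L.det < 0 :=
    lt_of_le_of_ne (le_of_tendsto hdL (Eventually.of_forall fun n => (hdetS n).le)) hL.ne_zero
  obtain ⟨P, hPu, hP⟩ := cong_J H hsymm hdet
  obtain ⟨Q, hQu, hQ⟩ := cong_J L hLsymm hLdet
  set B₀ : Matrix (Fin 2) (Fin 2) ℝ := P⁻¹ * Q with hB0
  have hB0u : IsUnit B₀.det := by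
    rw [hB0, Matrix.det_mul]
    exact (Matrix.isUnit_nonsing_inv_det P hPu).mul hQu
  have hinvJ : (P⁻¹)ᵀ * H * P⁻¹ = J2 := by
    rw [← hP]
    calc (P⁻¹)ᵀ * (Pᵀ * J2 * P) * P⁻¹ = (P * P⁻¹)ᵀ * J2 * (P * P⁻¹) := by
          rw [Matrix.transpose_mul]; simp only [Matrix.mul_assoc]
      _ = J2 := by rw [Matrix.mul_nonsing_inv P hPu]; simp
  have hB0L : B₀ᵀ * H * B₀ = L := by
    rw [hB0, congr_mul, hinvJ, hQ]
  -- the matrices A n, their determinant and trace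
  set A : ℕ → Matrix (Fin 2) (Fin 2) ℝ := fun n => L⁻¹ * S n with hA
  have hAconv : Tendsto A atTop (𝓝 1) := by
    have hc : Continuous (fun X : Matrix (Fin 2) (Fin 2) ℝ => L⁻¹ * X) :=
      continuous_const.matrix_mul continuous_id
    have h1 := (hc.tendsto L).comp hconv
    simpa [Function.comp_def, Matrix.nonsing_inv_mul L hL] using h1
  set d : ℕ → ℝ := fun n => (A n).det with hd
  have hdconv : Tendsto d atTop (𝓝 1) := by
    have h1 := ((continuous_id.matrix_det).tendsto 1).comp hAconv
    simpa [Function.comp_def] using h1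
  set t : ℕ → ℝ := fun n => (A n).trace with ht
  have htconv : Tendsto t atTop (𝓝 2) := by
    have h1 := ((continuous_id.matrix_trace).tendsto 1).comp hAconv
    simpa [Function.comp_def, Matrix.trace_one] using h1
  set e : ℕ → ℝ := fun n => Real.sqrt (d n) with heRdef
  have heconv : Tendsto e atTop (𝓝 1) := by
    have h1 := (Real.continuous_sqrt.tendsto 1).comp hdconv
    simpa [Function.comp_def] using h1
  have hteconv : Tendsto (fun n => t n + 2 * e n) atTop (𝓝 4) := by
    have h1 := htconv.add (heconv.const_mul 2)
    norm_num at h1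
    exact h1
  set r : ℕ → ℝ := fun n => Real.sqrt (t n + 2 * e n) with hrdef
  have hrconv : Tendsto r atTop (𝓝 2) := by
    have h1 := (Real.continuous_sqrt.tendsto 4).comp hteconv
    have h4 : Real.sqrt 4 = 2 := by
      rw [show (4:ℝ) = 2^2 by norm_num, Real.sqrt_sq (by norm_num)]
    rwa [Function.comp_def, h4] at h1
  set K : ℕ → Matrix (Fin 2) (Fin 2) ℝ := fun n => (r n)⁻¹ • (A n + e n • 1) with hK
  have hKconv : Tendsto K atTop (𝓝 1) := by
    have h1 : Tendsto (fun n => A n + e n • (1 : Matrix (Fin 2) (Fin 2) ℝ)) atTop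
        (𝓝 (1 + (1:ℝ) • 1)) := hAconv.add (heconv.smul_const 1)
    have h2 := (hrconv.inv₀ (by norm_num)).smul h1
    have h3 : (2:ℝ)⁻¹ • ((1 : Matrix (Fin 2) (Fin 2) ℝ) + (1:ℝ) • 1) = 1 := by
      rw [one_smul, ← two_smul ℝ (1 : Matrix (Fin 2) (Fin 2) ℝ), smul_smul]
      norm_num
    rwa [h3] at h2
  -- eventual positivity
  have hev1 : ∀ᶠ n in atTop, 0 < d n := hdconv.eventually (eventually_gt_nhds one_pos)
  have hev2 : ∀ᶠ n in atTop, 0 < t n + 2 * e n :=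
    hteconv.eventually (eventually_gt_nhds (by norm_num))
  obtain ⟨N, hN⟩ := (hev1.and hev2).exists_forall_of_atTop
  -- the key identity
  have hLA : ∀ n, L * A n = S n := by
    intro n
    rw [hA]
    rw [← Matrix.mul_assoc, Matrix.mul_nonsing_inv L hL, Matrix.one_mul]
  have hAT : ∀ n, (A n)ᵀ * L = S n := by
    intro n
    rw [hA, Matrix.transpose_mul, Matrix.transpose_nonsing_inv, hLsymm.eq, hSsymm n,
      Matrix.mul_assoc, Matrix.nonsing_inv_mul L hL, Matrix.mul_one]
  have hkey : ∀ n, N ≤ n → (K n)ᵀ * L * K n = S n := by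
    intro n hn
    obtain ⟨hd0, ht0⟩ := hN n hn
    have he2 : e n * e n = d n := Real.mul_self_sqrt hd0.le
    have hr2 : r n * r n = t n + 2 * e n := Real.mul_self_sqrt ht0.le
    have hr0 : r n ≠ 0 := ne_of_gt (Real.sqrt_pos.2 ht0)
    have hKT : (K n)ᵀ = (r n)⁻¹ • ((A n)ᵀ + e n • 1) := by
      rw [hK]
      simp [Matrix.transpose_smul, Matrix.transpose_add]
    have hstep1 : ((A n)ᵀ + e n • 1) * L = S n + e n • L := by
      rw [Matrix.add_mul, hAT n, Matrix.smul_mul, Matrix.one_mul]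
    have hSA : S n * A n = t n • S n - d n • L := by
      have h1 : S n * A n = L * (A n * A n) := by rw [← hLA n, Matrix.mul_assoc]
      rw [h1, ch2 (A n), Matrix.mul_sub, Matrix.mul_smul, Matrix.mul_smul, hLA n,
        Matrix.mul_one]
    have hstep2 : (S n + e n • L) * (A n + e n • 1) = (t n + 2 * e n) • S n := by
      calc (S n + e n • L) * (A n + e n • 1)
          = S n * A n + e n • S n + (e n • (L * A n) + (e n * e n) • L) := by
            simp only [Matrix.mul_add, Matrix.add_mul, Matrix.smul_mul, Matrix.mul_smul,
              Matrix.mul_one, smul_smul, smul_add]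
            module
        _ = (t n • S n - d n • L) + e n • S n + (e n • S n + d n • L) := by
            rw [hSA, hLA n, he2]
        _ = (t n + 2 * e n) • S n := by module
    have hexp : (K n)ᵀ * L * K n = ((r n)⁻¹ * (r n)⁻¹) • ((t n + 2 * e n) • S n) := by
      rw [hKT, hK]
      simp only [Matrix.smul_mul, Matrix.mul_smul, smul_smul]
      rw [hstep1, hstep2, smul_smul]
    rw [hexp, smul_smul]
    have hsc : (r n)⁻¹ * (r n)⁻¹ * (t n + 2 * e n) = 1 := by
      field_simp
      linarith [hr2]
    rw [hsc, one_smul]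
  -- invertibility of K n
  have hKu : ∀ n, N ≤ n → IsUnit (K n).det := by
    intro n hn
    have h2 : (K n).det * L.det * (K n).det = (S n).det := by
      have h3 := congrArg Matrix.det (hkey n hn)
      rwa [Matrix.det_mul, Matrix.det_mul, Matrix.det_transpose] at h3
    rw [isUnit_iff_ne_zero]
    intro h0
    rw [h0] at h2
    simp at h2
    exact hdetSne n h2.symm
  set B : ℕ → Matrix (Fin 2) (Fin 2) ℝ := fun n => B₀ * K n with hB
  have hBu : ∀ n, N ≤ n → IsUnit (B n).det := by
    intro n hn
    rw [hB, Matrix.det_mul]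
    exact hB0u.mul (hKu n hn)
  have hBS : ∀ n, N ≤ n → (B n)ᵀ * H * B n = S n := by
    intro n hn
    rw [hB, congr_mul, hB0L, hkey n hn]
  set I : ℕ → Matrix (Fin 2) (Fin 2) ℝ := fun n => if N ≤ n then M n * (B n)⁻¹ else 1 with hI
  refine ⟨I, ?_, ?_⟩
  · intro n
    by_cases hn : N ≤ n
    · have hIeq : I n = M n * (B n)⁻¹ := by simp [hI, hn]
      rw [hIeq, congr_mul]
      have hMn : (M n)ᵀ * H * M n = S n := rfl
      rw [hMn, ← hBS n hn]
      rw [← congr_mul, Matrix.mul_nonsing_inv _ (hBu n hn)]; simp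
    · simp [hI, hn]
  · have heq : (fun n => B n) =ᶠ[atTop] (fun n => (I n)⁻¹ * M n) := by
      filter_upwards [eventually_ge_atTop N] with n hn
      have hIeq : I n = M n * (B n)⁻¹ := by simp [hI, hn]
      rw [hIeq, Matrix.mul_inv_rev, Matrix.nonsing_inv_nonsing_inv _ (hBu n hn),
        Matrix.mul_assoc, Matrix.nonsing_inv_mul _ (hMinv n), Matrix.mul_one]
    have hBconv : Tendsto B atTop (𝓝 B₀) := by
      have hc : Continuous (fun X : Matrix (Fin 2) (Fin 2) ℝ => B₀ * X) :=
        continuous_const.matrix_mul continuous_id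
      have h1 := (hc.tendsto 1).comp hKconv
      simpa [Function.comp_def] using h1
    exact bdd_of_tendsto _ _ (hBconv.congr' heq)

end
end

section
/- Let H be a real symmetric 2×2 matrix with det H < 0 (i.e., of signature (1,1)), and let (M_n) be a sequence of invertible real 2×2 matrices with sup_n ‖M_n‖ = ∞ such that the sequence (M_nᵀ H M_n) converges to an invertible matrix. Then there exist a nonzero vector v ∈ ℝ² with vᵀ H v = 0 and a strictly increasing map φ : ℕ → ℕ such that M_{φ(k)}^{-1} v → 0. -/
open Matrix Filter Topology



private lemma exists_mu (α β δ x0 x1 : ℝ)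
    (h : x0*(α*x0+β*x1) + x1*(β*x0+δ*x1) = 0) :
    ∃ μ : ℝ, α*x0+β*x1 = -(μ*x1) ∧ β*x0+δ*x1 = μ*x0 := by
  rcases eq_or_ne x0 0 with h0 | h0
  · subst h0
    rcases eq_or_ne x1 0 with h1 | h1
    · exact ⟨0, by simp [h1], by rw [h1]; ring⟩
    · refine ⟨-(α*0+β*x1)/x1, ?_, ?_⟩
      · field_simp
      · have : x1*(β*0+δ*x1) = 0 := by linarith [h]
        have h2 : β*0+δ*x1 = 0 := by
          rcases mul_eq_zero.1 this with h' | h'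
          · exact absurd h' h1
          · exact h'
        simpa using h2
  · refine ⟨(β*x0+δ*x1)/x0, ?_, ?_⟩
    · field_simp
      nlinarith [h]
    · field_simp

private lemma lemA (α β δ x0 x1 y0 y1 c : ℝ)
    (hx : x0*(α*x0+β*x1) + x1*(β*x0+δ*x1) = 0)
    (hy : y0*(α*y0+β*y1) + y1*(β*y0+δ*y1) = 0)
    (hc : y0*(α*x0+β*x1) + y1*(β*x0+δ*x1) = c)
    (hc0 : c ≠ 0) :
    4*(α*δ-β^2)^2 * ((x0^2+x1^2)*(y0^2+y1^2)) = c^2*((α+δ)^2 - 4*(α*δ-β^2)) := by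
  obtain ⟨μ, hμ1, hμ2⟩ := exists_mu α β δ x0 x1 hx
  obtain ⟨ν, hν1, hν2⟩ := exists_mu α β δ y0 y1 hy
  set w := x0*y1 - x1*y0 with hw_def
  have hcw : c = μ * w := by rw [← hc, hμ1, hμ2]; ring
  have hw : w ≠ 0 := by
    intro h; exact hc0 (by rw [hcw, h, mul_zero])
  have hsym : y0*(α*x0+β*x1) + y1*(β*x0+δ*x1) = x0*(α*y0+β*y1)+x1*(β*y0+δ*y1) := by ring
  have hcw' : c = -(ν*w) := by rw [← hc, hsym, hν1, hν2]; ring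
  have hνμ : ν = -μ := by
    have h2 : (ν + μ) * w = 0 := by rw [hcw] at hcw'; linarith [hcw']
    rcases mul_eq_zero.1 h2 with h' | h'
    · linarith
    · exact absurd h' hw
  have hdetid : (α*x0+β*x1)*(β*y0+δ*y1) - (β*x0+δ*x1)*(α*y0+β*y1) = (α*δ-β^2)*w := by
    rw [hw_def]; ring
  rw [hμ1, hμ2, hν1, hν2] at hdetid
  have hD : α*δ-β^2 = -μ^2 := by
    apply mul_right_cancel₀ hw
    rw [hνμ] at hdetid
    linear_combination -hdetid
  have htrid : (α*x0+β*x1)*y1 - (β*x0+δ*x1)*y0 + (x0*(β*y0+δ*y1) - x1*(α*y0+β*y1)) = (α+δ)*w := by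
    rw [hw_def]; ring
  rw [hμ1, hμ2, hν1, hν2, hνμ] at htrid
  -- htrid : -(μ*x1)*y1 - μ*x0*y0 + (x0*(-μ*y0) - x1*(-(-μ*y1))) = (α+δ)*w
  have htr : (α+δ)*w = -(2*μ*(x0*y0+x1*y1)) := by linear_combination -htrid
  subst hcw
  rw [hD]
  have hlag : (x0^2+x1^2)*(y0^2+y1^2) = (x0*y0+x1*y1)^2 + w^2 := by rw [hw_def]; ring
  rw [hlag]
  linear_combination (-μ^2*((α+δ)*w - 2*μ*(x0*y0+x1*y1))) * htr

private lemma aux_small (F G : ℕ → ℝ) (hF0 : ∀ n, 0 ≤ F n) (C₁ : ℝ)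
    (hFG : ∀ n, F n * G n ≤ C₁) (hG : ∀ C : ℝ, ∃ n, C < G n) :
    ∃ φ : ℕ → ℕ, StrictMono φ ∧ Tendsto (fun k => F (φ k)) atTop (𝓝 0) := by
  have hfreq : ∀ k : ℕ, ∃ᶠ n in atTop, (k : ℝ) < G n := by
    intro k
    rw [Filter.frequently_atTop]
    intro N
    obtain ⟨n, hn⟩ := hG (max (k : ℝ) ((Finset.range (N+1)).sup' ⟨N, by simp⟩ G))
    refine ⟨n, ?_, lt_of_le_of_lt (le_max_left _ _) hn⟩
    by_contra hcon
    push_neg at hcon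
    have hmem : n ∈ Finset.range (N+1) := Finset.mem_range.mpr (by omega)
    have := Finset.le_sup' G hmem
    have := lt_of_le_of_lt (le_max_right ((k:ℝ)) _) hn
    linarith
  obtain ⟨φ, hφmono, hφ⟩ := Filter.extraction_forall_of_frequently hfreq
  refine ⟨φ, hφmono, ?_⟩
  have hlim : Tendsto (fun k : ℕ => C₁ / (k : ℝ)) atTop (𝓝 0) :=
    tendsto_const_div_atTop_nhds_zero_nat C₁
  apply squeeze_zero' (Filter.Eventually.of_forall fun k => hF0 _) ?_ hlim
  filter_upwards [eventually_ge_atTop 1] with k hk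
  have hkpos : (0:ℝ) < (k:ℝ) := by exact_mod_cast hk
  rw [le_div_iff₀ hkpos]
  calc F (φ k) * k ≤ F (φ k) * G (φ k) :=
        mul_le_mul_of_nonneg_left (le_of_lt (hφ k)) (hF0 _)
    _ ≤ C₁ := hFG _

private lemma vec_tendsto (w : ℕ → Fin 2 → ℝ) (N : ℕ → ℝ)
    (hbound : ∀ k i, (w k i)^2 ≤ N k) (hN : Tendsto N atTop (𝓝 0)) :
    Tendsto w atTop (𝓝 0) := by
  rw [tendsto_pi_nhds]
  intro i
  have hsq : Tendsto (fun k => Real.sqrt (N k)) atTop (𝓝 0) := by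
    have := (Real.continuous_sqrt.tendsto 0).comp hN
    simpa [Function.comp_def] using this
  have : Tendsto (fun k => w k i) atTop (𝓝 0) := by
    apply squeeze_zero_norm (fun k => ?_) hsq
    simpa [Real.norm_eq_abs] using Real.abs_le_sqrt (hbound k i)
  simpa using this

private lemma key_dot (M H : Matrix (Fin 2) (Fin 2) ℝ) (hM : IsUnit M.det) (x y : Fin 2 → ℝ) :
    (M⁻¹ *ᵥ x) ⬝ᵥ ((Mᵀ * H * M) *ᵥ (M⁻¹ *ᵥ y)) = x ⬝ᵥ (H *ᵥ y) := by
  rw [Matrix.mulVec_mulVec, Matrix.mul_assoc (Mᵀ * H), Matrix.mul_nonsing_inv _ hM,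
    Matrix.mul_one, ← Matrix.mulVec_mulVec, Matrix.dotProduct_mulVec,
    Matrix.vecMul_transpose, Matrix.mulVec_mulVec, Matrix.mul_nonsing_inv _ hM,
    Matrix.one_mulVec]

private lemma dot_form (A : Matrix (Fin 2) (Fin 2) ℝ) (hA : A 1 0 = A 0 1) (x y : Fin 2 → ℝ) :
    y ⬝ᵥ (A *ᵥ x) = y 0*(A 0 0*x 0+A 0 1*x 1) + y 1*(A 0 1*x 0+A 1 1*x 1) := by
  simp only [dotProduct, Matrix.mulVec, Fin.sum_univ_two, hA]

private lemma null_basis (a b d : ℝ) (hdet : a*d - b^2 < 0) :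
    ∃ p0 p1 q0 q1 c : ℝ,
      p0*(a*p0+b*p1) + p1*(b*p0+d*p1) = 0 ∧
      q0*(a*q0+b*q1) + q1*(b*q0+d*q1) = 0 ∧
      q0*(a*p0+b*p1) + q1*(b*p0+d*p1) = c ∧
      c ≠ 0 ∧ p0*q1 - p1*q0 ≠ 0 := by
  rcases eq_or_ne a 0 with ha | ha
  · have hb : b ≠ 0 := by
      intro hb; rw [ha, hb] at hdet; norm_num at hdet
    refine ⟨1, 0, d, -2*b, -2*b^2, ?_, ?_, ?_, ?_, ?_⟩
    · rw [ha]; ring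
    · rw [ha]; ring
    · rw [ha]; ring
    · intro h; apply hb; nlinarith [sq_nonneg b]
    · simpa using hb
  · have hpos : 0 < b^2 - a*d := by linarith
    set s := Real.sqrt (b^2 - a*d) with hs_def
    have hs2 : s^2 = b^2 - a*d := Real.sq_sqrt hpos.le
    have hs0 : s ≠ 0 := by
      intro h; rw [h] at hs2; simp at hs2; linarith
    refine ⟨-b+s, a, -b-s, a, 2*a*(a*d-b^2), ?_, ?_, ?_, ?_, ?_⟩
    · linear_combination a*hs2
    · linear_combination a*hs2
    · linear_combination (-a)*hs2
    · exact mul_ne_zero (mul_ne_zero two_ne_zero ha) (ne_of_lt hdet)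
    · have : (-b+s)*a - a*(-b-s) = 2*s*a := by ring
      rw [this]
      exact mul_ne_zero (mul_ne_zero two_ne_zero hs0) ha

private lemma adj_abs_le (N : Matrix (Fin 2) (Fin 2) ℝ) (K : ℝ) (h : ∀ i j, |N i j| ≤ K) :
    ∀ i j, |Matrix.adjugate N i j| ≤ K := by
  rw [Matrix.adjugate_fin_two]
  refine Fin.forall_fin_two.mpr ⟨Fin.forall_fin_two.mpr ⟨?_, ?_⟩,
    Fin.forall_fin_two.mpr ⟨?_, ?_⟩⟩
  · simpa using h 1 1
  · simpa using h 0 1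
  · simpa using h 1 0
  · simpa using h 0 0

set_option maxHeartbeats 2000000 in
/-- Second part of Lemma 3.10: if `H` has signature `(1,1)` and `(M n)` is an unbounded
sequence of invertible matrices with `(M n)ᵀ * H * (M n)` converging to an invertible
matrix, then there is an `H`-lightlike vector `v ≠ 0` with `(M (φ k))⁻¹ *ᵥ v → 0` along
some subsequence. -/
theorem exists_lightlike_contracted_by_inverse
    (H : Matrix (Fin 2) (Fin 2) ℝ) (hsymm : H.IsSymm) (hdet : H.det < 0)
    (M : ℕ → Matrix (Fin 2) (Fin 2) ℝ) (hMinv : ∀ n, IsUnit (M n).det)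
    (hunb : ¬ ∃ C : ℝ, ∀ n i j, |M n i j| ≤ C)
    (L : Matrix (Fin 2) (Fin 2) ℝ) (hL : IsUnit L.det)
    (hconv : Tendsto (fun n => (M n)ᵀ * H * M n) atTop (𝓝 L)) :
    ∃ v : Fin 2 → ℝ, v ≠ 0 ∧ v ⬝ᵥ (H *ᵥ v) = 0 ∧
      ∃ φ : ℕ → ℕ, StrictMono φ ∧
        Tendsto (fun k => (M (φ k))⁻¹ *ᵥ v) atTop (𝓝 0) := by
  classical
  have hH10 : H 1 0 = H 0 1 := (hsymm.apply 1 0).symm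
  have hdetH : H 0 0 * H 1 1 - (H 0 1)^2 < 0 := by
    have h : H 0 0 * H 1 1 - (H 0 1)^2 = H.det := by
      rw [Matrix.det_fin_two, hH10]; ring
    rw [h]; exact hdet
  obtain ⟨p0, p1, q0, q1, c, hQp, hQq, hBpq, hc0, hw0⟩ :=
    null_basis (H 0 0) (H 0 1) (H 1 1) hdetH
  set vp : Fin 2 → ℝ := ![p0, p1] with hvp
  set vq : Fin 2 → ℝ := ![q0, q1] with hvq
  have hvp0 : vp 0 = p0 := rfl
  have hvp1 : vp 1 = p1 := rfl
  have hvq0 : vq 0 = q0 := rfl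
  have hvq1 : vq 1 = q1 := rfl
  have hQp' : vp ⬝ᵥ (H *ᵥ vp) = 0 := by
    rw [dot_form H hH10 vp vp, hvp0, hvp1]; exact hQp
  have hQq' : vq ⬝ᵥ (H *ᵥ vq) = 0 := by
    rw [dot_form H hH10 vq vq, hvq0, hvq1]; exact hQq
  have hBpq' : vq ⬝ᵥ (H *ᵥ vp) = c := by
    rw [dot_form H hH10 vp vq, hvp0, hvp1, hvq0, hvq1]; exact hBpq
  have hvp_ne : vp ≠ 0 := by
    intro h
    apply hw0
    have h0 : p0 = 0 := by rw [← hvp0, h]; rfl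
    have h1 : p1 = 0 := by rw [← hvp1, h]; rfl
    rw [h0, h1]; ring
  have hvq_ne : vq ≠ 0 := by
    intro h
    apply hw0
    have h0 : q0 = 0 := by rw [← hvq0, h]; rfl
    have h1 : q1 = 0 := by rw [← hvq1, h]; rfl
    rw [h0, h1]; ring
  set Aseq : ℕ → Fin 2 → ℝ := fun n => (M n)⁻¹ *ᵥ vp with hAdef
  set Bseq : ℕ → Fin 2 → ℝ := fun n => (M n)⁻¹ *ᵥ vq with hBdef
  set Na : ℕ → ℝ := fun n => (Aseq n 0)^2 + (Aseq n 1)^2 with hNadef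
  set Nb : ℕ → ℝ := fun n => (Bseq n 0)^2 + (Bseq n 1)^2 with hNbdef
  set Ln : ℕ → Matrix (Fin 2) (Fin 2) ℝ := fun n => (M n)ᵀ * H * M n with hLndef
  have hLsym : ∀ n, (Ln n) 1 0 = (Ln n) 0 1 := by
    intro n
    have h1 : (Ln n).IsSymm := by
      show (Ln n)ᵀ = Ln n
      simp only [hLndef, Matrix.transpose_mul, Matrix.transpose_transpose,
        hsymm.eq, Matrix.mul_assoc]
    exact (h1.apply 1 0).symm
  have hLtend : ∀ i j, Tendsto (fun n => Ln n i j) atTop (𝓝 (L i j)) := by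
    intro i j
    exact ((continuous_id.matrix_elem i j).tendsto L).comp hconv
  have hL10 : L 1 0 = L 0 1 := by
    have h1 := hLtend 1 0
    have h2 := hLtend 0 1
    simp only [hLsym] at h1
    exact tendsto_nhds_unique h1 h2
  set Dn : ℕ → ℝ := fun n => Ln n 0 0 * Ln n 1 1 - (Ln n 0 1)^2 with hDndef
  set Tn : ℕ → ℝ := fun n => Ln n 0 0 + Ln n 1 1 with hTndef
  have hDdet : ∀ n, Dn n = (Ln n).det := by
    intro n
    rw [hDndef]
    simp only
    rw [Matrix.det_fin_two, hLsym n]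
    ring
  have hDrel : ∀ n, Dn n = ((M n).det)^2 * H.det := by
    intro n
    rw [hDdet n, hLndef]
    simp only [Matrix.det_mul, Matrix.det_transpose]
    ring
  have hMdet_ne : ∀ n, (M n).det ≠ 0 := fun n => (hMinv n).ne_zero
  have hDne : ∀ n, Dn n ≠ 0 := by
    intro n
    rw [hDrel n]
    exact mul_ne_zero (pow_ne_zero 2 (hMdet_ne n)) hdet.ne
  have hprod : ∀ n, 4*(Dn n)^2*((Na n)*(Nb n)) = c^2*((Tn n)^2 - 4*(Dn n)) := by
    intro n
    have hxa : Aseq n 0*(Ln n 0 0*Aseq n 0 + Ln n 0 1*Aseq n 1)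
        + Aseq n 1*(Ln n 0 1*Aseq n 0 + Ln n 1 1*Aseq n 1) = 0 := by
      rw [← dot_form (Ln n) (hLsym n) (Aseq n) (Aseq n)]
      show ((M n)⁻¹ *ᵥ vp) ⬝ᵥ (((M n)ᵀ * H * M n) *ᵥ ((M n)⁻¹ *ᵥ vp)) = 0
      rw [key_dot (M n) H (hMinv n) vp vp]
      exact hQp'
    have hxb : Bseq n 0*(Ln n 0 0*Bseq n 0 + Ln n 0 1*Bseq n 1)
        + Bseq n 1*(Ln n 0 1*Bseq n 0 + Ln n 1 1*Bseq n 1) = 0 := by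
      rw [← dot_form (Ln n) (hLsym n) (Bseq n) (Bseq n)]
      show ((M n)⁻¹ *ᵥ vq) ⬝ᵥ (((M n)ᵀ * H * M n) *ᵥ ((M n)⁻¹ *ᵥ vq)) = 0
      rw [key_dot (M n) H (hMinv n) vq vq]
      exact hQq'
    have hxc : Bseq n 0*(Ln n 0 0*Aseq n 0 + Ln n 0 1*Aseq n 1)
        + Bseq n 1*(Ln n 0 1*Aseq n 0 + Ln n 1 1*Aseq n 1) = c := by
      rw [← dot_form (Ln n) (hLsym n) (Aseq n) (Bseq n)]
      show ((M n)⁻¹ *ᵥ vq) ⬝ᵥ (((M n)ᵀ * H * M n) *ᵥ ((M n)⁻¹ *ᵥ vp)) = c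
      rw [key_dot (M n) H (hMinv n) vq vp]
      exact hBpq'
    exact lemA (Ln n 0 0) (Ln n 0 1) (Ln n 1 1) (Aseq n 0) (Aseq n 1)
      (Bseq n 0) (Bseq n 1) c hxa hxb hxc hc0
  set g : ℕ → ℝ := fun n => c^2*((Tn n)^2 - 4*(Dn n)) / (4*(Dn n)^2) with hgdef
  have hgNab : ∀ n, Na n * Nb n = g n := by
    intro n
    rw [hgdef]
    simp only
    rw [eq_div_iff (by exact mul_ne_zero (by norm_num) (pow_ne_zero 2 (hDne n)))]
    linarith [hprod n]
  have hDlim : Tendsto Dn atTop (𝓝 (L 0 0 * L 1 1 - (L 0 1)^2)) :=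
    ((hLtend 0 0).mul (hLtend 1 1)).sub ((hLtend 0 1).pow 2)
  have hTlim : Tendsto Tn atTop (𝓝 (L 0 0 + L 1 1)) :=
    (hLtend 0 0).add (hLtend 1 1)
  have hDL : L 0 0 * L 1 1 - (L 0 1)^2 = L.det := by
    rw [Matrix.det_fin_two, hL10]; ring
  have hDLne : L 0 0 * L 1 1 - (L 0 1)^2 ≠ 0 := by
    rw [hDL]; exact hL.ne_zero
  have hglim : Tendsto g atTop
      (𝓝 (c^2*((L 0 0 + L 1 1)^2 - 4*(L 0 0 * L 1 1 - (L 0 1)^2))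
        / (4*(L 0 0 * L 1 1 - (L 0 1)^2)^2))) := by
    apply Tendsto.div
    · exact tendsto_const_nhds.mul ((hTlim.pow 2).sub (tendsto_const_nhds.mul hDlim))
    · exact tendsto_const_nhds.mul (hDlim.pow 2)
    · exact mul_ne_zero (by norm_num) (pow_ne_zero 2 hDLne)
  obtain ⟨C₁, hC₁⟩ : ∃ C₁, ∀ n, g n ≤ C₁ := by
    obtain ⟨x, hx⟩ := hglim.bddAbove_range
    exact ⟨x, fun n => hx (Set.mem_range_self n)⟩
  have hNa0 : ∀ n, 0 ≤ Na n := fun n => by positivity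
  have hNb0 : ∀ n, 0 ≤ Nb n := fun n => by positivity
  have hNa2 : ∀ n i, (Aseq n i)^2 ≤ Na n := by
    intro n
    rw [Fin.forall_fin_two]
    simp only [hNadef]
    constructor
    · nlinarith [sq_nonneg (Aseq n 1)]
    · nlinarith [sq_nonneg (Aseq n 0)]
  have hNb2 : ∀ n i, (Bseq n i)^2 ≤ Nb n := by
    intro n
    rw [Fin.forall_fin_two]
    simp only [hNbdef]
    constructor
    · nlinarith [sq_nonneg (Bseq n 1)]
    · nlinarith [sq_nonneg (Bseq n 0)]
  by_cases hbA : ∃ C, ∀ n, Na n ≤ C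
  · by_cases hbB : ∃ C, ∀ n, Nb n ≤ C
    · -- contradiction with unboundedness of M
      exfalso
      obtain ⟨Ca, hCa⟩ := hbA
      obtain ⟨Cb, hCb⟩ := hbB
      set K : ℝ := (|q1/(p0*q1 - p1*q0)| + |q0/(p0*q1 - p1*q0)|) * Real.sqrt Ca
        + (|p1/(p0*q1 - p1*q0)| + |p0/(p0*q1 - p1*q0)|) * Real.sqrt Cb with hKdef
      have hinv_col : ∀ n (i : Fin 2),
          (M n)⁻¹ i 0 = (q1/(p0*q1-p1*q0)) * Aseq n i + (-(p1/(p0*q1-p1*q0))) * Bseq n i ∧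
          (M n)⁻¹ i 1 = (-(q0/(p0*q1-p1*q0))) * Aseq n i + (p0/(p0*q1-p1*q0)) * Bseq n i := by
        intro n i
        have hAi : Aseq n i = (M n)⁻¹ i 0 * p0 + (M n)⁻¹ i 1 * p1 := by
          show ((M n)⁻¹ *ᵥ vp) i = _
          simp [Matrix.mulVec, dotProduct, Fin.sum_univ_two, hvp]
        have hBi : Bseq n i = (M n)⁻¹ i 0 * q0 + (M n)⁻¹ i 1 * q1 := by
          show ((M n)⁻¹ *ᵥ vq) i = _
          simp [Matrix.mulVec, dotProduct, Fin.sum_univ_two, hvq]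
        constructor
        · rw [hAi, hBi]
          rw [show q1/(p0*q1-p1*q0) * ((M n)⁻¹ i 0 * p0 + (M n)⁻¹ i 1 * p1)
              + (-(p1/(p0*q1-p1*q0))) * ((M n)⁻¹ i 0 * q0 + (M n)⁻¹ i 1 * q1)
              = (M n)⁻¹ i 0 * (p0*q1-p1*q0) / (p0*q1-p1*q0) by ring,
            mul_div_assoc, div_self hw0, mul_one]
        · rw [hAi, hBi]
          rw [show (-(q0/(p0*q1-p1*q0))) * ((M n)⁻¹ i 0 * p0 + (M n)⁻¹ i 1 * p1)
              + p0/(p0*q1-p1*q0) * ((M n)⁻¹ i 0 * q0 + (M n)⁻¹ i 1 * q1)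
              = (M n)⁻¹ i 1 * (p0*q1-p1*q0) / (p0*q1-p1*q0) by ring,
            mul_div_assoc, div_self hw0, mul_one]
      have habs_a : ∀ n i, |Aseq n i| ≤ Real.sqrt Ca := fun n i =>
        Real.abs_le_sqrt ((hNa2 n i).trans (hCa n))
      have habs_b : ∀ n i, |Bseq n i| ≤ Real.sqrt Cb := fun n i =>
        Real.abs_le_sqrt ((hNb2 n i).trans (hCb n))
      have hNinv : ∀ n (i j : Fin 2), |(M n)⁻¹ i j| ≤ K := by
        intro n i
        have hnn1 : 0 ≤ |q0/(p0*q1 - p1*q0)| * Real.sqrt Ca :=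
          mul_nonneg (abs_nonneg _) (Real.sqrt_nonneg _)
        have hnn2 : 0 ≤ |p0/(p0*q1 - p1*q0)| * Real.sqrt Cb :=
          mul_nonneg (abs_nonneg _) (Real.sqrt_nonneg _)
        have hnn3 : 0 ≤ |q1/(p0*q1 - p1*q0)| * Real.sqrt Ca :=
          mul_nonneg (abs_nonneg _) (Real.sqrt_nonneg _)
        have hnn4 : 0 ≤ |p1/(p0*q1 - p1*q0)| * Real.sqrt Cb :=
          mul_nonneg (abs_nonneg _) (Real.sqrt_nonneg _)
        refine Fin.forall_fin_two.mpr ⟨?_, ?_⟩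
        · rw [(hinv_col n i).1]
          have h1 : |q1/(p0*q1 - p1*q0) * Aseq n i|
              ≤ |q1/(p0*q1 - p1*q0)| * Real.sqrt Ca := by
            rw [abs_mul]
            exact mul_le_mul_of_nonneg_left (habs_a n i) (abs_nonneg _)
          have h2 : |(-(p1/(p0*q1 - p1*q0))) * Bseq n i|
              ≤ |p1/(p0*q1 - p1*q0)| * Real.sqrt Cb := by
            rw [abs_mul, abs_neg]
            exact mul_le_mul_of_nonneg_left (habs_b n i) (abs_nonneg _)
          calc |q1/(p0*q1 - p1*q0) * Aseq n i + (-(p1/(p0*q1 - p1*q0))) * Bseq n i|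
              ≤ |q1/(p0*q1 - p1*q0) * Aseq n i| + |(-(p1/(p0*q1 - p1*q0))) * Bseq n i| :=
                abs_add_le _ _
            _ ≤ K := by rw [hKdef]; nlinarith [h1, h2]
        · rw [(hinv_col n i).2]
          have h1 : |(-(q0/(p0*q1 - p1*q0))) * Aseq n i|
              ≤ |q0/(p0*q1 - p1*q0)| * Real.sqrt Ca := by
            rw [abs_mul, abs_neg]
            exact mul_le_mul_of_nonneg_left (habs_a n i) (abs_nonneg _)
          have h2 : |p0/(p0*q1 - p1*q0) * Bseq n i|
              ≤ |p0/(p0*q1 - p1*q0)| * Real.sqrt Cb := by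
            rw [abs_mul]
            exact mul_le_mul_of_nonneg_left (habs_b n i) (abs_nonneg _)
          calc |(-(q0/(p0*q1 - p1*q0))) * Aseq n i + p0/(p0*q1 - p1*q0) * Bseq n i|
              ≤ |(-(q0/(p0*q1 - p1*q0))) * Aseq n i| + |p0/(p0*q1 - p1*q0) * Bseq n i| :=
                abs_add_le _ _
            _ ≤ K := by rw [hKdef]; nlinarith [h1, h2]
      have hMadj : ∀ n, M n = (M n).det • Matrix.adjugate ((M n)⁻¹) := by
        intro n
        have h1 := Matrix.mul_adjugate ((M n)⁻¹)
        have h2 : M n * ((M n)⁻¹ * Matrix.adjugate ((M n)⁻¹))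
            = M n * (((M n)⁻¹).det • (1 : Matrix (Fin 2) (Fin 2) ℝ)) := by rw [h1]
        rw [← Matrix.mul_assoc, Matrix.mul_nonsing_inv _ (hMinv n), Matrix.one_mul,
          Matrix.mul_smul, Matrix.mul_one] at h2
        have h3 : ((M n)⁻¹).det = ((M n).det)⁻¹ := by
          rw [Matrix.det_nonsing_inv, Ring.inverse_eq_inv']
        rw [h2, h3, smul_smul, mul_inv_cancel₀ (hMdet_ne n), one_smul]
      have hdm2 : ∀ n, ((M n).det)^2 = Dn n / H.det := by
        intro n
        rw [hDrel n, mul_div_assoc, div_self hdet.ne, mul_one]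
      have hdet2tend : Tendsto (fun n => ((M n).det)^2) atTop
          (𝓝 ((L 0 0 * L 1 1 - (L 0 1)^2) / H.det)) := by
        simp only [hdm2]
        exact hDlim.div_const _
      obtain ⟨D₂, hD₂⟩ : ∃ D₂, ∀ n, ((M n).det)^2 ≤ D₂ := by
        obtain ⟨x, hx⟩ := hdet2tend.bddAbove_range
        exact ⟨x, fun n => hx (Set.mem_range_self n)⟩
      apply hunb
      refine ⟨Real.sqrt D₂ * K, fun n i j => ?_⟩
      have hMentry : M n i j = (M n).det * (Matrix.adjugate ((M n)⁻¹)) i j := by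
        conv_lhs => rw [hMadj n]
        simp [Matrix.smul_apply]
      rw [hMentry, abs_mul]
      have hdet_b : |(M n).det| ≤ Real.sqrt D₂ := Real.abs_le_sqrt (hD₂ n)
      have hadj_b : |(Matrix.adjugate ((M n)⁻¹)) i j| ≤ K :=
        adj_abs_le ((M n)⁻¹) K (hNinv n) i j
      exact mul_le_mul hdet_b hadj_b (abs_nonneg _) (Real.sqrt_nonneg _)
    · -- Nb unbounded : contract vp
      push_neg at hbB
      obtain ⟨φ, hφ, hten⟩ := aux_small Na Nb hNa0 C₁
        (fun n => le_of_eq_of_le (hgNab n) (hC₁ n)) hbB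
      refine ⟨vp, hvp_ne, hQp', φ, hφ, ?_⟩
      exact vec_tendsto (fun k => (M (φ k))⁻¹ *ᵥ vp) (fun k => Na (φ k))
        (fun k i => hNa2 (φ k) i) hten
  · -- Na unbounded : contract vq
    push_neg at hbA
    obtain ⟨φ, hφ, hten⟩ := aux_small Nb Na hNb0 C₁
      (fun n => le_of_eq_of_le (by rw [mul_comm]; exact hgNab n) (hC₁ n)) hbA
    refine ⟨vq, hvq_ne, hQq', φ, hφ, ?_⟩
    exact vec_tendsto (fun k => (M (φ k))⁻¹ *ᵥ vq) (fun k => Nb (φ k))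
      (fun k i => hNb2 (φ k) i) hten
end

section
/- Let H be a real symmetric 2×2 matrix with det H < 0 (signature (1,1)) such that every nonzero vector v ∈ ℝ² with vᵀ H v = 0 is a real scalar multiple of a nonzero vector with rational coordinates (i.e., both lightlike lines of H are rational). Then every sequence (M_n) of 2×2 integer matrices of determinant ±1 such that the sequence (M_nᵀ H M_n) converges to an invertible matrix is bounded. -/
open Matrix Filter Topology


private lemma abs_bound_of_tendsto {g : ℕ → ℝ} {l : ℝ} (h : Tendsto g atTop (𝓝 l)) :
    ∃ B : ℝ, 0 ≤ B ∧ ∀ n, |g n| ≤ B := by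
  obtain ⟨B, hB⟩ := (h.abs).bddAbove_range
  exact ⟨B, (abs_nonneg (g 0)).trans (hB ⟨0, rfl⟩), fun n => hB ⟨n, rfl⟩⟩

private lemma mul_bound_zero {x y B : ℤ} (h : |x * y| ≤ B) (hx : B < |x|) : y = 0 := by
  by_contra hy
  have h1 : 1 ≤ |y| := Int.one_le_abs hy
  have : |x| ≤ |x * y| := by rw [abs_mul]; nlinarith [abs_nonneg x]
  omega

private lemma tri_bound {a b c K B : ℤ} (hK : 0 ≤ K) (hB : 0 ≤ B)
    (ha : |a| ≤ K) (hb : |b| ≤ B) (hc : |c| ≤ K) : |a * b * c| ≤ K * B * K := by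
  rw [abs_mul, abs_mul]
  have h1 : |a| * |b| ≤ K * B :=
    mul_le_mul ha hb (abs_nonneg b) hK
  exact mul_le_mul h1 hc (abs_nonneg c) (by positivity)

private lemma sum4_bound {t1 t2 t3 t4 E : ℤ} (hE : 0 ≤ E)
    (h1 : |t1| ≤ E) (h2 : |t2| ≤ E) (h3 : |t3| ≤ E) (h4 : |t4| ≤ E) :
    |t1 + t2 + t3 + t4| ≤ 4 * E := by
  calc |t1 + t2 + t3 + t4| ≤ |t1 + t2 + t3| + |t4| := abs_add_le _ _
    _ ≤ (|t1 + t2| + |t3|) + |t4| := by linarith [abs_add_le (t1 + t2) t3]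
    _ ≤ ((|t1| + |t2|) + |t3|) + |t4| := by linarith [abs_add_le t1 t2]
    _ ≤ 4 * E := by linarith

private lemma exists_lightlike (a b c : ℝ) (h : a * c - b * b < 0) :
    ∃ v1 v2 : Fin 2 → ℝ, v1 ≠ 0 ∧ v2 ≠ 0 ∧
      a * (v1 0)^2 + 2 * b * (v1 0) * (v1 1) + c * (v1 1)^2 = 0 ∧
      a * (v2 0)^2 + 2 * b * (v2 0) * (v2 1) + c * (v2 1)^2 = 0 ∧
      v1 0 * v2 1 - v2 0 * v1 1 ≠ 0 := by
  by_cases ha : a = 0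
  · have hb : b ≠ 0 := by intro h0; rw [ha, h0] at h; norm_num at h
    refine ⟨![1, 0], ![c, -2 * b], ?_, ?_, ?_, ?_, ?_⟩
    · intro h0; have := congrFun h0 0; norm_num at this
    · intro h0; have := congrFun h0 1; simp at this; exact hb (by linarith)
    · simp [ha]
    · simp [ha]; ring
    · simp; exact hb
  · have hpos : 0 < b ^ 2 - a * c := by nlinarith
    set s := Real.sqrt (b ^ 2 - a * c) with hs
    have hs2 : s ^ 2 = b ^ 2 - a * c := Real.sq_sqrt hpos.le
    have hs0 : 0 < s := Real.sqrt_pos.2 hpos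
    refine ⟨![-b + s, a], ![-b - s, a], ?_, ?_, ?_, ?_, ?_⟩
    · intro h0; have := congrFun h0 1; simp at this; exact ha this
    · intro h0; have := congrFun h0 1; simp at this; exact ha this
    · simp; linear_combination a * hs2
    · simp; linear_combination a * hs2
    · simp; intro h0
      have : a * s = 0 := by linarith
      rcases mul_eq_zero.1 this with h' | h'
      · exact ha h'
      · exact hs0.ne' h'

private lemma int_scale {v : Fin 2 → ℝ} {cc : ℝ} {w : Fin 2 → ℚ}
    (hv : v = cc • (fun i => (w i : ℝ))) (hvne : v ≠ 0) :
    ∃ (u : Fin 2 → ℤ) (t : ℝ), t ≠ 0 ∧ ∀ i, (u i : ℝ) = t * v i := by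
  have hcc : cc ≠ 0 := by
    intro h0; apply hvne; rw [hv, h0, zero_smul]
  refine ⟨![(w 0).num * ((w 1).den : ℤ), (w 1).num * ((w 0).den : ℤ)],
    (((w 0).den : ℝ) * ((w 1).den : ℝ)) / cc, ?_, ?_⟩
  · apply div_ne_zero _ hcc
    positivity
  · intro i
    have hvi : ∀ j, v j = cc * (w j : ℝ) := by
      intro j; rw [hv]; simp
    have h0 : ((w 0 : ℚ) : ℝ) = ((w 0).num : ℝ) / ((w 0).den : ℝ) := Rat.cast_def _
    have h1 : ((w 1 : ℚ) : ℝ) = ((w 1).num : ℝ) / ((w 1).den : ℝ) := Rat.cast_def _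
    have d0 : ((w 0).den : ℝ) ≠ 0 := by positivity
    have d1 : ((w 1).den : ℝ) ≠ 0 := by positivity
    fin_cases i
    · simp [hvi 0, h0]; field_simp
    · simp [hvi 1, h1]; field_simp

private lemma int_bound {f : ℕ → ℤ} (h : ∃ B : ℝ, ∀ n, |(f n : ℝ)| ≤ B) :
    ∃ B : ℤ, 0 ≤ B ∧ ∀ n, |f n| ≤ B := by
  obtain ⟨B, hB⟩ := h
  refine ⟨⌈B⌉ ⊔ 0, le_sup_right, fun n => le_sup_of_le_left ?_⟩
  have h1 : ((|f n| : ℤ) : ℝ) ≤ (⌈B⌉ : ℝ) := by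
    push_cast
    exact (hB n).trans (Int.le_ceil B)
  exact_mod_cast h1

private lemma entry_le_of_fin_two {x00 x01 x10 x11 K : ℤ}
    (h1 : |x00| ≤ K) (h2 : |x01| ≤ K) (h3 : |x10| ≤ K) (h4 : |x11| ≤ K) :
    ∀ i j, |(!![x00, x01; x10, x11] : Matrix (Fin 2) (Fin 2) ℤ) i j| ≤ K := by
  intro i j
  fin_cases i <;> fin_cases j <;> simpa

private lemma adjugate_entry_le_of_fin_two {x00 x01 x10 x11 K : ℤ}
    (h1 : |x00| ≤ K) (h2 : |x01| ≤ K) (h3 : |x10| ≤ K) (h4 : |x11| ≤ K) :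
    ∀ i j, |(Matrix.adjugate (!![x00, x01; x10, x11] : Matrix (Fin 2) (Fin 2) ℤ)) i j| ≤ K := by
  rw [Matrix.adjugate_fin_two_of]
  intro i j
  fin_cases i <;> fin_cases j <;> simp <;> assumption


/-- Linear core of Proposition 3.11: let `H` have signature `(1,1)` with both lightlike
lines rational. Then every sequence of integer matrices of determinant `±1` whose
congruence images of `H` converge to an invertible matrix is bounded. -/
theorem bounded_of_congruence_convergent
    (H : Matrix (Fin 2) (Fin 2) ℝ) (hsymm : H.IsSymm) (hdet : H.det < 0)
    (hrat : ∀ v : Fin 2 → ℝ, v ≠ 0 → v ⬝ᵥ (H *ᵥ v) = 0 →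
      ∃ (c : ℝ) (w : Fin 2 → ℚ), w ≠ 0 ∧ v = c • (fun i => (w i : ℝ)))
    (M : ℕ → Matrix (Fin 2) (Fin 2) ℤ)
    (hdetM : ∀ n, (M n).det = 1 ∨ (M n).det = -1)
    (L : Matrix (Fin 2) (Fin 2) ℝ) (hL : IsUnit L.det)
    (hconv : Tendsto
      (fun n => ((M n).map (Int.cast : ℤ → ℝ))ᵀ * H * ((M n).map (Int.cast : ℤ → ℝ)))
      atTop (𝓝 L)) :
    ∃ C : ℤ, ∀ n i j, |M n i j| ≤ C := by
  classical
  have hsym : H 1 0 = H 0 1 := hsymm.apply 0 1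
  have hdet2 : H 0 0 * H 1 1 - H 0 1 * H 0 1 < 0 := by
    rw [Matrix.det_fin_two, hsym] at hdet; exact hdet
  have hform : ∀ v : Fin 2 → ℝ, v ⬝ᵥ (H *ᵥ v) =
      H 0 0 * (v 0)^2 + 2 * H 0 1 * (v 0) * (v 1) + H 1 1 * (v 1)^2 := by
    intro v
    simp only [dotProduct, Matrix.mulVec, Fin.sum_univ_two, hsym]
    ring
  obtain ⟨v1, v2, hv1ne, hv2ne, hq1, hq2, hcr⟩ :=
    exists_lightlike (H 0 0) (H 0 1) (H 1 1) hdet2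
  obtain ⟨c1, w1, hw1ne, hvw1⟩ := hrat v1 hv1ne (by rw [hform]; exact hq1)
  obtain ⟨c2, w2, hw2ne, hvw2⟩ := hrat v2 hv2ne (by rw [hform]; exact hq2)
  obtain ⟨u1, t1, ht1, hu1⟩ := int_scale hvw1 hv1ne
  obtain ⟨u2, t2, ht2, hu2⟩ := int_scale hvw2 hv2ne
  have hq1' : H 0 0 * ((u1 0 : ℝ))^2 + 2 * H 0 1 * (u1 0 : ℝ) * (u1 1 : ℝ)
      + H 1 1 * ((u1 1 : ℝ))^2 = 0 := by
    rw [hu1 0, hu1 1]; linear_combination t1^2 * hq1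
  have hq2' : H 0 0 * ((u2 0 : ℝ))^2 + 2 * H 0 1 * (u2 0 : ℝ) * (u2 1 : ℝ)
      + H 1 1 * ((u2 1 : ℝ))^2 = 0 := by
    rw [hu2 0, hu2 1]; linear_combination t2^2 * hq2
  have hcr' : (u1 0 : ℝ) * (u2 1 : ℝ) - (u2 0 : ℝ) * (u1 1 : ℝ) ≠ 0 := by
    rw [hu1 0, hu1 1, hu2 0, hu2 1]
    have hne := mul_ne_zero (mul_ne_zero ht1 ht2) hcr
    intro h0; apply hne; linear_combination h0
  -- the integer change of basis matrix
  set P : Matrix (Fin 2) (Fin 2) ℤ := !![u1 0, u2 0; u1 1, u2 1] with hPdef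
  set δ : ℤ := u1 0 * u2 1 - u2 0 * u1 1 with hδdef
  have hδR : ((δ : ℤ) : ℝ) ≠ 0 := by rw [hδdef]; push_cast; exact hcr'
  have hδ0 : δ ≠ 0 := fun h => hδR (by rw [h]; norm_num)
  have hPdet : P.det = δ := by rw [hPdef, Matrix.det_fin_two_of]
  set Pr : Matrix (Fin 2) (Fin 2) ℝ := P.map (Int.cast : ℤ → ℝ) with hPrdef
  have hPrdet : Pr.det = ((δ : ℤ) : ℝ) := by
    have h1 := RingHom.map_det (Int.castRingHom ℝ) P
    rw [RingHom.mapMatrix_apply] at h1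
    rw [hPrdef]
    simp only [Int.coe_castRingHom] at h1
    rw [← h1, hPdet]
  have hPr00 : Pr 0 0 = (u1 0 : ℝ) := by simp [hPrdef, hPdef]
  have hPr01 : Pr 0 1 = (u2 0 : ℝ) := by simp [hPrdef, hPdef]
  have hPr10 : Pr 1 0 = (u1 1 : ℝ) := by simp [hPrdef, hPdef]
  have hPr11 : Pr 1 1 = (u2 1 : ℝ) := by simp [hPrdef, hPdef]
  set J : Matrix (Fin 2) (Fin 2) ℝ := Prᵀ * H * Pr with hJdef
  have hJentry : ∀ i j, J i j =
      Pr 0 i * H 0 0 * Pr 0 j + Pr 0 i * H 0 1 * Pr 1 j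
      + Pr 1 i * H 1 0 * Pr 0 j + Pr 1 i * H 1 1 * Pr 1 j := by
    intro i j
    rw [hJdef]
    simp [Matrix.mul_apply, Fin.sum_univ_two]
    ring
  have hJ00 : J 0 0 = 0 := by
    rw [hJentry, hPr00, hPr10, hsym]; linear_combination hq1'
  have hJ11 : J 1 1 = 0 := by
    rw [hJentry, hPr01, hPr11, hsym]; linear_combination hq2'
  set b' : ℝ := J 0 1 with hb'def
  have hb'eq : b' = H 0 0 * (u1 0 : ℝ) * (u2 0 : ℝ)
      + H 0 1 * ((u1 0 : ℝ) * (u2 1 : ℝ) + (u2 0 : ℝ) * (u1 1 : ℝ))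
      + H 1 1 * (u1 1 : ℝ) * (u2 1 : ℝ) := by
    rw [hb'def, hJentry, hPr00, hPr01, hPr10, hPr11, hsym]; ring
  have hJ10 : J 1 0 = b' := by
    rw [hJentry, hPr00, hPr01, hPr10, hPr11, hsym, hb'eq]; ring
  have hb'sq : b' * b' = (((δ : ℤ) : ℝ))^2 * (H 0 1 * H 0 1 - H 0 0 * H 1 1) := by
    rw [hb'eq]
    push_cast [hδdef]
    linear_combination (H 0 0 * ((u2 0 : ℝ))^2 + 2 * H 0 1 * (u2 0 : ℝ) * (u2 1 : ℝ)
      + H 1 1 * ((u2 1 : ℝ))^2) * hq1'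
  have hb'ne : b' ≠ 0 := by
    intro h0
    rw [h0] at hb'sq
    have h1 : (0:ℝ) < (((δ : ℤ) : ℝ))^2 := by positivity
    nlinarith
  -- conjugated sequence of integer matrices
  set Q : ℕ → Matrix (Fin 2) (Fin 2) ℝ :=
    fun n => ((M n).map (Int.cast : ℤ → ℝ))ᵀ * H * ((M n).map (Int.cast : ℤ → ℝ)) with hQdef
  set A : ℕ → Matrix (Fin 2) (Fin 2) ℤ := fun n => P.adjugate * M n * P with hAdef
  have hmapA : ∀ n, (A n).map (Int.cast : ℤ → ℝ)
      = Pr.adjugate * ((M n).map (Int.cast : ℤ → ℝ)) * Pr := by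
    intro n
    have h1 := RingHom.map_adjugate (Int.castRingHom ℝ) P
    rw [RingHom.mapMatrix_apply, RingHom.mapMatrix_apply] at h1
    simp only [Int.coe_castRingHom] at h1
    ext i j
    simp only [hAdef, hPrdef, ← h1, Matrix.map_apply, Matrix.mul_apply, Fin.sum_univ_two]
    push_cast
    ring
  have hPadj : Pr * Pr.adjugate = ((δ : ℤ) : ℝ) • 1 := by
    rw [Matrix.mul_adjugate, hPrdet]
  have key : ∀ n, ((A n).map (Int.cast : ℤ → ℝ))ᵀ * J * ((A n).map (Int.cast : ℤ → ℝ))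
      = (((δ : ℤ) : ℝ))^2 • (Prᵀ * Q n * Pr) := by
    intro n
    rw [hmapA n, hJdef, hQdef]
    calc (Pr.adjugate * ((M n).map (Int.cast : ℤ → ℝ)) * Pr)ᵀ * (Prᵀ * H * Pr)
          * (Pr.adjugate * ((M n).map (Int.cast : ℤ → ℝ)) * Pr)
        = Prᵀ * (((M n).map (Int.cast : ℤ → ℝ))ᵀ * ((Pr * Pr.adjugate)ᵀ
            * (H * ((Pr * Pr.adjugate) * (((M n).map (Int.cast : ℤ → ℝ)) * Pr))))) := by
          simp only [Matrix.transpose_mul, Matrix.mul_assoc]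
      _ = (((δ : ℤ) : ℝ))^2 • (Prᵀ * (((M n).map (Int.cast : ℤ → ℝ))ᵀ * H
            * ((M n).map (Int.cast : ℤ → ℝ))) * Pr) := by
          rw [hPadj, Matrix.transpose_smul, Matrix.transpose_one]
          simp only [Matrix.smul_mul, Matrix.mul_smul, Matrix.one_mul, smul_smul,
            Matrix.mul_assoc]
          rw [pow_two]
  -- convergence of the conjugated congruence images, entrywise bounds
  have cont : Continuous (fun X : Matrix (Fin 2) (Fin 2) ℝ => Prᵀ * X * Pr) :=
    (continuous_const.matrix_mul continuous_id).matrix_mul continuous_const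
  have hEnt : ∀ i j : Fin 2, ∃ B : ℝ, 0 ≤ B ∧ ∀ n, |(Prᵀ * Q n * Pr) i j| ≤ B := by
    intro i j
    have h1 : Tendsto (fun n => (Prᵀ * Q n * Pr) i j) atTop (𝓝 ((Prᵀ * L * Pr) i j)) :=
      ((cont.matrix_elem i j).tendsto L).comp hconv
    exact abs_bound_of_tendsto h1
  obtain ⟨B00, hB00n, hB00⟩ := hEnt 0 0
  obtain ⟨B01, hB01n, hB01⟩ := hEnt 0 1
  obtain ⟨B11, hB11n, hB11⟩ := hEnt 1 1
  -- entrywise identities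
  have hE00 : ∀ n, 2 * b' * ((A n 0 0 : ℤ) : ℝ) * ((A n 1 0 : ℤ) : ℝ)
      = (((δ : ℤ) : ℝ))^2 * (Prᵀ * Q n * Pr) 0 0 := by
    intro n
    have hk := congrFun (congrFun (key n) 0) 0
    simp only [Matrix.mul_apply, Matrix.transpose_apply, Matrix.map_apply,
      Fin.sum_univ_two, Matrix.smul_apply, smul_eq_mul, hJ00, hJ11, hJ10, ← hb'def] at hk ⊢
    linear_combination hk
  have hE11 : ∀ n, 2 * b' * ((A n 0 1 : ℤ) : ℝ) * ((A n 1 1 : ℤ) : ℝ)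
      = (((δ : ℤ) : ℝ))^2 * (Prᵀ * Q n * Pr) 1 1 := by
    intro n
    have hk := congrFun (congrFun (key n) 1) 1
    simp only [Matrix.mul_apply, Matrix.transpose_apply, Matrix.map_apply,
      Fin.sum_univ_two, Matrix.smul_apply, smul_eq_mul, hJ00, hJ11, hJ10, ← hb'def] at hk ⊢
    linear_combination hk
  have hE01 : ∀ n, b' * (((A n 0 0 : ℤ) : ℝ) * ((A n 1 1 : ℤ) : ℝ)
        + ((A n 0 1 : ℤ) : ℝ) * ((A n 1 0 : ℤ) : ℝ))
      = (((δ : ℤ) : ℝ))^2 * (Prᵀ * Q n * Pr) 0 1 := by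
    intro n
    have hk := congrFun (congrFun (key n) 0) 1
    simp only [Matrix.mul_apply, Matrix.transpose_apply, Matrix.map_apply,
      Fin.sum_univ_two, Matrix.smul_apply, smul_eq_mul, hJ00, hJ11, hJ10, ← hb'def] at hk ⊢
    linear_combination hk
  -- integer bounds on the products
  have hb'pos : (0:ℝ) < |b'| := abs_pos.2 hb'ne
  obtain ⟨B1, hB1n, hB1⟩ := int_bound (f := fun n => A n 0 0 * A n 1 0)
    ⟨(((δ : ℤ) : ℝ))^2 * B00 / (2 * |b'|), fun n => by
      rw [le_div_iff₀ (by positivity)]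
      calc |((A n 0 0 * A n 1 0 : ℤ) : ℝ)| * (2 * |b'|)
          = |2 * b' * ((A n 0 0 : ℤ) : ℝ) * ((A n 1 0 : ℤ) : ℝ)| := by
            push_cast; rw [abs_mul, abs_mul, abs_mul, abs_mul, abs_two]; ring
        _ = |(((δ : ℤ) : ℝ))^2 * (Prᵀ * Q n * Pr) 0 0| := by rw [hE00 n]
        _ = (((δ : ℤ) : ℝ))^2 * |(Prᵀ * Q n * Pr) 0 0| := by
            rw [abs_mul, abs_of_nonneg (sq_nonneg _)]
        _ ≤ (((δ : ℤ) : ℝ))^2 * B00 := mul_le_mul_of_nonneg_left (hB00 n) (sq_nonneg _)⟩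
  obtain ⟨B2, hB2n, hB2⟩ := int_bound (f := fun n => A n 0 1 * A n 1 1)
    ⟨(((δ : ℤ) : ℝ))^2 * B11 / (2 * |b'|), fun n => by
      rw [le_div_iff₀ (by positivity)]
      calc |((A n 0 1 * A n 1 1 : ℤ) : ℝ)| * (2 * |b'|)
          = |2 * b' * ((A n 0 1 : ℤ) : ℝ) * ((A n 1 1 : ℤ) : ℝ)| := by
            push_cast; rw [abs_mul, abs_mul, abs_mul, abs_mul, abs_two]; ring
        _ = |(((δ : ℤ) : ℝ))^2 * (Prᵀ * Q n * Pr) 1 1| := by rw [hE11 n]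
        _ = (((δ : ℤ) : ℝ))^2 * |(Prᵀ * Q n * Pr) 1 1| := by
            rw [abs_mul, abs_of_nonneg (sq_nonneg _)]
        _ ≤ (((δ : ℤ) : ℝ))^2 * B11 := mul_le_mul_of_nonneg_left (hB11 n) (sq_nonneg _)⟩
  obtain ⟨B3, hB3n, hB3⟩ := int_bound (f := fun n => A n 0 0 * A n 1 1 + A n 0 1 * A n 1 0)
    ⟨(((δ : ℤ) : ℝ))^2 * B01 / |b'|, fun n => by
      rw [le_div_iff₀ (by positivity)]
      calc |((A n 0 0 * A n 1 1 + A n 0 1 * A n 1 0 : ℤ) : ℝ)| * |b'|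
          = |b' * (((A n 0 0 : ℤ) : ℝ) * ((A n 1 1 : ℤ) : ℝ)
              + ((A n 0 1 : ℤ) : ℝ) * ((A n 1 0 : ℤ) : ℝ))| := by
            push_cast; rw [abs_mul]; ring
        _ = |(((δ : ℤ) : ℝ))^2 * (Prᵀ * Q n * Pr) 0 1| := by rw [hE01 n]
        _ = (((δ : ℤ) : ℝ))^2 * |(Prᵀ * Q n * Pr) 0 1| := by
            rw [abs_mul, abs_of_nonneg (sq_nonneg _)]
        _ ≤ (((δ : ℤ) : ℝ))^2 * B01 := mul_le_mul_of_nonneg_left (hB01 n) (sq_nonneg _)⟩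
  -- determinant of A n
  have hdetA : ∀ n, A n 0 0 * A n 1 1 - A n 0 1 * A n 1 0 = δ * (M n).det * δ := by
    intro n
    have h1 : (A n).det = P.adjugate.det * (M n).det * P.det := by
      simp only [hAdef, Matrix.det_mul]
    rw [Matrix.det_fin_two] at h1
    rw [h1, Matrix.det_adjugate, hPdet]
    simp
  have hdetAne : ∀ n, A n 0 0 * A n 1 1 - A n 0 1 * A n 1 0 ≠ 0 := by
    intro n
    rw [hdetA n]
    rcases hdetM n with h | h <;> rw [h] <;> simp [hδ0]
  have hdetAabs : ∀ n, |A n 0 0 * A n 1 1 - A n 0 1 * A n 1 0| = δ^2 := by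
    intro n
    rw [hdetA n]
    rcases hdetM n with h | h <;> rw [h] <;>
      simp [abs_mul, pow_two, ← abs_mul, mul_comm] <;> exact mul_self_nonneg δ
  -- uniform bound on entries of A n
  set Bz : ℤ := B1 ⊔ B2 ⊔ (B3 + δ^2) with hBzdef
  have hBz0 : 0 ≤ Bz := le_trans hB1n (le_sup_of_le_left le_sup_left)
  have hpr : ∀ n, |A n 0 0 * A n 1 0| ≤ Bz := fun n =>
    le_trans (hB1 n) (le_sup_of_le_left le_sup_left)
  have hqs : ∀ n, |A n 0 1 * A n 1 1| ≤ Bz := fun n =>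
    le_trans (hB2 n) (le_sup_of_le_left le_sup_right)
  have hps : ∀ n, |A n 0 0 * A n 1 1| ≤ Bz := by
    intro n
    have h1 : |2 * (A n 0 0 * A n 1 1)| ≤ B3 + δ^2 := by
      have h2 : 2 * (A n 0 0 * A n 1 1) = (A n 0 0 * A n 1 1 + A n 0 1 * A n 1 0)
          + (A n 0 0 * A n 1 1 - A n 0 1 * A n 1 0) := by ring
      rw [h2]
      calc |_ + _| ≤ |A n 0 0 * A n 1 1 + A n 0 1 * A n 1 0|
            + |A n 0 0 * A n 1 1 - A n 0 1 * A n 1 0| := abs_add_le _ _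
        _ ≤ B3 + δ^2 := by rw [hdetAabs n]; linarith [hB3 n]
    rw [abs_mul, abs_two] at h1
    have h3 : |A n 0 0 * A n 1 1| ≤ B3 + δ^2 := by
      linarith [abs_nonneg (A n 0 0 * A n 1 1)]
    exact le_trans h3 le_sup_right
  have hqr : ∀ n, |A n 0 1 * A n 1 0| ≤ Bz := by
    intro n
    have h1 : |2 * (A n 0 1 * A n 1 0)| ≤ B3 + δ^2 := by
      have h2 : 2 * (A n 0 1 * A n 1 0) = (A n 0 0 * A n 1 1 + A n 0 1 * A n 1 0)
          - (A n 0 0 * A n 1 1 - A n 0 1 * A n 1 0) := by ring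
      rw [h2]
      calc |_ - _| ≤ |A n 0 0 * A n 1 1 + A n 0 1 * A n 1 0|
            + |A n 0 0 * A n 1 1 - A n 0 1 * A n 1 0| := abs_sub _ _
        _ ≤ B3 + δ^2 := by rw [hdetAabs n]; linarith [hB3 n]
    rw [abs_mul, abs_two] at h1
    have h3 : |A n 0 1 * A n 1 0| ≤ B3 + δ^2 := by
      linarith [abs_nonneg (A n 0 1 * A n 1 0)]
    exact le_trans h3 le_sup_right
  have hAbnd : ∀ n (k l : Fin 2), |A n k l| ≤ Bz := by
    intro n k l
    by_contra hgt
    push_neg at hgt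
    fin_cases k <;> fin_cases l
    · have hr := mul_bound_zero (hpr n) hgt
      have hs := mul_bound_zero (hps n) hgt
      exact hdetAne n (by rw [hr, hs]; ring)
    · have hs := mul_bound_zero (hqs n) hgt
      have hr := mul_bound_zero (hqr n) hgt
      exact hdetAne n (by rw [hr, hs]; ring)
    · have hp := mul_bound_zero (by rw [mul_comm]; exact hpr n : |A n 1 0 * A n 0 0| ≤ Bz) hgt
      have hq := mul_bound_zero (by rw [mul_comm]; exact hqr n : |A n 1 0 * A n 0 1| ≤ Bz) hgt
      exact hdetAne n (by rw [hp, hq]; ring)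
    · have hp := mul_bound_zero (by rw [mul_comm]; exact hps n : |A n 1 1 * A n 0 0| ≤ Bz) hgt
      have hq := mul_bound_zero (by rw [mul_comm]; exact hqs n : |A n 1 1 * A n 0 1| ≤ Bz) hgt
      exact hdetAne n (by rw [hp, hq]; ring)
  -- recover M from A
  have hfin : ∀ n, P * A n * P.adjugate = (δ * δ) • M n := by
    intro n
    calc P * A n * P.adjugate = (P * P.adjugate) * M n * (P * P.adjugate) := by
          simp only [hAdef, Matrix.mul_assoc]
      _ = (δ • (1 : Matrix (Fin 2) (Fin 2) ℤ)) * M n * (δ • 1) := by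
          rw [Matrix.mul_adjugate, hPdet]
      _ = (δ * δ) • M n := by
          simp only [Matrix.smul_mul, Matrix.mul_smul, Matrix.one_mul, Matrix.mul_one,
            smul_smul]
  set K : ℤ := |u1 0| ⊔ |u2 0| ⊔ |u1 1| ⊔ |u2 1| with hKdef
  have hK0 : 0 ≤ K := le_trans (abs_nonneg (u1 0))
    (le_sup_of_le_left (le_sup_of_le_left le_sup_left))
  have hKu1 : |u1 0| ≤ K := le_sup_of_le_left (le_sup_of_le_left le_sup_left)
  have hKu2 : |u2 0| ≤ K := le_sup_of_le_left (le_sup_of_le_left le_sup_right)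
  have hKu3 : |u1 1| ≤ K := le_sup_of_le_left le_sup_right
  have hKu4 : |u2 1| ≤ K := le_sup_right
  have hPK : ∀ i j, |P i j| ≤ K := by
    rw [hPdef]; exact entry_le_of_fin_two hKu1 hKu2 hKu3 hKu4
  have hadjK : ∀ i j, |P.adjugate i j| ≤ K := by
    rw [hPdef]; exact adjugate_entry_le_of_fin_two hKu1 hKu2 hKu3 hKu4
  refine ⟨4 * (K * Bz * K), ?_⟩
  intro n i j
  have h1 : (δ * δ) * M n i j = (P * A n * P.adjugate) i j := by
    rw [hfin n, Matrix.smul_apply, smul_eq_mul]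
  have hexp : (P * A n * P.adjugate) i j =
      P i 0 * A n 0 0 * P.adjugate 0 j + P i 0 * A n 0 1 * P.adjugate 1 j
      + P i 1 * A n 1 0 * P.adjugate 0 j + P i 1 * A n 1 1 * P.adjugate 1 j := by
    simp only [Matrix.mul_apply, Fin.sum_univ_two]
    ring
  have hKBK : (0:ℤ) ≤ K * Bz * K := mul_nonneg (mul_nonneg hK0 hBz0) hK0
  have h2 : |(δ * δ) * M n i j| ≤ 4 * (K * Bz * K) := by
    rw [h1, hexp]
    exact sum4_bound hKBK
      (tri_bound hK0 hBz0 (hPK i 0) (hAbnd n 0 0) (hadjK 0 j))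
      (tri_bound hK0 hBz0 (hPK i 0) (hAbnd n 0 1) (hadjK 1 j))
      (tri_bound hK0 hBz0 (hPK i 1) (hAbnd n 1 0) (hadjK 0 j))
      (tri_bound hK0 hBz0 (hPK i 1) (hAbnd n 1 1) (hadjK 1 j))
  have h3 : (1:ℤ) ≤ |δ * δ| := Int.one_le_abs (mul_ne_zero hδ0 hδ0)
  have h4 : |M n i j| ≤ |(δ * δ) * M n i j| := by
    rw [abs_mul]
    exact le_mul_of_one_le_left (abs_nonneg (M n i j)) h3
  exact le_trans h4 h2
end
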